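/- arXiv:1110.6327 — 6 statements merged into one kernel-verified Lean document; each statement's English description precedes it below -/
import Mathlib

section
/- Let β > 1 with β ∉ ℕ and let X₁X₂X₃… ∈ 𝒜_G^ℕ. Then there exists x ∈ [l, l+1) with d_G(x) = X₁X₂X₃… if and only if for every k ≥ 1 the following hold: if X_k = max 𝒜_G then X_{k+1}X_{k+2}X_{k+3}… ≺_lex d_G*(T_G*(l+1)), and if X_k = −bβ + ⌊β⌋ for some b ∈ 𝒜 with X_k ≠ max 𝒜_G then X_{k+1}X_{k+2}X_{k+3}… ≺_lex d_G*(l + β − ⌊β⌋). -/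
/-- Lexicographic order on infinite sequences of reals. -/
def LexLt (x y : ℕ → ℝ) : Prop :=
  ∃ k, (∀ i < k, x i = y i) ∧ x k < y k
set_option maxHeartbeats 2000000 in
theorem stmt12 (β : ℝ) (hβ : 1 < β) (hni : ∀ n : ℕ, β ≠ n)
    (l r : ℝ) (hl : l = -β * (⌊β⌋ : ℝ) / (β ^ 2 - 1)) (hr : r = (⌊β⌋ : ℝ) / (β ^ 2 - 1))
    (B AG : Set ℝ)
    (hB : B = {X : ℝ | ∃ a b : ℤ, 0 ≤ a ∧ a ≤ ⌊β⌋ ∧ 0 ≤ b ∧ b ≤ ⌊β⌋ ∧ X = -(b : ℝ) * β + a})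
    (hAG : AG =
      {X : ℝ | ∃ a b : ℤ, 0 ≤ a ∧ a ≤ ⌊β⌋ ∧ 1 ≤ b ∧ b ≤ ⌊β⌋ ∧ X = -(b : ℝ) * β + a} ∪
      {X : ℝ | ∃ a : ℤ, 0 ≤ a ∧ a ≤ ⌊β⌋ ∧ (a : ℝ) < β * (β - ⌊β⌋) ∧ X = (a : ℝ)})
    (lX rX : ℝ → ℝ)
    (hlX : ∀ X, lX X = (X + l) / β ^ 2)
    (hrX : ∀ X ∈ AG, rX X =
      if X = sSup AG then l + 1 else (sInf {Y : ℝ | Y ∈ B ∧ X < Y} + l) / β ^ 2)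
    -- the right-continuous greedy maps on [l, l+1)
    (DG TG : ℝ → ℝ)
    (hDG : ∀ X ∈ AG, ∀ x ∈ Set.Ico (lX X) (rX X), DG x = X)
    (hTG : ∀ x, TG x = β ^ 2 * x - DG x)
    (dG : ℝ → ℕ → ℝ) (hdG : ∀ x k, dG x k = DG (TG^[k] x))
    -- the left-continuous variants on (l, l+1]
    (DGs TGs : ℝ → ℝ)
    (hDGs : ∀ X ∈ AG, ∀ x ∈ Set.Ioc (lX X) (rX X), DGs x = X)
    (hTGs : ∀ x, TGs x = β ^ 2 * x - DGs x)
    (dGs : ℝ → ℕ → ℝ) (hdGs : ∀ x k, dGs x k = DGs (TGs^[k] x))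
    (X : ℕ → ℝ) (hX : ∀ k, X k ∈ AG) :
    (∃ x ∈ Set.Ico l (l + 1), dG x = X) ↔
      ∀ k : ℕ,
        (X k = sSup AG → LexLt (fun i => X (k + 1 + i)) (dGs (TGs (l + 1)))) ∧
        ((∃ b : ℤ, 0 ≤ b ∧ b ≤ ⌊β⌋ ∧ X k = -(b : ℝ) * β + (⌊β⌋ : ℝ)) → X k ≠ sSup AG →
          LexLt (fun i => X (k + 1 + i)) (dGs (l + (β - ⌊β⌋)))) := by
  -- ============ basic numerology ============
  have hb0 : (0:ℝ) < β := lt_trans one_pos hβ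
  have hβ2 : 1 < β ^ 2 := by nlinarith
  have hβ2pos : (0:ℝ) < β ^ 2 - 1 := by linarith
  have hβ2pos' : (0:ℝ) < β ^ 2 := by linarith
  have hF1 : (1:ℤ) ≤ ⌊β⌋ := Int.le_floor.mpr (by exact_mod_cast hβ.le)
  have hFpos : (0:ℝ) < (⌊β⌋:ℝ) := by exact_mod_cast hF1
  have hFle : ((⌊β⌋:ℝ)) ≤ β := Int.floor_le β
  have hFne : β ≠ ((⌊β⌋:ℝ)) := by
    intro h
    have hc : ((⌊β⌋.toNat : ℕ) : ℝ) = ((⌊β⌋:ℤ):ℝ) := by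
      exact_mod_cast congrArg (Int.cast : ℤ → ℝ) (Int.toNat_of_nonneg (by omega))
    exact hni ⌊β⌋.toNat (h.trans hc.symm)
  have hFβ : ((⌊β⌋:ℝ)) < β := lt_of_le_of_ne hFle (Ne.symm hFne)
  have hβF1 : β < (⌊β⌋:ℝ) + 1 := Int.lt_floor_add_one β
  have hgap0 : (0:ℝ) < β - (⌊β⌋:ℝ) := by linarith
  have hgap1 : β - ((⌊β⌋:ℝ)) < 1 := by linarith
  have hlmul : l * (β ^ 2 - 1) = -(β * (⌊β⌋:ℝ)) := by
    rw [hl]; field_simp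
  have hβ2l : β ^ 2 * l = l - β * (⌊β⌋:ℝ) := by linarith [hlmul]
  have hlneg : l < 0 := by nlinarith [mul_pos hb0 hFpos]
  -- v := β * (β - ⌊β⌋)
  have hv0 : 0 < β * (β - (⌊β⌋:ℝ)) := mul_pos hb0 hgap0
  have hvβ : β * (β - (⌊β⌋:ℝ)) < β := by nlinarith
  obtain ⟨Mz, hMz⟩ : ∃ m : ℤ, m = ⌈β * (β - (⌊β⌋:ℝ))⌉ - 1 := ⟨_, rfl⟩
  obtain ⟨M, hM⟩ : ∃ x : ℝ, x = ((Mz : ℤ) : ℝ) := ⟨_, rfl⟩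
  have hMv : M < β * (β - (⌊β⌋:ℝ)) := by
    have h1 : ((⌈β * (β - (⌊β⌋:ℝ))⌉:ℤ):ℝ) < β * (β - (⌊β⌋:ℝ)) + 1 :=
      Int.ceil_lt_add_one _
    rw [hM, hMz]; push_cast; linarith
  have hMv1 : β * (β - (⌊β⌋:ℝ)) - 1 ≤ M := by
    have h1 : β * (β - (⌊β⌋:ℝ)) ≤ ((⌈β * (β - (⌊β⌋:ℝ))⌉:ℤ):ℝ) := Int.le_ceil _
    rw [hM, hMz]; push_cast; linarith
  have hMz0 : (0:ℤ) ≤ Mz := by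
    have h1 : (1:ℤ) ≤ ⌈β * (β - (⌊β⌋:ℝ))⌉ := Int.ceil_pos.mpr hv0
    omega
  have hM0 : (0:ℝ) ≤ M := by rw [hM]; exact_mod_cast hMz0
  have hMF : Mz ≤ ⌊β⌋ := by
    apply Int.le_floor.mpr
    have : M < β := lt_trans hMv hvβ
    rw [hM] at this; exact this.le
  have hMβ : M < β := lt_trans hMv hvβ
  -- ============ AG facts ============
  have hMAG : M ∈ AG := by
    rw [hAG]; right
    exact ⟨Mz, hMz0, hMF, by rw [← hM]; exact hMv, hM⟩
  have hAGle : ∀ Z ∈ AG, Z ≤ M := by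
    intro Z hZ
    rw [hAG] at hZ
    rcases hZ with ⟨a,b,ha0,haF,hb1,hbF,rfl⟩ | ⟨a,ha0,haF,hav,rfl⟩
    · have hb1' : (1:ℝ) ≤ (b:ℝ) := by exact_mod_cast hb1
      have ha' : (a:ℝ) ≤ (⌊β⌋:ℝ) := by exact_mod_cast haF
      have h2 : 1 * β ≤ (b:ℝ) * β := mul_le_mul_of_nonneg_right hb1' hb0.le
      linarith
    · have h1 : a ≤ Mz := by
        have := Int.lt_ceil.mpr hav
        omega
      rw [hM]; exact_mod_cast h1
  have hSup : sSup AG = M :=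
    le_antisymm (csSup_le ⟨M, hMAG⟩ hAGle) (le_csSup ⟨M, fun x hx => hAGle x hx⟩ hMAG)
  have hAGfin : AG.Finite := by
    have hsub : AG ⊆ (fun p : ℤ × ℤ => -(p.1:ℝ) * β + p.2) ''
        (Set.Icc 0 ⌊β⌋ ×ˢ Set.Icc 0 ⌊β⌋) := by
      intro Z hZ
      rw [hAG] at hZ
      rcases hZ with ⟨a,b,ha0,haF,hb1,hbF,rfl⟩ | ⟨a,ha0,haF,hav,rfl⟩
      · exact ⟨(b,a), ⟨⟨by omega, hbF⟩, ⟨ha0, haF⟩⟩, rfl⟩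
      · exact ⟨(0,a), ⟨⟨le_refl 0, by omega⟩, ⟨ha0, haF⟩⟩, by simp⟩
    exact Set.Finite.subset
      (Set.Finite.image _ (Set.Finite.prod (Set.finite_Icc _ _) (Set.finite_Icc _ _))) hsub
  have hAGB : AG ⊆ B := by
    intro Z hZ; rw [hAG] at hZ; rw [hB]
    rcases hZ with ⟨a,b,ha0,haF,hb1,hbF,rfl⟩ | ⟨a,ha0,haF,hav,rfl⟩
    · exact ⟨a,b,ha0,haF,by omega,hbF,rfl⟩
    · exact ⟨a,0,ha0,haF,le_refl 0,by omega, by push_cast; ring⟩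
  have hAGge : ∀ Z ∈ AG, -((⌊β⌋:ℝ) * β) ≤ Z := by
    intro Z hZ
    rw [hAG] at hZ
    rcases hZ with ⟨a,b,ha0,haF,hb1,hbF,rfl⟩ | ⟨a,ha0,haF,hav,rfl⟩
    · have hb' : (b:ℝ) ≤ (⌊β⌋:ℝ) := by exact_mod_cast hbF
      have ha' : (0:ℝ) ≤ (a:ℝ) := by exact_mod_cast ha0
      have h2 : (b:ℝ) * β ≤ (⌊β⌋:ℝ) * β := mul_le_mul_of_nonneg_right hb' hb0.le
      linarith
    · have ha' : (0:ℝ) ≤ (a:ℝ) := by exact_mod_cast ha0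
      nlinarith [mul_pos hFpos hb0]
  -- ============ gap lemma for B ============
  have hdiff : ∀ Y ∈ B, ∀ a b : ℤ, 0 ≤ a → a ≤ ⌊β⌋ → 0 ≤ b → b ≤ ⌊β⌋ →
      -(b:ℝ)*β + a < Y →
      (-(b:ℝ)*β + a) + (β - (⌊β⌋:ℝ)) ≤ Y ∧ (a < ⌊β⌋ → (-(b:ℝ)*β + a) + 1 ≤ Y) := by
    intro Y hY a b ha0 haF hb0' hbF hlt
    rw [hB] at hY
    obtain ⟨a',b',ha0',haF',hb0'',hbF',rfl⟩ := hY
    have key : -(b':ℝ)*β + a' - (-(b:ℝ)*β + a) = ((b - b':ℤ):ℝ)*β + ((a' - a:ℤ):ℝ) := by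
      push_cast; ring
    have hpos : 0 < ((b - b':ℤ):ℝ)*β + ((a' - a:ℤ):ℝ) := by rw [← key]; linarith
    have hk : b - b' ≤ -1 ∨ b - b' = 0 ∨ b - b' = 1 ∨ 2 ≤ b - b' := by omega
    rcases hk with h | h | h | h
    · exfalso
      have h1 : ((b - b':ℤ):ℝ) ≤ -1 := by exact_mod_cast h
      have h2 : ((a' - a:ℤ):ℝ) ≤ (⌊β⌋:ℝ) := by exact_mod_cast (by omega : a' - a ≤ ⌊β⌋)
      have h3 : ((b - b':ℤ):ℝ) * β ≤ (-1) * β := mul_le_mul_of_nonneg_right h1 hb0.le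
      linarith
    · have h1 : ((b - b':ℤ):ℝ) = 0 := by exact_mod_cast h
      rw [h1] at hpos key
      have h2 : (1:ℤ) ≤ a' - a := by
        by_contra hc
        have h3 : ((a' - a:ℤ):ℝ) ≤ 0 := by exact_mod_cast (by omega : a' - a ≤ 0)
        linarith
      have h2' : (1:ℝ) ≤ ((a' - a:ℤ):ℝ) := by exact_mod_cast h2
      constructor
      · linarith
      · intro _; linarith
    · have h1 : ((b - b':ℤ):ℝ) = 1 := by exact_mod_cast h
      rw [h1] at key
      have h2 : -(⌊β⌋:ℝ) ≤ ((a' - a:ℤ):ℝ) := by exact_mod_cast (by omega : -⌊β⌋ ≤ a' - a)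
      constructor
      · linarith
      · intro ha
        have h3 : 1 - (⌊β⌋:ℝ) ≤ ((a' - a:ℤ):ℝ) := by
          exact_mod_cast (by omega : 1 - ⌊β⌋ ≤ a' - a)
        linarith
    · have h1 : (2:ℝ) ≤ ((b - b':ℤ):ℝ) := by exact_mod_cast h
      have h2 : -(⌊β⌋:ℝ) ≤ ((a' - a:ℤ):ℝ) := by exact_mod_cast (by omega : -⌊β⌋ ≤ a' - a)
      have h3 : 2 * β ≤ ((b - b':ℤ):ℝ) * β := mul_le_mul_of_nonneg_right h1 hb0.le
      constructor
      · linarith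
      · intro _; linarith
  -- ============ sInf identification ============
  have hinfeq : ∀ Z ∈ AG, Z ≠ M → ∀ W ∈ B, Z < W → (∀ Y ∈ B, Z < Y → W ≤ Y) →
      rX Z = lX W := by
    intro Z hZ hZM W hWB hZW hmin
    have hle : IsLeast {Y : ℝ | Y ∈ B ∧ Z < Y} W := ⟨⟨hWB, hZW⟩, fun Y hY => hmin Y hY.1 hY.2⟩
    rw [hrX Z hZ, if_neg (by rw [hSup]; exact hZM), hlX, hle.csInf_eq]
  -- ============ successor lemma ============
  have hnext : ∀ Z ∈ AG, Z ≠ M → ∃ W, W ∈ AG ∧ Z < W ∧ W ≤ Z + 1 ∧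
      (∀ Y ∈ B, Z < Y → W ≤ Y) ∧ rX Z = lX W ∧
      ((∃ b:ℤ, 0 ≤ b ∧ b ≤ ⌊β⌋ ∧ Z = -(b:ℝ)*β + (⌊β⌋:ℝ)) → W = Z + (β - (⌊β⌋:ℝ))) ∧
      (¬(∃ b:ℤ, 0 ≤ b ∧ b ≤ ⌊β⌋ ∧ Z = -(b:ℝ)*β + (⌊β⌋:ℝ)) → W = Z + 1) := by
    intro Z hZ hZM
    have hZ' := hZ
    rw [hAG] at hZ'
    rcases hZ' with ⟨a,b,ha0,haF,hb1,hbF,hZeq⟩ | ⟨a,ha0,haF,hav,hZeq⟩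
    · by_cases hab : a = ⌊β⌋
      · -- block top
        subst hab
        refine ⟨Z + (β - (⌊β⌋:ℝ)), ?_, by linarith, by linarith, ?_, ?_, fun _ => rfl,
          fun hn => absurd ⟨b, by omega, hbF, hZeq⟩ hn⟩
        · have hWform : Z + (β - (⌊β⌋:ℝ)) = -((b-1:ℤ):ℝ)*β + ((0:ℤ):ℝ) := by
            rw [hZeq]; push_cast; ring
          rw [hAG]
          rcases (by omega : b = 1 ∨ 2 ≤ b) with hb | hb
          · right
            refine ⟨0, le_rfl, by omega, by exact_mod_cast hv0, ?_⟩
            rw [hWform, hb]; norm_num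
          · left
            exact ⟨0, b-1, le_rfl, by omega, by omega, by omega, hWform⟩
        · intro Y hY hZY
          have := (hdiff Y hY ⌊β⌋ b (by omega) le_rfl (by omega) hbF
            (by rw [← hZeq]; exact hZY)).1
          rw [← hZeq] at this; linarith
        · apply hinfeq Z hZ hZM
          · rw [hB]
            exact ⟨0, b-1, le_rfl, by omega, by omega, by omega, by rw [hZeq]; push_cast; ring⟩
          · linarith
          · intro Y hY hZY
            have := (hdiff Y hY ⌊β⌋ b (by omega) le_rfl (by omega) hbF
              (by rw [← hZeq]; exact hZY)).1
            rw [← hZeq] at this; linarith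
      · -- a < ⌊β⌋, full step inside block
        have haF' : a < ⌊β⌋ := by omega
        refine ⟨Z + 1, ?_, by linarith, le_rfl, ?_, ?_, ?_, fun _ => rfl⟩
        · have hWform : Z + 1 = -(b:ℝ)*β + ((a+1:ℤ):ℝ) := by rw [hZeq]; push_cast; ring
          rw [hAG]; left
          exact ⟨a+1, b, by omega, by omega, hb1, hbF, hWform⟩
        · intro Y hY hZY
          have := (hdiff Y hY a b ha0 haF (by omega) hbF (by rw [← hZeq]; exact hZY)).2 haF'
          rw [← hZeq] at this; linarith
        · apply hinfeq Z hZ hZM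
          · rw [hB]
            exact ⟨a+1, b, by omega, by omega, by omega, hbF, by rw [hZeq]; push_cast; ring⟩
          · linarith
          · intro Y hY hZY
            have := (hdiff Y hY a b ha0 haF (by omega) hbF (by rw [← hZeq]; exact hZY)).2 haF'
            rw [← hZeq] at this; linarith
        · -- cannot be a block top
          rintro ⟨b', hb'0, hb'F, heq⟩
          exfalso
          rw [hZeq] at heq
          have hkey : ((b' - b:ℤ):ℝ)*β = ((⌊β⌋ - a:ℤ):ℝ) := by push_cast; linarith
          have hFa1 : (1:ℝ) ≤ ((⌊β⌋ - a:ℤ):ℝ) := by exact_mod_cast (by omega : 1 ≤ ⌊β⌋ - a)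
          have hFaF : ((⌊β⌋ - a:ℤ):ℝ) ≤ (⌊β⌋:ℝ) := by
            exact_mod_cast (by omega : ⌊β⌋ - a ≤ ⌊β⌋)
          rcases (by omega : b' - b ≤ 0 ∨ 1 ≤ b' - b) with h | h
          · have h1 : ((b' - b:ℤ):ℝ) ≤ 0 := by exact_mod_cast h
            nlinarith
          · have h1 : (1:ℝ) ≤ ((b' - b:ℤ):ℝ) := by exact_mod_cast h
            nlinarith
    · -- integer digit
      have haM : a < Mz := by
        have h1 : a ≤ Mz := by
          have := Int.lt_ceil.mpr hav
          omega
        rcases lt_or_eq_of_le h1 with h | h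
        · exact h
        · exfalso; apply hZM; rw [hZeq, hM, h]
      have haF' : a < ⌊β⌋ := by omega
      have hZa : Z = -((0:ℤ):ℝ)*β + (a:ℝ) := by rw [hZeq]; push_cast; ring
      refine ⟨Z + 1, ?_, by linarith, le_rfl, ?_, ?_, ?_, fun _ => rfl⟩
      · have hWform : Z + 1 = ((a+1:ℤ):ℝ) := by rw [hZeq]; push_cast; try ring
        rw [hAG]; right
        refine ⟨a+1, by omega, by omega, ?_, hWform⟩
        have h2 : ((a+1:ℤ):ℝ) ≤ M := by rw [hM]; exact_mod_cast (by omega : a + 1 ≤ Mz)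
        linarith [hMv]
      · intro Y hY hZY
        have := (hdiff Y hY a 0 ha0 haF le_rfl (by omega) (by rw [← hZa]; exact hZY)).2 haF'
        rw [← hZa] at this; linarith
      · apply hinfeq Z hZ hZM
        · rw [hB]
          exact ⟨a+1, 0, by omega, by omega, le_rfl, by omega, by rw [hZeq]; push_cast; ring⟩
        · linarith
        · intro Y hY hZY
          have := (hdiff Y hY a 0 ha0 haF le_rfl (by omega) (by rw [← hZa]; exact hZY)).2 haF'
          rw [← hZa] at this; linarith
      · -- cannot be a block top
        rintro ⟨b', hb'0, hb'F, heq⟩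
        exfalso
        rw [hZeq] at heq
        rcases (by omega : b' = 0 ∨ 1 ≤ b') with h | h
        · subst h
          have h2 : (a:ℝ) = (⌊β⌋:ℝ) := by push_cast at heq; linarith
          have h3 : a = ⌊β⌋ := by exact_mod_cast h2
          omega
        · have h1 : (1:ℝ) ≤ (b':ℝ) := by exact_mod_cast h
          have ha' : (0:ℝ) ≤ (a:ℝ) := by exact_mod_cast ha0
          nlinarith
  -- ============ interval facts ============
  have hrXM : rX M = l + 1 := by rw [hrX M hMAG, if_pos hSup.symm]
  have hlXmono : ∀ u w : ℝ, u ≤ w → lX u ≤ lX w := by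
    intro u w h; rw [hlX, hlX]; gcongr
  have hlXsmono : ∀ u w : ℝ, u < w → lX u < lX w := by
    intro u w h; rw [hlX, hlX]
    exact (div_lt_div_iff_of_pos_right hβ2pos').mpr (by linarith)
  have hβ2lX : ∀ Z, β^2 * lX Z = Z + l := by
    intro Z; rw [hlX]; field_simp
  have hveq : β * (β - (⌊β⌋:ℝ)) = β^2 - β * (⌊β⌋:ℝ) := by ring
  have hlXM : lX M < l + 1 := by
    rw [hlX, div_lt_iff₀ hβ2pos']
    nlinarith [hMv]
  have hXminAG : -((⌊β⌋:ℝ)*β) ∈ AG := by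
    rw [hAG]; left
    exact ⟨0, ⌊β⌋, le_rfl, by omega, hF1, le_rfl, by push_cast; ring⟩
  have hlXmin : lX (-((⌊β⌋:ℝ)*β)) = l := by
    rw [hlX, div_eq_iff (ne_of_gt hβ2pos')]
    nlinarith [hβ2l]
  have hsfacts : ∀ Z ∈ AG, l < β^2 * rX Z - Z ∧ β^2 * rX Z - Z ≤ l + 1 ∧
      rX Z ≤ l + 1 ∧ lX Z < rX Z := by
    intro Z hZ
    by_cases hZM : Z = M
    · subst hZM
      rw [hrXM]
      refine ⟨by nlinarith [hMv], by nlinarith [hMv1], le_rfl, ?_⟩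
      linarith [hlXM]
    · obtain ⟨W, hWAG, hZW, hW1, _, hrXW, _, _⟩ := hnext Z hZ hZM
      rw [hrXW, hβ2lX]
      refine ⟨by linarith, by linarith, ?_, hlXsmono Z W hZW⟩
      have := hlXmono W M (hAGle W hWAG)
      linarith [hlXM]
  -- ============ covering ============
  have hcovIco : ∀ w, l ≤ w → w < l + 1 → ∃ Z ∈ AG, lX Z ≤ w ∧ w < rX Z := by
    intro w hw1 hw2
    have hSfin : {Z | Z ∈ AG ∧ lX Z ≤ w}.Finite := hAGfin.subset (fun z hz => hz.1)
    have hSne : {Z | Z ∈ AG ∧ lX Z ≤ w}.Nonempty :=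
      ⟨-((⌊β⌋:ℝ)*β), hXminAG, by rw [hlXmin]; exact hw1⟩
    obtain ⟨Z, hZS, hZmax⟩ := Set.Finite.exists_maximalFor id _ hSfin hSne
    refine ⟨Z, hZS.1, hZS.2, ?_⟩
    by_contra hcon
    push_neg at hcon
    by_cases hZM : Z = M
    · rw [hZM, hrXM] at hcon; linarith
    · obtain ⟨W, hWAG, hZW, _, _, hrXW, _, _⟩ := hnext Z hZS.1 hZM
      have hWS : W ∈ {Z | Z ∈ AG ∧ lX Z ≤ w} := ⟨hWAG, by rw [← hrXW]; linarith⟩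
      exact absurd (hZmax hWS (le_of_lt hZW)) (not_le.mpr hZW)
  have hcovIoc : ∀ w, l < w → w ≤ l + 1 → ∃ Z ∈ AG, lX Z < w ∧ w ≤ rX Z := by
    intro w hw1 hw2
    have hSfin : {Z | Z ∈ AG ∧ lX Z < w}.Finite := hAGfin.subset (fun z hz => hz.1)
    have hSne : {Z | Z ∈ AG ∧ lX Z < w}.Nonempty :=
      ⟨-((⌊β⌋:ℝ)*β), hXminAG, by rw [hlXmin]; exact hw1⟩
    obtain ⟨Z, hZS, hZmax⟩ := Set.Finite.exists_maximalFor id _ hSfin hSne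
    refine ⟨Z, hZS.1, hZS.2, ?_⟩
    by_contra hcon
    push_neg at hcon
    by_cases hZM : Z = M
    · rw [hZM, hrXM] at hcon; linarith
    · obtain ⟨W, hWAG, hZW, _, _, hrXW, _, _⟩ := hnext Z hZS.1 hZM
      have hWS : W ∈ {Z | Z ∈ AG ∧ lX Z < w} := ⟨hWAG, by rw [← hrXW]; linarith⟩
      exact absurd (hZmax hWS (le_of_lt hZW)) (not_le.mpr hZW)
  -- ============ digit determination ============
  have hDGfact : ∀ w, l ≤ w → w < l + 1 → DG w ∈ AG ∧ lX (DG w) ≤ w ∧ w < rX (DG w) := by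
    intro w h1 h2
    obtain ⟨Z, hZAG, hz1, hz2⟩ := hcovIco w h1 h2
    rw [hDG Z hZAG w ⟨hz1, hz2⟩]
    exact ⟨hZAG, hz1, hz2⟩
  have hDGsfact : ∀ w, l < w → w ≤ l + 1 → DGs w ∈ AG ∧ lX (DGs w) < w ∧ w ≤ rX (DGs w) := by
    intro w h1 h2
    obtain ⟨Z, hZAG, hz1, hz2⟩ := hcovIoc w h1 h2
    rw [hDGs Z hZAG w ⟨hz1, hz2⟩]
    exact ⟨hZAG, hz1, hz2⟩
  have hTGfact : ∀ w, l ≤ w → w < l + 1 →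
      l ≤ TG w ∧ TG w < β^2 * rX (DG w) - DG w ∧ TG w < l + 1 := by
    intro w h1 h2
    obtain ⟨hAGw, hw1, hw2⟩ := hDGfact w h1 h2
    obtain ⟨hs1, hs2, _, _⟩ := hsfacts (DG w) hAGw
    rw [hTG]
    have e1 : β^2 * lX (DG w) ≤ β^2 * w := mul_le_mul_of_nonneg_left hw1 hβ2pos'.le
    rw [hβ2lX] at e1
    have e2 : β^2 * w < β^2 * rX (DG w) := mul_lt_mul_of_pos_left hw2 hβ2pos'
    exact ⟨by linarith, by linarith, by linarith⟩
  have hTGsfact : ∀ w, l < w → w ≤ l + 1 →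
      l < TGs w ∧ TGs w ≤ β^2 * rX (DGs w) - DGs w ∧ TGs w ≤ l + 1 := by
    intro w h1 h2
    obtain ⟨hAGw, hw1, hw2⟩ := hDGsfact w h1 h2
    obtain ⟨hs1, hs2, _, _⟩ := hsfacts (DGs w) hAGw
    rw [hTGs]
    have e1 : β^2 * lX (DGs w) < β^2 * w := mul_lt_mul_of_pos_left hw1 hβ2pos'
    rw [hβ2lX] at e1
    have e2 : β^2 * w ≤ β^2 * rX (DGs w) := mul_le_mul_of_nonneg_left hw2 hβ2pos'.le
    exact ⟨by linarith, by linarith, by linarith⟩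
  -- shifts
  have hdG0 : ∀ w, dG w 0 = DG w := by
    intro w; rw [hdG, Function.iterate_zero_apply]
  have hdGs0 : ∀ w, dGs w 0 = DGs w := by
    intro w; rw [hdGs, Function.iterate_zero_apply]
  have hdGshift : ∀ w j, dG w (j+1) = dG (TG w) j := by
    intro w j; rw [hdG, hdG, Function.iterate_succ_apply]
  have hdGsshift : ∀ w j, dGs w (j+1) = dGs (TGs w) j := by
    intro w j; rw [hdGs, hdGs, Function.iterate_succ_apply]
  -- digit comparison
  have hDle : ∀ y z, l ≤ y → y < l + 1 → l < z → z ≤ l + 1 → y < z → DG y ≤ DGs z := by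
    intro y z hy1 hy2 hz1 hz2 hyz
    obtain ⟨hA, hA1, hA2⟩ := hDGfact y hy1 hy2
    obtain ⟨hC, hC1, hC2⟩ := hDGsfact z hz1 hz2
    by_contra hcon
    push_neg at hcon
    have hCM : DGs z ≠ M := by
      intro h
      exact absurd (hAGle _ hA) (by rw [← h]; exact not_le.mpr hcon)
    obtain ⟨W, hWAG, hCW, _, hmin, hrXC, _, _⟩ := hnext (DGs z) hC hCM
    have hWle : W ≤ DG y := hmin (DG y) (hAGB hA) hcon
    have h3 : rX (DGs z) ≤ lX (DG y) := by rw [hrXC]; exact hlXmono _ _ hWle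
    linarith
  -- Lemma A : comparison of expansions
  have hLemA : ∀ n : ℕ, ∀ y z, l ≤ y → y < l + 1 → l < z → z ≤ l + 1 → y < z →
      1 < β ^ (2*n) * (z - y) → LexLt (dG y) (dGs z) := by
    intro n
    induction n with
    | zero =>
      intro y z hy1 hy2 hz1 hz2 hyz habs
      simp only [Nat.mul_zero, pow_zero, one_mul] at habs
      linarith
    | succ n ih =>
      intro y z hy1 hy2 hz1 hz2 hyz habs
      have hle := hDle y z hy1 hy2 hz1 hz2 hyz
      rcases lt_or_eq_of_le hle with h | h
      · exact ⟨0, fun i hi => absurd hi (Nat.not_lt_zero i), by rw [hdG0, hdGs0]; exact h⟩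
      · obtain ⟨hTy1, hTy2, hTy3⟩ := hTGfact y hy1 hy2
        obtain ⟨hTz1, hTz2, hTz3⟩ := hTGsfact z hz1 hz2
        have hβ2yz : β^2 * y < β^2 * z := mul_lt_mul_of_pos_left hyz hβ2pos'
        have hyz' : TG y < TGs z := by rw [hTG, hTGs, h]; linarith
        have harch' : 1 < β^(2*n) * (TGs z - TG y) := by
          have hdz : TGs z - TG y = β^2 * (z - y) := by rw [hTG, hTGs, h]; ring
          have hp : β^(2*(n+1)) = β^(2*n) * β^2 := by rw [← pow_add]; ring_nf
          rw [hdz, ← mul_assoc, ← hp]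
          exact habs
        obtain ⟨k, hk1, hk2⟩ := ih (TG y) (TGs z) hTy1 hTy3 hTz1 hTz3 hyz' harch'
        refine ⟨k+1, ?_, ?_⟩
        · intro i hi
          cases i with
          | zero => rw [hdG0, hdGs0, h]
          | succ j =>
            rw [hdGshift, hdGsshift]
            exact hk1 j (by omega)
        · rw [hdGshift, hdGsshift]
          exact hk2
  have harch : ∀ c : ℝ, 0 < c → ∃ n : ℕ, 1 < β^(2*n) * c := by
    intro c hc
    obtain ⟨n, hn⟩ := pow_unbounded_of_one_lt (1/c) hβ2
    refine ⟨n, ?_⟩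
    have hp : (β^2)^n = β^(2*n) := by rw [← pow_mul]
    rw [← hp]
    have := (div_lt_iff₀ hc).mp hn
    linarith
  have hcomp : ∀ y z, l ≤ y → y < l + 1 → l < z → z ≤ l + 1 → y < z →
      LexLt (dG y) (dGs z) := by
    intro y z hy1 hy2 hz1 hz2 hyz
    obtain ⟨n, hn⟩ := harch (z - y) (by linarith)
    exact hLemA n y z hy1 hy2 hz1 hz2 hyz hn
  -- orbit of TG stays in [l, l+1)
  have horbit : ∀ x, l ≤ x → x < l + 1 → ∀ k, l ≤ TG^[k] x ∧ TG^[k] x < l + 1 := by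
    intro x h1 h2 k
    induction k with
    | zero => simpa using ⟨h1, h2⟩
    | succ k ih =>
      rw [Function.iterate_succ_apply']
      exact ⟨(hTGfact _ ih.1 ih.2).1, (hTGfact _ ih.1 ih.2).2.2⟩
  -- the point z₁ = TGs (l+1)
  have hDGsl1 : DGs (l+1) = M := hDGs M hMAG (l+1) ⟨hlXM, by rw [hrXM]⟩
  have hz1 : TGs (l+1) = β^2*(l+1) - M := by rw [hTGs, hDGsl1]
  have hz1a : l < TGs (l+1) := by rw [hz1]; nlinarith [hMv, hβ2l]
  have hz1b : TGs (l+1) ≤ l + 1 := by rw [hz1]; nlinarith [hMv1, hβ2l]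
  have hz2a : l < l + (β - (⌊β⌋:ℝ)) := by linarith
  have hz2b : l + (β - (⌊β⌋:ℝ)) ≤ l + 1 := by linarith
  -- ============ the main equivalence ============
  constructor
  · -- forward direction
    rintro ⟨x, hxmem, hdx⟩ k
    obtain ⟨hx1, hx2⟩ := hxmem
    have hxk := horbit x hx1 hx2
    have hXd : ∀ j, X j = DG (TG^[j] x) := by intro j; rw [← hdx, hdG]
    have htail : ∀ j, (fun i => X (j + 1 + i)) = dG (TG^[j+1] x) := by
      intro j; funext i
      rw [hXd, hdG]
      congr 1
      have hidx : j + 1 + i = i + (j+1) := by omega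
      rw [hidx, Function.iterate_add_apply]
    have hTsucc : ∀ j, TG^[j+1] x = TG (TG^[j] x) := fun j =>
      Function.iterate_succ_apply' TG j x
    constructor
    · intro hXk
      rw [hSup] at hXk
      obtain ⟨h1, h2⟩ := hxk k
      have hAM : DG (TG^[k] x) = M := by rw [← hXd k]; exact hXk
      have hT := hTGfact _ h1 h2
      have hT2 : TG (TG^[k] x) < β^2 * rX M - M := by rw [← hAM]; exact hT.2.1
      have hsM : β^2 * rX M - M = TGs (l+1) := by rw [hrXM, hz1]
      rw [htail k, hTsucc k]
      exact hcomp _ _ hT.1 hT.2.2 hz1a hz1b (by rw [← hsM]; exact hT2)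
    · intro hbt hXkM
      rw [hSup] at hXkM
      obtain ⟨h1, h2⟩ := hxk k
      obtain ⟨W, hWAG, hZW, hW1, hmin, hrXW, hbtc, _⟩ := hnext (X k) (hX k) hXkM
      have hWval : W = X k + (β - (⌊β⌋:ℝ)) := hbtc hbt
      have hsval : β^2 * rX (X k) - X k = l + (β - (⌊β⌋:ℝ)) := by
        rw [hrXW, hβ2lX, hWval]; ring
      have hAk : DG (TG^[k] x) = X k := (hXd k).symm
      have hT := hTGfact _ h1 h2
      have hT2 : TG (TG^[k] x) < l + (β - (⌊β⌋:ℝ)) := by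
        rw [← hsval, ← hAk]; exact hT.2.1
      rw [htail k, hTsucc k]
      exact hcomp _ _ hT.1 hT.2.2 hz2a hz2b hT2
  · -- backward direction
    intro hcond
    -- TGs-orbit of points in (l, l+1]
    have horbits : ∀ w, l < w → w ≤ l + 1 → ∀ k, l < TGs^[k] w ∧ TGs^[k] w ≤ l + 1 := by
      intro w h1 h2 k
      induction k with
      | zero => simpa using ⟨h1, h2⟩
      | succ k ih =>
        rw [Function.iterate_succ_apply']
        exact ⟨(hTGsfact _ ih.1 ih.2).1, (hTGsfact _ ih.1 ih.2).2.2⟩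
    -- geometric machinery
    obtain ⟨q, hqdef⟩ : ∃ q : ℝ, q = (β^2)⁻¹ := ⟨_, rfl⟩
    have hq0 : 0 < q := by rw [hqdef]; positivity
    have hq1 : q < 1 := by
      rw [hqdef]
      have := (div_lt_one hβ2pos').mpr hβ2
      rw [one_div] at this
      exact this
    have hqβ : β^2 * q = 1 := by rw [hqdef]; field_simp
    have hqmul : ∀ t : ℝ, q * (β^2 * t) = t := by
      intro t; rw [← mul_assoc, mul_comm q (β^2), hqβ, one_mul]
    obtain ⟨y, hydef⟩ : ∃ y : ℕ → ℝ, y = fun j => ∑' i : ℕ, X (j + i) * q ^ (i+1) :=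
      ⟨_, rfl⟩
    have hyj : ∀ j, y j = ∑' i : ℕ, X (j + i) * q ^ (i+1) := fun j => by rw [hydef]
    have hsumgeo : Summable (fun i : ℕ => q^(i+1)) := by
      have h1 := (summable_geometric_of_lt_one hq0.le hq1).mul_left q
      have h2 : ∀ i:ℕ, q * q^i = q^(i+1) := fun i => by rw [pow_succ]; ring
      exact (summable_congr h2).mp h1
    have hXub : ∀ k, X k ≤ M := fun k => hAGle _ (hX k)
    have hXlb : ∀ k, -((⌊β⌋:ℝ)*β) ≤ X k := fun k => hAGge _ (hX k)
    have hMβF : M ≤ β*(⌊β⌋:ℝ) := by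
      have h1 : (1:ℝ) ≤ (⌊β⌋:ℝ) := by exact_mod_cast hF1
      nlinarith [hMβ, hb0]
    have hsum : ∀ j, Summable (fun i : ℕ => X (j+i) * q^(i+1)) := by
      intro j
      apply Summable.of_norm_bounded (g := fun i => (β*(⌊β⌋:ℝ)) * q^(i+1)) (hsumgeo.mul_left _)
      intro i
      rw [Real.norm_eq_abs, abs_mul, abs_of_pos (pow_pos hq0 _)]
      apply mul_le_mul_of_nonneg_right _ (pow_pos hq0 _).le
      rw [abs_le]
      constructor
      · have := hXlb (j+i); nlinarith
      · have := hXub (j+i); linarith [hMβF]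
    have hgeo : ∑' (i:ℕ), q^(i+1) = q/(1-q) := by
      have h2 : ∀ i:ℕ, q^(i+1) = q * q^i := fun i => by rw [pow_succ]; ring
      rw [tsum_congr h2, tsum_mul_left, tsum_geometric_of_lt_one hq0.le hq1,
        div_eq_mul_inv]
    have hq1q : q/(1-q) = 1/(β^2-1) := by
      have h1mq : 1 - q = q * (β^2-1) := by linarith [hqβ]
      rw [h1mq, ← div_div, div_self (ne_of_gt hq0)]
    have hyub : ∀ j, y j ≤ M/(β^2-1) := by
      intro j
      rw [hyj j]
      have hle : ∀ i:ℕ, X (j+i) * q^(i+1) ≤ M * q^(i+1) := fun i =>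
        mul_le_mul_of_nonneg_right (hXub (j+i)) (pow_pos hq0 _).le
      have h1 := Summable.tsum_le_tsum hle (hsum j) (hsumgeo.mul_left M)
      rw [tsum_mul_left, hgeo, hq1q] at h1
      have h2 : M * (1/(β^2-1)) = M/(β^2-1) := by ring
      linarith
    have hylb : ∀ j, l ≤ y j := by
      intro j
      rw [hyj j]
      have hle : ∀ i:ℕ, (-((⌊β⌋:ℝ)*β)) * q^(i+1) ≤ X (j+i) * q^(i+1) := fun i =>
        mul_le_mul_of_nonneg_right (hXlb (j+i)) (pow_pos hq0 _).le
      have h1 := Summable.tsum_le_tsum hle (hsumgeo.mul_left _) (hsum j)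
      rw [tsum_mul_left, hgeo, hq1q] at h1
      have h2 : (-((⌊β⌋:ℝ)*β)) * (1/(β^2-1)) = l := by
        rw [hl]; ring
      linarith
    have hyrec : ∀ j, y j = q * (X j + y (j+1)) := by
      intro j
      rw [hyj j, Summable.tsum_eq_zero_add (hsum j)]
      have h1 : X (j+0) * q^(0+1) = X j * q := by norm_num
      have h2 : ∀ i:ℕ, X (j+(i+1)) * q^(i+1+1) = q * (X ((j+1)+i) * q^(i+1)) := by
        intro i
        have hidx : j+(i+1) = (j+1)+i := by omega
        rw [hidx, pow_succ]
        ring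
      rw [h1, tsum_congr h2, tsum_mul_left, ← hyj (j+1)]
      ring
    -- the lexicographic condition at every index
    have hlex : ∀ j, ∃ m, (∀ i < m, X (j + 1 + i) = dGs (β^2 * rX (X j) - X j) i) ∧
        X (j + 1 + m) < dGs (β^2 * rX (X j) - X j) m := by
      intro j
      by_cases hjM : X j = M
      · have hs : β^2 * rX (X j) - X j = TGs (l+1) := by rw [hjM, hrXM, hz1]
        rw [hs]
        exact (hcond j).1 (by rw [hSup]; exact hjM)
      · by_cases hbt : ∃ b:ℤ, 0 ≤ b ∧ b ≤ ⌊β⌋ ∧ X j = -(b:ℝ)*β + (⌊β⌋:ℝ)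
        · obtain ⟨W, hWAG, hZW, hW1, hmin, hrXW, hbtc, _⟩ := hnext (X j) (hX j) hjM
          have hs : β^2 * rX (X j) - X j = l + (β - (⌊β⌋:ℝ)) := by
            rw [hrXW, hβ2lX, hbtc hbt]; ring
          rw [hs]
          exact (hcond j).2 hbt (by rw [hSup]; exact hjM)
        · obtain ⟨W, hWAG, hZW, hW1, hmin, hrXW, _, hfull⟩ := hnext (X j) (hX j) hjM
          have hs : β^2 * rX (X j) - X j = l + 1 := by rw [hrXW, hβ2lX, hfull hbt]; ring
          rw [hs]
          have hd0 : dGs (l+1) 0 = M := by rw [hdGs0, hDGsl1]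
          rcases lt_or_eq_of_le (hAGle _ (hX (j+1))) with hlt | heq
          · exact ⟨0, fun i hi => absurd hi (Nat.not_lt_zero i), by rw [hd0]; exact hlt⟩
          · obtain ⟨m, hm1, hm2⟩ := (hcond (j+1)).1 (by rw [hSup]; exact heq)
            refine ⟨m+1, ?_, ?_⟩
            · intro i hi
              cases i with
              | zero => rw [hd0]; exact heq
              | succ i' =>
                rw [hdGsshift]
                have hidx : j+1+(i'+1) = j+1+1+i' := by omega
                rw [hidx]
                exact hm1 i' (by omega)
            · rw [hdGsshift]
              have hidx : j+1+(m+1) = j+1+1+m := by omega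
              rw [hidx]
              exact hm2
    -- core contraction estimate
    have hcore : ∀ c : ℝ, 0 ≤ c →
        (∀ j', y (j'+1) ≤ (β^2 * rX (X j') - X j') + c) →
        ∀ j, y (j+1) ≤ (β^2 * rX (X j) - X j) + q * c ∧
          (c = 0 → y (j+1) < β^2 * rX (X j) - X j) := by
      intro c hc hbound j
      obtain ⟨m, hm1, hm2⟩ := hlex j
      obtain ⟨hzl, hzr, _, _⟩ := hsfacts (X j) (hX j)
      have horb := horbits (β^2 * rX (X j) - X j) hzl hzr
      have hmatch : ∀ i, i ≤ m →
          y (j+1) - (β^2 * rX (X j) - X j) =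
            q^i * (y (j+1+i) - TGs^[i] (β^2 * rX (X j) - X j)) := by
        intro i
        induction i with
        | zero => intro _; simp
        | succ i ihi =>
          intro hi
          have hrec := ihi (by omega)
          have hD : DGs (TGs^[i] (β^2 * rX (X j) - X j)) = X (j+1+i) := by
            have h1 := hm1 i (by omega)
            rw [hdGs] at h1
            exact h1.symm
          have hstepi : TGs^[i+1] (β^2 * rX (X j) - X j)
              = β^2 * TGs^[i] (β^2 * rX (X j) - X j) - X (j+1+i) := by
            rw [Function.iterate_succ_apply', hTGs, hD]
          have hwrec : TGs^[i] (β^2 * rX (X j) - X j)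
              = q * (X (j+1+i) + TGs^[i+1] (β^2 * rX (X j) - X j)) := by
            rw [hstepi]
            have h2 : q * (X (j+1+i) + (β^2 * TGs^[i] (β^2 * rX (X j) - X j) - X (j+1+i)))
                = q * (β^2 * TGs^[i] (β^2 * rX (X j) - X j)) := by ring
            rw [h2, hqmul]
          have hidx : j+1+(i+1) = (j+1+i)+1 := by omega
          rw [hrec, hwrec, hidx, hyrec (j+1+i)]
          ring
      have hw := horb m
      obtain ⟨hDAG, hD1, hD2⟩ := hDGsfact (TGs^[m] (β^2 * rX (X j) - X j)) hw.1 hw.2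
      have hlt : X (j+1+m) < DGs (TGs^[m] (β^2 * rX (X j) - X j)) := by
        have h1 := hm2
        rw [hdGs] at h1
        exact h1
      have hne : X (j+1+m) ≠ M := by
        intro h
        have h2 := hAGle _ hDAG
        rw [h] at hlt
        linarith
      obtain ⟨W, hWAG, hZW, _, hmin, hrXW, _, _⟩ := hnext (X (j+1+m)) (hX (j+1+m)) hne
      have hWD : W ≤ DGs (TGs^[m] (β^2 * rX (X j) - X j)) := hmin _ (hAGB hDAG) hlt
      have h5 : rX (X (j+1+m)) < TGs^[m] (β^2 * rX (X j) - X j) := by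
        have h5a := hlXmono _ _ hWD
        rw [← hrXW] at h5a
        linarith [hD1]
      have h6 := hbound (j+1+m)
      have h7 : y (j+1+m) ≤ rX (X (j+1+m)) + q * c := by
        rw [hyrec (j+1+m)]
        have hsum1 : X (j+1+m) + y ((j+1+m)+1)
            ≤ X (j+1+m) + ((β^2 * rX (X (j+1+m)) - X (j+1+m)) + c) := by linarith
        have h8 := mul_le_mul_of_nonneg_left hsum1 hq0.le
        have h9 : q * (X (j+1+m) + ((β^2 * rX (X (j+1+m)) - X (j+1+m)) + c))
            = q * (β^2 * rX (X (j+1+m))) + q * c := by ring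
        rw [h9, hqmul] at h8
        exact h8
      have hdm : y (j+1+m) - TGs^[m] (β^2 * rX (X j) - X j) < q * c := by linarith
      have hkey := hmatch m le_rfl
      constructor
      · rcases le_or_gt (y (j+1+m) - TGs^[m] (β^2 * rX (X j) - X j)) 0 with hcase | hcase
        · have h10 : q^m * (y (j+1+m) - TGs^[m] (β^2 * rX (X j) - X j)) ≤ 0 :=
            mul_nonpos_of_nonneg_of_nonpos (pow_pos hq0 m).le hcase
          have h11 : 0 ≤ q * c := mul_nonneg hq0.le hc
          linarith [hkey]
        · have hqm1 : q^m ≤ 1 := pow_le_one₀ hq0.le hq1.le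
          have h10 : q^m * (y (j+1+m) - TGs^[m] (β^2 * rX (X j) - X j))
              ≤ y (j+1+m) - TGs^[m] (β^2 * rX (X j) - X j) :=
            mul_le_of_le_one_left hcase.le hqm1
          linarith [hkey, hdm]
      · intro hc0
        rw [hc0, mul_zero] at hdm
        have h10 : q^m * (y (j+1+m) - TGs^[m] (β^2 * rX (X j) - X j)) < 0 :=
          mul_neg_of_pos_of_neg (pow_pos hq0 m) (by linarith)
        linarith [hkey]
    -- iterated bound
    have hstep1 : ∀ n : ℕ, ∀ j,
        y (j+1) ≤ (β^2 * rX (X j) - X j) + (M/(β^2-1) - l) * q^n := by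
      intro n
      induction n with
      | zero =>
        intro j
        have h1 := hyub (j+1)
        have h2 := (hsfacts (X j) (hX j)).1
        simp only [pow_zero, mul_one]
        linarith
      | succ n ih =>
        intro j
        have hC0 : 0 ≤ (M/(β^2-1) - l) * q^n := by
          have h1 := div_nonneg hM0 hβ2pos.le
          have h2 := (pow_pos hq0 n).le
          nlinarith
        have h1 := (hcore ((M/(β^2-1) - l) * q^n) hC0 (fun j' => ih j') j).1
        have h2 : q * ((M/(β^2-1) - l) * q^n) = (M/(β^2-1) - l) * q^(n+1) := by
          rw [pow_succ]; ring
        linarith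
    have hstep2 : ∀ j, y (j+1) ≤ β^2 * rX (X j) - X j := by
      intro j
      by_contra hcon
      push_neg at hcon
      have htend : Filter.Tendsto (fun n : ℕ => (M/(β^2-1) - l) * q^n)
          Filter.atTop (nhds 0) := by
        have h1 := tendsto_pow_atTop_nhds_zero_of_lt_one hq0.le hq1
        have h2 := h1.const_mul (M/(β^2-1) - l)
        simpa using h2
      obtain ⟨n, hn⟩ := (htend.eventually (gt_mem_nhds (by linarith :
        (0:ℝ) < y (j+1) - (β^2 * rX (X j) - X j)))).exists
      have := hstep1 n j
      linarith
    have hstep3 : ∀ j, y (j+1) < β^2 * rX (X j) - X j := fun j =>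
      (hcore 0 le_rfl (fun j' => by simpa using hstep2 j') j).2 rfl
    -- membership of y j in the branch of X j
    have hmem : ∀ j, lX (X j) ≤ y j ∧ y j < rX (X j) := by
      intro j
      constructor
      · have h1 := hylb (j+1)
        have h2 : lX (X j) = q * (X j + l) := by
          rw [hlX, hqdef, div_eq_mul_inv]; ring
        rw [h2, hyrec j]
        exact mul_le_mul_of_nonneg_left (by linarith) hq0.le
      · have h2 := hstep3 j
        rw [hyrec j]
        have h3 : q * (X j + (β^2 * rX (X j) - X j)) = rX (X j) := by
          have h4 : q * (X j + (β^2 * rX (X j) - X j)) = q * (β^2 * rX (X j)) := by ring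
          rw [h4, hqmul]
        calc q * (X j + y (j+1)) < q * (X j + (β^2 * rX (X j) - X j)) :=
              mul_lt_mul_of_pos_left (by linarith) hq0
          _ = rX (X j) := h3
    have hDGy : ∀ j, DG (y j) = X j := fun j =>
      hDG (X j) (hX j) (y j) ⟨(hmem j).1, (hmem j).2⟩
    have hTGy : ∀ j, TG (y j) = y (j+1) := by
      intro j
      rw [hTG, hDGy, hyrec j]
      have h1 : β^2 * (q * (X j + y (j+1))) = (β^2 * q) * (X j + y (j+1)) := by ring
      rw [h1, hqβ]
      ring
    have hiter : ∀ k, TG^[k] (y 0) = y k := by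
      intro k
      induction k with
      | zero => rfl
      | succ k ih => rw [Function.iterate_succ_apply', ih, hTGy]
    refine ⟨y 0, ⟨hylb 0, ?_⟩, ?_⟩
    · have h1 := (hmem 0).2
      have h2 := (hsfacts (X 0) (hX 0)).2.2.1
      linarith
    · funext k
      rw [hdG, hiter, hDGy]
end

section
/- Let φ = (1+√5)/2 and write A = −φ, B = −φ+1, C = 0. A sequence X₁X₂X₃… ∈ {A, B, C}^ℕ satisfies d_G(x) = X₁X₂X₃… for some x ∈ [−1, 0) if and only if there is no index i with X_i = B and X_{i+1} = C, there is no index i with X_j = B for all j ≥ i, and there is no index i with X_j = C for all j ≥ i (i.e., the sequence contains no factor BC and no suffix B^ω or C^ω). -/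
set_option maxHeartbeats 2000000 in
theorem stmt13 (φ : ℝ) (hφ : φ = (1 + Real.sqrt 5) / 2)
    (DG TG : ℝ → ℝ)
    (hDG : ∀ x, DG x =
      if x < -(1 / φ) then -φ else if x < -(1 / φ ^ 2) then -φ + 1 else if x < 0 then 0 else 1)
    (hTG : ∀ x, TG x = φ ^ 2 * x - DG x)
    (X : ℕ → ℝ) (hX : ∀ i, X i = -φ ∨ X i = -φ + 1 ∨ X i = 0) :
    (∃ x ∈ Set.Ico (-1 : ℝ) 0, ∀ k, DG (TG^[k] x) = X k) ↔
      ((¬ ∃ i, X i = -φ + 1 ∧ X (i + 1) = 0) ∧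
        (¬ ∃ i, ∀ j, i ≤ j → X j = -φ + 1) ∧
        (¬ ∃ i, ∀ j, i ≤ j → X j = 0)) := by
  have h5 : Real.sqrt 5 ^ 2 = 5 := Real.sq_sqrt (by norm_num)
  have hs2 : (2:ℝ) < Real.sqrt 5 := by nlinarith [Real.sqrt_nonneg 5]
  have hs3 : Real.sqrt 5 < 3 := by nlinarith [Real.sqrt_nonneg 5]
  have hφgt : (3:ℝ)/2 < φ := by rw [hφ]; linarith
  have hφlt : φ < 2 := by rw [hφ]; linarith
  have hφ0 : (0:ℝ) < φ := by linarith
  have hφ2 : φ^2 = φ + 1 := by rw [hφ]; nlinarith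
  have hφ3 : φ^3 = 2*φ + 1 := by nlinarith [hφ2]
  have hsq : (0:ℝ) < φ^2 := by positivity
  have h1φ2 : (1:ℝ) < φ^2 := by nlinarith
  have e1 : (1:ℝ)/φ = φ - 1 := by
    rw [div_eq_iff (ne_of_gt hφ0)]; linear_combination -hφ2
  have e2 : (1:ℝ)/φ^2 = 2 - φ := by
    rw [div_eq_iff (ne_of_gt hsq)]; linear_combination (φ-1)*hφ2
  -- DG construction lemmas
  have hmkA : ∀ w : ℝ, w < -(1/φ) → DG w = -φ := by
    intro w h; rw [hDG, if_pos h]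
  have hmkB : ∀ w : ℝ, -(1/φ) ≤ w → w < -(1/φ^2) → DG w = -φ + 1 := by
    intro w h1 h2; rw [hDG, if_neg (not_lt.2 h1), if_pos h2]
  have hmkC : ∀ w : ℝ, -(1/φ^2) ≤ w → w < 0 → DG w = 0 := by
    intro w h1 h2
    have : ¬ (w < -(1/φ)) := by rw [e1] at *; rw [e2] at h1; push_neg; linarith
    rw [hDG, if_neg this, if_neg (not_lt.2 h1), if_pos h2]
  -- DG inversion lemmas
  have hinvB : ∀ w : ℝ, DG w = -φ + 1 → -(1/φ) ≤ w ∧ w < -(1/φ^2) := by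
    intro w h; rw [hDG] at h
    split_ifs at h with h1 h2 h3
    · exfalso; linarith
    · exact ⟨not_lt.1 h1, h2⟩
    · exfalso; linarith
    · exfalso; linarith
  have hinvC : ∀ w : ℝ, DG w = 0 → -(1/φ^2) ≤ w ∧ w < 0 := by
    intro w h; rw [hDG] at h
    split_ifs at h with h1 h2 h3
    · exfalso; linarith
    · exfalso; linarith
    · exact ⟨not_lt.1 h2, h3⟩
    · exfalso; linarith
  constructor
  · -- forward direction
    rintro ⟨x, hx, hd⟩
    have hstep : ∀ w : ℝ, -1 ≤ w → w < 0 →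
        (-1 ≤ TG w ∧ TG w < 0) ∧ (DG w = -φ + 1 → TG w < -(1/φ^2)) := by
      intro w hw1 hw2
      rw [hTG]
      rw [hDG]
      split_ifs with h1 h2
      · -- A branch
        have h1' : w < 1 - φ := by rw [e1] at h1; linarith
        have p1 := mul_le_mul_of_nonneg_left hw1 hsq.le
        have p2 := mul_lt_mul_of_pos_left h1' hsq
        refine ⟨⟨by nlinarith, by nlinarith⟩, fun h => by exfalso; linarith⟩
      · -- B branch
        have h1' : 1 - φ ≤ w := by rw [e1] at h1; push_neg at h1; linarith
        have h2' : w < φ - 2 := by rw [e2] at h2; linarith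
        have p1 := mul_le_mul_of_nonneg_left h1' hsq.le
        have p2 := mul_lt_mul_of_pos_left h2' hsq
        have hub : φ^2 * w - (-φ + 1) < -(1/φ^2) := by rw [e2]; nlinarith
        exact ⟨⟨by nlinarith, by nlinarith⟩, fun _ => hub⟩
      · -- C branch
        have h2' : φ - 2 ≤ w := by rw [e2] at h2; push_neg at h2; linarith
        have p1 := mul_le_mul_of_nonneg_left h2' hsq.le
        have p2 := mul_lt_mul_of_pos_left hw2 hsq
        refine ⟨⟨by nlinarith, by nlinarith⟩, fun h => by exfalso; linarith⟩
    set z : ℕ → ℝ := fun k => TG^[k] x with hzdef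
    have hdz : ∀ k, DG (z k) = X k := fun k => hd k
    have hzs : ∀ k, z (k+1) = TG (z k) := fun k => Function.iterate_succ_apply' TG k x
    have hzmem : ∀ k, -1 ≤ z k ∧ z k < 0 := by
      intro k
      induction k with
      | zero => exact ⟨hx.1, hx.2⟩
      | succ n ih => rw [hzs]; exact (hstep _ ih.1 ih.2).1
    refine ⟨?_, ?_, ?_⟩
    · -- no BC
      rintro ⟨i, hB, hC⟩
      have hlt : z (i+1) < -(1/φ^2) := by
        rw [hzs]
        exact (hstep _ (hzmem i).1 (hzmem i).2).2 (by rw [hdz i, hB])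
      have hge := (hinvC (z (i+1)) (by rw [hdz, hC])).1
      linarith
    · -- no B^ω
      rintro ⟨i, hi⟩
      have hBj : ∀ j, i ≤ j → DG (z j) = -φ + 1 := fun j hj => by rw [hdz]; exact hi j hj
      have hv0 : 0 < (φ - 2) - z i := by
        have h := (hinvB _ (hBj i le_rfl)).2
        rw [e2] at h; linarith
      have claim : ∀ k, z (i+k) = φ - 2 - (φ^2)^k * ((φ - 2) - z i) := by
        intro k
        induction k with
        | zero => rw [Nat.add_zero, pow_zero]; ring
        | succ k ih =>
          have h : z (i+(k+1)) = TG (z (i+k)) := hzs (i+k)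
          rw [h, hTG, hBj (i+k) (Nat.le_add_right _ _), ih, pow_succ]
          linear_combination (φ - 1) * hφ2
      have hbd : ∀ k, (φ^2)^k * ((φ - 2) - z i) ≤ 2*φ - 3 := by
        intro k
        have h := (hinvB _ (hBj (i+k) (Nat.le_add_right _ _))).1
        rw [e1] at h
        have := claim k
        linarith
      obtain ⟨n, hn⟩ := pow_unbounded_of_one_lt ((2*φ - 3)/((φ - 2) - z i)) h1φ2
      have h2 := (div_lt_iff₀ hv0).1 hn
      linarith [hbd n]
    · -- no C^ω
      rintro ⟨i, hi⟩
      have hCj : ∀ j, i ≤ j → DG (z j) = 0 := fun j hj => by rw [hdz]; exact hi j hj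
      have hv0 : 0 < -(z i) := by
        have h := (hinvC _ (hCj i le_rfl)).2; linarith
      have claim : ∀ k, z (i+k) = (φ^2)^k * z i := by
        intro k
        induction k with
        | zero => rw [Nat.add_zero, pow_zero, one_mul]
        | succ k ih =>
          have h : z (i+(k+1)) = TG (z (i+k)) := hzs (i+k)
          rw [h, hTG, hCj (i+k) (Nat.le_add_right _ _), ih, pow_succ]
          ring
      have hbd : ∀ k, (φ^2)^k * (-(z i)) ≤ 2 - φ := by
        intro k
        have h := (hinvC _ (hCj (i+k) (Nat.le_add_right _ _))).1
        rw [e2] at h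
        have := claim k
        linarith
      obtain ⟨n, hn⟩ := pow_unbounded_of_one_lt ((2 - φ)/(-(z i))) h1φ2
      have h2 := (div_lt_iff₀ hv0).1 hn
      linarith [hbd n]
  · -- converse direction
    rintro ⟨hBC, hBw, hCw⟩
    push_neg at hBC hBw hCw
    set r : ℝ := (φ^2)⁻¹ with hrdef
    have hr0 : (0:ℝ) < r := by rw [hrdef]; positivity
    have hr1 : r < 1 := by
      rw [hrdef]
      rw [inv_lt_one₀ hsq]
      exact h1φ2
    have hrmul : φ^2 * r = 1 := by rw [hrdef]; exact mul_inv_cancel₀ (ne_of_gt hsq)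
    have c3 : r = 2 - φ := by rw [hrdef, ← one_div]; exact e2
    have c1 : -φ * r = 1 - φ := by
      rw [c3]; linear_combination hφ2
    have hXb : ∀ i, -φ ≤ X i ∧ X i ≤ 0 := by
      intro i; rcases hX i with h|h|h <;> rw [h] <;> constructor <;> linarith
    have hgeo : Summable (fun k : ℕ => r ^ k) := summable_geometric_of_lt_one hr0.le hr1
    have hsump : Summable (fun k : ℕ => r^(k+1)) :=
      (hgeo.mul_left r).congr fun k => by ring
    have hsum : ∀ n, Summable (fun k : ℕ => X (n+k) * r^(k+1)) := by
      intro n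
      have hg : Summable (fun k : ℕ => φ * r^(k+1)) := hsump.mul_left φ
      have habs : Summable (fun k : ℕ => |X (n+k) * r^(k+1)|) := by
        refine Summable.of_nonneg_of_le (fun k => abs_nonneg _) (fun k => ?_) hg
        rw [abs_mul, abs_of_nonneg (by positivity : (0:ℝ) ≤ r^(k+1))]
        refine mul_le_mul_of_nonneg_right ?_ (by positivity)
        rcases hXb (n+k) with ⟨ha, hb⟩
        rw [abs_le]; constructor <;> linarith
      exact habs.of_abs
    have hG : ∑' k : ℕ, r^(k+1) = φ - 1 := by
      have hr' : (fun k : ℕ => r^(k+1)) = fun k : ℕ => r * r^k := by funext k; ring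
      rw [hr', tsum_mul_left, tsum_geometric_of_lt_one hr0.le hr1, c3]
      rw [show (1:ℝ) - (2 - φ) = φ - 1 by ring]
      have hne : φ - 1 ≠ 0 := by intro h; linarith [hφgt]
      field_simp
      linear_combination -hφ2
    set y : ℕ → ℝ := fun n => ∑' k : ℕ, X (n+k) * r^(k+1) with hy
    have hyle : ∀ n, y n ≤ 0 := by
      intro n
      show ∑' k : ℕ, X (n+k) * r^(k+1) ≤ 0
      exact tsum_nonpos fun k => mul_nonpos_iff.2 (Or.inr ⟨(hXb _).2, by positivity⟩)
    have hyge : ∀ n, -1 ≤ y n := by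
      intro n
      have h1 : ∑' k : ℕ, (-φ) * r^(k+1) ≤ y n := by
        refine Summable.tsum_le_tsum (fun k => ?_) (hsump.mul_left (-φ)) (hsum n)
        exact mul_le_mul_of_nonneg_right (hXb _).1 (by positivity)
      have h2 : ∑' k : ℕ, (-φ) * r^(k+1) = -1 := by
        rw [tsum_mul_left, hG]; linear_combination -hφ2
      linarith
    have hrec : ∀ n, y n = X n * r + r * y (n+1) := by
      intro n
      have h0 : y n = X (n+0) * r^(0+1) + ∑' k : ℕ, X (n+(k+1)) * r^((k+1)+1) :=
        Summable.tsum_eq_zero_add (hsum n)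
      have h1 : ∑' k : ℕ, X (n+(k+1)) * r^((k+1)+1) = r * y (n+1) := by
        show _ = r * ∑' k : ℕ, X ((n+1)+k) * r^(k+1)
        rw [← tsum_mul_left]
        exact tsum_congr fun k => by rw [show n+(k+1) = (n+1)+k from by ring]; ring
      rw [h0, h1]
      norm_num
    have hbase : ∀ n, X n ≠ 0 → y n < 0 := by
      intro n hn
      have hx0 : X n ≤ -φ + 1 := by
        rcases hX n with h|h|h
        · rw [h]; linarith
        · rw [h]
        · exact absurd h hn
      have h1 : X n * r ≤ (-φ+1) * r := mul_le_mul_of_nonneg_right hx0 hr0.le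
      have h2 : (-φ+1) * r < 0 := mul_neg_of_neg_of_pos (by linarith) hr0
      have h3 : r * y (n+1) ≤ 0 := mul_nonpos_iff.2 (Or.inl ⟨hr0.le, hyle (n+1)⟩)
      linarith [hrec n]
    have hneg : ∀ n, y n < 0 := by
      have haux : ∀ d n, X (n+d) ≠ 0 → y n < 0 := by
        intro d
        induction d with
        | zero => exact fun n hn => hbase n hn
        | succ d ih =>
          intro n hn
          rcases eq_or_ne (X n) 0 with h0|h0
          · have he : y n = r * y (n+1) := by rw [hrec n, h0]; ring
            have h2 : X ((n+1)+d) ≠ 0 := by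
              rw [show (n+1)+d = n+(d+1) from by ring]; exact hn
            have := mul_neg_of_pos_of_neg hr0 (ih (n+1) h2)
            linarith
          · exact hbase n h0
      intro n
      obtain ⟨j, hj1, hj2⟩ := hCw n
      exact haux (j - n) n (by rw [show n + (j-n) = j from by omega]; exact hj2)
    have hAcase : ∀ n, X n = -φ → y n < φ - 2 := by
      intro n hA
      have h3 : r * y (n+1) < 0 := mul_neg_of_pos_of_neg hr0 (hneg (n+1))
      have h := hrec n
      rw [hA] at h
      linarith [c1]
    have hlt2 : ∀ n, X n ≠ 0 → y n < φ - 2 := by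
      have haux2 : ∀ d n, X (n+d) ≠ -φ+1 → X n ≠ 0 → y n < φ - 2 := by
        intro d
        induction d with
        | zero =>
          intro n h1 h2
          have hA : X n = -φ := by
            rcases hX n with h|h|h
            · exact h
            · exact absurd h h1
            · exact absurd h h2
          exact hAcase n hA
        | succ d ih =>
          intro n h1 h2
          rcases hX n with hA|hB|hC
          · exact hAcase n hA
          · have h3 : X (n+1) ≠ 0 := hBC n hB
            have h4 : X ((n+1)+d) ≠ -φ+1 := by
              rw [show (n+1)+d = n+(d+1) from by ring]; exact h1
            have h5 := ih (n+1) h4 h3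
            have h6 : r * y (n+1) < r * (φ-2) := mul_lt_mul_of_pos_left h5 hr0
            have h7 : (-φ+1)*r + r*(φ-2) = φ - 2 := by
              rw [c3]; ring
            have h := hrec n
            rw [hB] at h
            linarith
          · exact absurd hC h2
      intro n hn
      obtain ⟨j, hj1, hj2⟩ := hBw n
      exact haux2 (j - n) n (by rw [show n + (j-n) = j from by omega]; exact hj2) hn
    have hdig : ∀ n, DG (y n) = X n ∧ TG (y n) = y (n+1) := by
      intro n
      have hrn := hrec n
      have hy1 := hyge (n+1)
      have hy2 := hneg (n+1)
      have hryl : -r ≤ r * y (n+1) := by nlinarith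
      have hryu : r * y (n+1) < 0 := mul_neg_of_pos_of_neg hr0 hy2
      have hDGy : DG (y n) = X n := by
        rcases hX n with hA|hB|hC
        · rw [hA]
          refine hmkA _ ?_
          rw [e1]
          rw [hA] at hrn
          linarith [c1]
        · rw [hB]
          have hBne : X n ≠ 0 := by rw [hB]; intro h; linarith
          have hup := hlt2 n hBne
          refine hmkB _ ?_ ?_
          · rw [e1]
            rw [hB] at hrn
            nlinarith [c1, c3]
          · rw [e2]; linarith
        · rw [hC]
          rw [hC] at hrn
          refine hmkC _ ?_ ?_
          · rw [e2]; nlinarith [c3]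
          · linarith
      refine ⟨hDGy, ?_⟩
      rw [hTG, hDGy, hrn]
      linear_combination (X n + y (n+1)) * hrmul
    refine ⟨y 0, Set.mem_Ico.2 ⟨hyge 0, hneg 0⟩, ?_⟩
    intro k
    have hit : TG^[k] (y 0) = y k := by
      induction k with
      | zero => rfl
      | succ n ih => rw [Function.iterate_succ_apply', ih, (hdig n).2]
    rw [hit]
    exact (hdig k).1
end

section
/- Let φ = (1+√5)/2 and write B = −φ+1, C = 0, D = 1. A sequence X₁X₂X₃… ∈ {B, C, D}^ℕ satisfies d_L(x) = X₁X₂X₃… for some x ∈ (−1/φ², 1/φ] if and only if there is no index i with X_i = C and X_{i+1} = B, there is no index i with X_j = B for all j ≥ i, and there is no index i with X_j = C for all j ≥ i (i.e., the sequence contains no factor CB and no suffix B^ω or C^ω). -/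
noncomputable def auxS (r : ℝ) (X : ℕ → ℝ) (k : ℕ) : ℝ :=
  ∑' j : ℕ, X (k + j) * r ^ (j + 1)

lemma geom_summable {r : ℝ} (hr0 : 0 ≤ r) (hr1 : r < 1) :
    Summable (fun j : ℕ => r ^ (j + 1)) :=
  ((summable_geometric_of_lt_one hr0 hr1).mul_left r).congr fun j => by
    rw [pow_succ]; ring

lemma geom_tsum {r : ℝ} (hr0 : 0 ≤ r) (hr1 : r < 1) :
    (∑' j : ℕ, r ^ (j + 1)) = r * (1 - r)⁻¹ := by
  calc (∑' j : ℕ, r ^ (j + 1)) = ∑' j : ℕ, r * r ^ j :=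
        tsum_congr fun j => by rw [pow_succ]; ring
    _ = r * (1 - r)⁻¹ := by rw [tsum_mul_left, tsum_geometric_of_lt_one hr0 hr1]

lemma auxS_summable {r : ℝ} {X : ℕ → ℝ} (hr0 : 0 ≤ r) (hr1 : r < 1)
    (hX1 : ∀ i, |X i| ≤ 1) (k : ℕ) :
    Summable (fun j : ℕ => X (k + j) * r ^ (j + 1)) := by
  refine Summable.of_norm_bounded (geom_summable hr0 hr1) fun j => ?_
  rw [Real.norm_eq_abs, abs_mul, abs_pow, abs_of_nonneg hr0]
  calc |X (k + j)| * r ^ (j + 1) ≤ 1 * r ^ (j + 1) :=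
        mul_le_mul_of_nonneg_right (hX1 _) (pow_nonneg hr0 _)
    _ = r ^ (j + 1) := one_mul _

lemma auxS_rec {r : ℝ} {X : ℕ → ℝ} (hr0 : 0 ≤ r) (hr1 : r < 1)
    (hX1 : ∀ i, |X i| ≤ 1) (k : ℕ) :
    auxS r X k = r * (X k + auxS r X (k + 1)) := by
  unfold auxS
  rw [Summable.tsum_eq_zero_add (auxS_summable hr0 hr1 hX1 k)]
  have h2 : (∑' j : ℕ, X (k + (j + 1)) * r ^ (j + 1 + 1))
      = ∑' j : ℕ, r * (X (k + 1 + j) * r ^ (j + 1)) := by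
    refine tsum_congr fun j => ?_
    have hk : k + (j + 1) = k + 1 + j := by omega
    rw [hk, pow_succ]; ring
  rw [h2, tsum_mul_left]
  simp only [Nat.add_zero, pow_one]
  ring

lemma auxS_le {r : ℝ} {X : ℕ → ℝ} (hr0 : 0 ≤ r) (hr1 : r < 1)
    (hX1 : ∀ i, |X i| ≤ 1) (hu : ∀ i, X i ≤ 1) (k : ℕ) :
    auxS r X k ≤ r * (1 - r)⁻¹ := by
  rw [← geom_tsum hr0 hr1]
  refine Summable.tsum_le_tsum (fun j => ?_) (auxS_summable hr0 hr1 hX1 k) (geom_summable hr0 hr1)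
  calc X (k + j) * r ^ (j + 1) ≤ 1 * r ^ (j + 1) :=
        mul_le_mul_of_nonneg_right (hu _) (pow_nonneg hr0 _)
    _ = r ^ (j + 1) := one_mul _

lemma auxS_ge {r : ℝ} {X : ℕ → ℝ} (hr0 : 0 ≤ r) (hr1 : r < 1)
    (hX1 : ∀ i, |X i| ≤ 1) (c : ℝ) (hc : ∀ i, c ≤ X i) (k : ℕ) :
    c * (r * (1 - r)⁻¹) ≤ auxS r X k := by
  have h : (∑' j : ℕ, c * r ^ (j + 1)) = c * (r * (1 - r)⁻¹) := by
    rw [tsum_mul_left, geom_tsum hr0 hr1]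
  rw [← h]
  exact Summable.tsum_le_tsum (fun j => mul_le_mul_of_nonneg_right (hc _) (pow_nonneg hr0 _))
    ((geom_summable hr0 hr1).mul_left c) (auxS_summable hr0 hr1 hX1 k)

lemma auxS_gt {r : ℝ} {X : ℕ → ℝ} (hr0 : 0 < r) (hr1 : r < 1)
    (hX1 : ∀ i, |X i| ≤ 1) (c : ℝ) (hc : ∀ i, c ≤ X i) (k j0 : ℕ)
    (hj0 : c < X (k + j0)) :
    c * (r * (1 - r)⁻¹) < auxS r X k := by
  have h : (∑' j : ℕ, c * r ^ (j + 1)) = c * (r * (1 - r)⁻¹) := by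
    rw [tsum_mul_left, geom_tsum hr0.le hr1]
  rw [← h]
  exact Summable.tsum_lt_tsum (f := fun j : ℕ => c * r ^ (j + 1)) (i := j0)
    (fun j => mul_le_mul_of_nonneg_right (hc _) (pow_nonneg hr0.le _))
    (mul_lt_mul_of_pos_right hj0 (pow_pos hr0 _))
    ((geom_summable hr0.le hr1).mul_left c) (auxS_summable hr0.le hr1 hX1 k)

theorem stmt14 (φ : ℝ) (hφ : φ = (1 + Real.sqrt 5) / 2)
    (DL TL : ℝ → ℝ)
    (hDL : ∀ x, DL x =
      if x ≤ -(1 / φ ^ 2) then -φ else if x ≤ 0 then -φ + 1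
        else if x ≤ 1 / φ ^ 3 then 0 else 1)
    (hTL : ∀ x, TL x = φ ^ 2 * x - DL x)
    (X : ℕ → ℝ) (hX : ∀ i, X i = -φ + 1 ∨ X i = 0 ∨ X i = 1) :
    (∃ x ∈ Set.Ioc (-(1 / φ ^ 2)) (1 / φ), ∀ k, DL (TL^[k] x) = X k) ↔
      ((¬ ∃ i, X i = 0 ∧ X (i + 1) = -φ + 1) ∧
        (¬ ∃ i, ∀ j, i ≤ j → X j = -φ + 1) ∧
        (¬ ∃ i, ∀ j, i ≤ j → X j = 0)) := by
  classical
  have h5 : Real.sqrt 5 ^ 2 = 5 := Real.sq_sqrt (by norm_num)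
  have h5nn : 0 ≤ Real.sqrt 5 := Real.sqrt_nonneg 5
  have h5a : 2 < Real.sqrt 5 := by nlinarith
  have h5b : Real.sqrt 5 < 3 := by nlinarith
  have hφ1 : (3 : ℝ) / 2 < φ := by rw [hφ]; linarith
  have hφ3 : φ < 2 := by rw [hφ]; linarith
  have hφ2 : φ ^ 2 = φ + 1 := by rw [hφ]; linear_combination h5 / 4
  have hφ0 : 0 < φ := by linarith
  have hφ11 : (1 : ℝ) < φ := by linarith
  -- numeric identities
  have e1 : 1 / φ = φ - 1 := by
    rw [div_eq_iff (ne_of_gt hφ0)]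
    linear_combination (-1 : ℝ) * hφ2
  have e2 : -(1 / φ ^ 2) = φ - 2 := by
    rw [neg_eq_iff_eq_neg, div_eq_iff (by positivity : φ ^ 2 ≠ 0)]
    linear_combination (φ - 1) * hφ2
  have e3 : 1 / φ ^ 3 = 2 * φ - 3 := by
    rw [div_eq_iff (by positivity : φ ^ 3 ≠ 0)]
    linear_combination (-(2 * φ ^ 2) + φ - 1) * hφ2
  -- digit interval facts from DL
  have hDB : ∀ y : ℝ, DL y = -φ + 1 → φ - 2 < y ∧ y ≤ 0 := by
    intro y h
    rw [hDL y] at h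
    constructor
    · by_contra hy
      push_neg at hy
      rw [if_pos (by rw [e2]; linarith)] at h
      linarith
    · by_contra hy
      push_neg at hy
      rw [if_neg (by rw [e2]; exact not_le.mpr (by linarith)), if_neg (not_le.mpr hy)] at h
      split_ifs at h <;> linarith
  have hDC : ∀ y : ℝ, DL y = 0 → 0 < y ∧ y ≤ 2 * φ - 3 := by
    intro y h
    rw [hDL y] at h
    constructor
    · by_contra hy
      push_neg at hy
      by_cases h1 : y ≤ -(1 / φ ^ 2)
      · rw [if_pos h1] at h; linarith
      · rw [if_neg h1, if_pos hy] at h; linarith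
    · by_contra hy
      push_neg at hy
      rw [if_neg (by rw [e2]; exact not_le.mpr (by linarith)),
        if_neg (not_le.mpr (by linarith)),
        if_neg (by rw [e3]; exact not_le.mpr hy)] at h
      linarith
  have hDD : ∀ y : ℝ, DL y = 1 → 2 * φ - 3 < y := by
    intro y h
    rw [hDL y] at h
    by_contra hy
    push_neg at hy
    by_cases h1 : y ≤ -(1 / φ ^ 2)
    · rw [if_pos h1] at h; linarith
    · by_cases h2 : y ≤ 0
      · rw [if_neg h1, if_pos h2] at h; linarith
      · rw [if_neg h1, if_neg h2, if_pos (by rw [e3]; exact hy)] at h; linarith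
  constructor
  · -- forward direction
    rintro ⟨x, hx, hd⟩
    rw [Set.mem_Ioc, e2, e1] at hx
    have key : ∀ k, φ - 2 < TL^[k] x ∧ TL^[k] x ≤ φ - 1 := by
      intro k
      induction k with
      | zero => simpa using hx
      | succ k ih =>
        rw [Function.iterate_succ_apply', hTL, hd k, hφ2]
        rcases hX k with hk | hk | hk
        · have h := hDB (TL^[k] x) (by rw [hd k, hk])
          rw [hk]
          have hqB : (φ + 1) * (φ - 2) = -1 := by linear_combination hφ2
          constructor
          · linarith [mul_lt_mul_of_pos_left h.1 (show (0:ℝ) < φ + 1 by linarith), hqB]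
          · linarith [mul_le_mul_of_nonneg_left h.2 (show (0:ℝ) ≤ φ + 1 by linarith)]
        · have h := hDC (TL^[k] x) (by rw [hd k, hk])
          rw [hk]
          have hqC : (φ + 1) * (2 * φ - 3) = φ - 1 := by linear_combination 2 * hφ2
          constructor
          · linarith [mul_pos (show (0:ℝ) < φ + 1 by linarith) h.1]
          · linarith [mul_le_mul_of_nonneg_left h.2 (show (0:ℝ) ≤ φ + 1 by linarith), hqC]
        · have h := hDD (TL^[k] x) (by rw [hd k, hk])
          rw [hk]
          have hqC : (φ + 1) * (2 * φ - 3) = φ - 1 := by linear_combination 2 * hφ2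
          have hqD : (φ + 1) * (φ - 1) = φ := by linear_combination hφ2
          constructor
          · linarith [mul_lt_mul_of_pos_left h (show (0:ℝ) < φ + 1 by linarith), hqC]
          · linarith [mul_le_mul_of_nonneg_left ih.2 (show (0:ℝ) ≤ φ + 1 by linarith), hqD]
    refine ⟨?_, ?_, ?_⟩
    · rintro ⟨i, h0, hB⟩
      have h1 := hDC (TL^[i] x) (by rw [hd i, h0])
      have h2 := hDB (TL^[i + 1] x) (by rw [hd (i + 1), hB])
      rw [Function.iterate_succ_apply', hTL, hd i, h0] at h2
      linarith [mul_pos (show (0:ℝ) < φ ^ 2 by positivity) h1.1, h2.2]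
    · rintro ⟨i, hall⟩
      have hBk : ∀ k, TL^[i + k] x ≤ 0 := fun k =>
        (hDB (TL^[i + k] x) (by rw [hd (i + k), hall (i + k) (by omega)])).2
      have grow : ∀ k, TL^[i + k] x - (φ - 2) = (φ + 1) ^ k * (TL^[i] x - (φ - 2)) := by
        intro k
        induction k with
        | zero => simp
        | succ k ih =>
          rw [show i + (k + 1) = (i + k) + 1 from by omega, Function.iterate_succ_apply',
            hTL, hd (i + k), hall (i + k) (by omega), pow_succ]
          linear_combination (φ + 1) * ih + (TL^[i + k] x + 1) * hφ2
      have hc : 0 < TL^[i] x - (φ - 2) := by linarith [(key i).1]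
      obtain ⟨k, hk⟩ := pow_unbounded_of_one_lt ((2 - φ) / (TL^[i] x - (φ - 2)))
        (show (1 : ℝ) < φ + 1 by linarith)
      rw [div_lt_iff₀ hc] at hk
      linarith [grow k, hBk k]
    · rintro ⟨i, hall⟩
      have hCk : ∀ k, 0 < TL^[i + k] x ∧ TL^[i + k] x ≤ 2 * φ - 3 := fun k =>
        hDC (TL^[i + k] x) (by rw [hd (i + k), hall (i + k) (by omega)])
      have grow : ∀ k, TL^[i + k] x = (φ + 1) ^ k * TL^[i] x := by
        intro k
        induction k with
        | zero => simp
        | succ k ih =>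
          rw [show i + (k + 1) = (i + k) + 1 from by omega, Function.iterate_succ_apply',
            hTL, hd (i + k), hall (i + k) (by omega), pow_succ]
          linear_combination (φ + 1) * ih + TL^[i + k] x * hφ2
      have hc : 0 < TL^[i] x := by
        have := (hCk 0).1
        simpa using this
      obtain ⟨k, hk⟩ := pow_unbounded_of_one_lt ((2 * φ - 3) / TL^[i] x)
        (show (1 : ℝ) < φ + 1 by linarith)
      rw [div_lt_iff₀ hc] at hk
      linarith [grow k, (hCk k).2]
  · -- reverse direction
    rintro ⟨hCB, hB, hC⟩
    push_neg at hCB hB hC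
    set r : ℝ := (φ + 1)⁻¹ with hrdef
    have hr0 : 0 < r := by positivity
    have hrr : (φ + 1) * r = 1 := mul_inv_cancel₀ (by linarith)
    have hrval : r = 2 - φ := by
      have h2 : 1 / φ ^ 2 = 2 - φ := by linarith [e2]
      rw [hrdef, ← hφ2, inv_eq_one_div, h2]
    have hr1 : r < 1 := by rw [hrval]; linarith
    have hX1 : ∀ i, |X i| ≤ 1 := by
      intro i
      rcases hX i with h | h | h <;> rw [h, abs_le] <;> constructor <;> linarith
    have hlo : ∀ i, -φ + 1 ≤ X i := by
      intro i; rcases hX i with h | h | h <;> rw [h] <;> linarith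
    have hup : ∀ i, X i ≤ 1 := by
      intro i; rcases hX i with h | h | h <;> rw [h] <;> linarith
    have hgeo : r * (1 - r)⁻¹ = φ - 1 := by
      rw [hrval, show (1 : ℝ) - (2 - φ) = φ - 1 from by ring,
        mul_inv_eq_iff_eq_mul₀ (by intro h; rw [sub_eq_zero] at h; linarith)]
      linear_combination (-1 : ℝ) * hφ2
    have Sup : ∀ k, auxS r X k ≤ φ - 1 := by
      intro k
      have := auxS_le hr0.le hr1 hX1 hup k
      rwa [hgeo] at this
    have Slo : ∀ k, φ - 2 ≤ auxS r X k := by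
      intro k
      have := auxS_ge hr0.le hr1 hX1 (-φ + 1) hlo k
      rw [hgeo] at this
      have hq : (-φ + 1) * (φ - 1) = φ - 2 := by linear_combination (-1 : ℝ) * hφ2
      linarith [this, hq]
    have Sstrict : ∀ k, φ - 2 < auxS r X k := by
      intro k
      obtain ⟨j, hjk, hjB⟩ := hB k
      have hjX : -φ + 1 < X j := by
        rcases hX j with h | h | h
        · exact absurd h hjB
        · rw [h]; linarith
        · rw [h]; linarith
      have := auxS_gt hr0 hr1 hX1 (-φ + 1) hlo k (j - k)
        (by rw [show k + (j - k) = j from by omega]; exact hjX)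
      rw [hgeo] at this
      have hq : (-φ + 1) * (φ - 1) = φ - 2 := by linear_combination (-1 : ℝ) * hφ2
      linarith [this, hq]
    have Srec : ∀ k, auxS r X k = (2 - φ) * (X k + auxS r X (k + 1)) := by
      intro k
      rw [← hrval]
      exact auxS_rec hr0.le hr1 hX1 k
    have Spos : ∀ d k, X (k + d) = 1 → (∀ i, i < d → X (k + i) = 0) → 0 < auxS r X k := by
      intro d
      induction d with
      | zero =>
        intro k h1 _
        rw [Nat.add_zero] at h1
        rw [Srec k, h1]
        have := Slo (k + 1)
        exact mul_pos (by linarith) (by linarith)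
      | succ d ih =>
        intro k h1 h0
        have hk0 : X k = 0 := by
          have := h0 0 (by omega)
          rwa [Nat.add_zero] at this
        have hpos := ih (k + 1) (by rw [show k + 1 + d = k + (d + 1) from by omega]; exact h1)
          (fun i hi => by
            rw [show k + 1 + i = k + (i + 1) from by omega]
            exact h0 (i + 1) (by omega))
        rw [Srec k, hk0]
        exact mul_pos (by linarith) (by linarith)
    have digit : ∀ k,
        (X k = -φ + 1 → φ - 2 < auxS r X k ∧ auxS r X k ≤ 0) ∧
        (X k = 0 → 0 < auxS r X k ∧ auxS r X k ≤ 2 * φ - 3) ∧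
        (X k = 1 → 2 * φ - 3 < auxS r X k ∧ auxS r X k ≤ φ - 1) := by
      intro k
      refine ⟨fun hk => ⟨Sstrict k, ?_⟩, fun hk => ⟨?_, ?_⟩, fun hk => ⟨?_, Sup k⟩⟩
      · rw [Srec k, hk]
        have h := Sup (k + 1)
        linarith [mul_le_mul_of_nonneg_left (show -φ + 1 + auxS r X (k + 1) ≤ 0 from by
          linarith) (show (0:ℝ) ≤ 2 - φ from by linarith)]
      · -- X k = 0 : positivity
        have hex : ∃ n, X (k + 1 + n) ≠ 0 := by
          obtain ⟨j', hj'k, hj'C⟩ := hC (k + 1)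
          exact ⟨j' - (k + 1), by rw [show k + 1 + (j' - (k + 1)) = j' from by omega]; exact hj'C⟩
        set m := Nat.find hex with hm
        have hmne : X (k + 1 + m) ≠ 0 := Nat.find_spec hex
        have hmin : ∀ i, i < m → X (k + 1 + i) = 0 := fun i hi =>
          not_not.mp (Nat.find_min hex hi)
        have hprev : X (k + m) = 0 := by
          rcases Nat.eq_zero_or_pos m with h | h
          · rw [h, Nat.add_zero]; exact hk
          · have := hmin (m - 1) (by omega)
            rwa [show k + 1 + (m - 1) = k + m from by omega] at this
        have hmD : X (k + 1 + m) = 1 := by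
          rcases hX (k + 1 + m) with h | h | h
          · exact absurd (by rwa [show k + m + 1 = k + 1 + m from by omega]) (hCB (k + m) hprev)
          · exact absurd h hmne
          · exact h
        exact Spos (m + 1) k (by rwa [show k + (m + 1) = k + 1 + m from by omega])
          (fun i hi => by
            rcases Nat.eq_zero_or_pos i with h | h
            · rw [h, Nat.add_zero]; exact hk
            · have := hmin (i - 1) (by omega)
              rwa [show k + 1 + (i - 1) = k + i from by omega] at this)
      · rw [Srec k, hk]
        have h := Sup (k + 1)
        have hq2 : (2 - φ) * (φ - 1) = 2 * φ - 3 := by linear_combination (-1 : ℝ) * hφ2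
        linarith [mul_le_mul_of_nonneg_left h (show (0:ℝ) ≤ 2 - φ from by linarith), hq2]
      · rw [Srec k, hk]
        have h := Sstrict (k + 1)
        have hq2 : (2 - φ) * (φ - 1) = 2 * φ - 3 := by linear_combination (-1 : ℝ) * hφ2
        linarith [mul_lt_mul_of_pos_left h (show (0:ℝ) < 2 - φ from by linarith), hq2]
    have hDLeval : ∀ k, DL (auxS r X k) = X k := by
      intro k
      rcases hX k with hk | hk | hk
      · obtain ⟨h1, h2⟩ := (digit k).1 hk
        rw [hDL, hk, if_neg (by rw [e2]; exact not_le.mpr h1), if_pos h2]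
      · obtain ⟨h1, h2⟩ := (digit k).2.1 hk
        rw [hDL, hk, if_neg (by rw [e2]; exact not_le.mpr (by linarith)),
          if_neg (not_le.mpr h1), if_pos (by rw [e3]; exact h2)]
      · obtain ⟨h1, h2⟩ := (digit k).2.2 hk
        have h30 : 0 < 2 * φ - 3 := by linarith
        rw [hDL, hk, if_neg (by rw [e2]; exact not_le.mpr (by linarith)),
          if_neg (not_le.mpr (by linarith)), if_neg (by rw [e3]; exact not_le.mpr h1)]
    have iter : ∀ k, TL^[k] (auxS r X 0) = auxS r X k := by
      intro k
      induction k with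
      | zero => simp
      | succ k ih =>
        rw [Function.iterate_succ_apply', ih, hTL, hDLeval k, hφ2, Srec k]
        linear_combination (-(X k + auxS r X (k + 1))) * hφ2
    refine ⟨auxS r X 0, ?_, fun k => by rw [iter k, hDLeval k]⟩
    rw [Set.mem_Ioc, e2, e1]
    exact ⟨Sstrict 0, Sup 0⟩
end

section
/- Let φ = (1+√5)/2. The only points x ∈ [−1, 1/φ] for which R_{−φ,{0,1}}(x) is a singleton (i.e., x has a unique (−φ)-representation over the alphabet {0,1}) are x = −1 and x = 1/φ. -/
namespace S15

def dig (t : ℕ → ℝ) : Prop := ∀ i, t i = 0 ∨ t i = 1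
noncomputable def val (a : ℝ) (t : ℕ → ℝ) : ℝ := ∑' i : ℕ, t i * (-a) ^ (i + 1)
def shf (t : ℕ → ℝ) (n : ℕ) : ℕ → ℝ := fun j => t (j + n)

variable {a : ℝ} {t : ℕ → ℝ}

lemma shf_zero : shf t 0 = t := funext fun j => by simp [shf]
lemma shf_succ (n : ℕ) : (fun i => shf t n (i+1)) = shf t (n+1) :=
  funext fun j => congrArg t (by omega)
lemma shf_apply_zero (n : ℕ) : shf t n 0 = t n := by simp [shf]
lemma dig_shf (ht : dig t) (n : ℕ) : dig (shf t n) := fun j => ht _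

lemma dig_nonneg (ht : dig t) (i : ℕ) : 0 ≤ t i := by rcases ht i with h | h <;> simp [h]
lemma dig_le_one (ht : dig t) (i : ℕ) : t i ≤ 1 := by rcases ht i with h | h <;> simp [h]

lemma summable_aux (ha0 : 0 < a) (ha1 : a < 1) (ht : dig t) :
    Summable (fun i : ℕ => t i * (-a) ^ (i + 1)) := by
  apply Summable.of_norm_bounded (g := fun i : ℕ => a ^ i)
  · exact summable_geometric_of_lt_one ha0.le ha1
  · intro i
    rw [Real.norm_eq_abs, abs_mul, abs_pow, abs_neg, abs_of_pos ha0]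
    calc |t i| * a ^ (i+1) ≤ 1 * a ^ (i + 1) := by
          apply mul_le_mul_of_nonneg_right _ (pow_nonneg ha0.le _)
          rw [abs_le]; exact ⟨by linarith [dig_nonneg ht i], dig_le_one ht i⟩
      _ = a * a ^ i := by ring
      _ ≤ 1 * a ^ i := mul_le_mul_of_nonneg_right ha1.le (pow_nonneg ha0.le _)
      _ = a ^ i := one_mul _

private lemma summable_ite (ha0 : 0 < a) (ha1 : a < 1) (c : ℕ → ℝ)
    (hc : ∀ i, c i = 0 ∨ |c i| = a ^ (i+1)) : Summable c := by
  apply Summable.of_norm_bounded (g := fun i : ℕ => a ^ i)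
  · exact summable_geometric_of_lt_one ha0.le ha1
  · intro i
    rw [Real.norm_eq_abs]
    rcases hc i with h | h
    · rw [h]; simp [pow_nonneg ha0.le]
    · rw [h]
      calc a ^ (i+1) = a * a ^ i := by ring
        _ ≤ 1 * a ^ i := mul_le_mul_of_nonneg_right ha1.le (pow_nonneg ha0.le _)
        _ = a ^ i := one_mul _

lemma val_mem (ha0 : 0 < a) (ha1 : a < 1) (haa : a^2 = 1 - a) (ht : dig t) :
    val a t ∈ Set.Icc (-1 : ℝ) a := by
  have hgeo : Summable (fun k : ℕ => a * (a^2) ^ k) :=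
    Summable.mul_left _ (summable_geometric_of_lt_one (by positivity) (by nlinarith))
  have hgeoval : ∑' k : ℕ, a * (a^2) ^ k = 1 := by
    rw [tsum_mul_left, tsum_geometric_of_lt_one (by positivity) (by nlinarith), haa]
    rw [sub_sub_cancel, mul_inv_cancel₀ ha0.ne']
  have hs := summable_aux ha0 ha1 ht
  constructor
  · -- lower bound
    set f : ℕ → ℝ := fun i => if Even i then -(a ^ (i+1)) else 0 with hf
    have hfs : Summable f := by
      apply summable_ite ha0 ha1
      intro i
      by_cases h : Even i <;> simp [hf, h, abs_of_pos, pow_pos ha0]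
    have hfe : Summable (fun k => f (2*k)) := by
      have : (fun k => f (2*k)) = fun k => -(a * (a^2)^k) := by
        funext k
        simp only [hf, even_two_mul k, if_pos]
        rw [show (a:ℝ)^(2*k+1) = a * (a^2)^k by rw [← pow_mul]; ring]
      rw [this]; exact hgeo.neg
    have hfo : Summable (fun k => f (2*k+1)) := by
      have : (fun k => f (2*k+1)) = fun _ => (0:ℝ) := by
        funext k; simp [hf, Nat.even_add_one, Nat.not_even_iff_odd, parity_simps]
      rw [this]; exact summable_zero
    have hsumf : ∑' i, f i = -1 := by
      rw [← tsum_even_add_odd hfe hfo]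
      have h1 : ∑' k : ℕ, f (2*k) = -1 := by
        have : (fun k => f (2*k)) = fun k => -(a * (a^2)^k) := by
          funext k
          simp only [hf, even_two_mul k, if_pos]
          rw [show (a:ℝ)^(2*k+1) = a * (a^2)^k by rw [← pow_mul]; ring]
        rw [this, tsum_neg, hgeoval]
      have h2 : ∑' k : ℕ, f (2*k+1) = 0 := by
        have : (fun k => f (2*k+1)) = fun _ => (0:ℝ) := by
          funext k; simp [hf, Nat.even_add_one, Nat.not_even_iff_odd, parity_simps]
        rw [this, tsum_zero]
      rw [h1, h2]; ring
    have hle : ∀ i, f i ≤ t i * (-a) ^ (i+1) := by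
      intro i
      by_cases h : Even i
      · have hodd : Odd (i+1) := Even.add_one h
        rw [hf]; simp only [if_pos h]
        rw [hodd.neg_pow]
        have hp : (0:ℝ) ≤ a ^ (i+1) := pow_nonneg ha0.le _
        nlinarith [dig_le_one ht i, dig_nonneg ht i]
      · have heven : Even (i+1) := (Nat.not_even_iff_odd.mp h).add_one
        rw [hf]; simp only [if_neg h]
        rw [heven.neg_pow]
        have hp : (0:ℝ) ≤ a ^ (i+1) := pow_nonneg ha0.le _
        nlinarith [dig_nonneg ht i]
    calc (-1:ℝ) = ∑' i, f i := hsumf.symm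
      _ ≤ val a t := Summable.tsum_le_tsum hle hfs hs
  · -- upper bound
    set g : ℕ → ℝ := fun i => if Even i then 0 else a ^ (i+1) with hg
    have hgs : Summable g := by
      apply summable_ite ha0 ha1
      intro i
      by_cases h : Even i <;> simp [hg, h, abs_of_pos, pow_pos ha0]
    have hge : Summable (fun k => g (2*k)) := by
      have : (fun k => g (2*k)) = fun _ => (0:ℝ) := by
        funext k; simp [hg, even_two_mul k]
      rw [this]; exact summable_zero
    have hgo : Summable (fun k => g (2*k+1)) := by
      have : (fun k => g (2*k+1)) = fun k => a^2 * (a^2)^k := by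
        funext k
        have : ¬ Even (2*k+1) := by simp [Nat.even_add_one, parity_simps]
        simp only [hg, if_neg this]
        rw [show 2*k+1+1 = 2*(k+1) by ring, pow_mul]
        ring
      rw [this]
      exact Summable.mul_left _ (summable_geometric_of_lt_one (by positivity) (by nlinarith))
    have hsumg : ∑' i, g i = a := by
      rw [← tsum_even_add_odd hge hgo]
      have h1 : ∑' k : ℕ, g (2*k) = 0 := by
        have : (fun k => g (2*k)) = fun _ => (0:ℝ) := by
          funext k; simp [hg, even_two_mul k]
        rw [this, tsum_zero]
      have h2 : ∑' k : ℕ, g (2*k+1) = a := by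
        have he : (fun k => g (2*k+1)) = fun k => a * (a * (a^2)^k) := by
          funext k
          have : ¬ Even (2*k+1) := by simp [Nat.even_add_one, parity_simps]
          simp only [hg, if_neg this]
          rw [show 2*k+1+1 = 2*(k+1) by ring, pow_mul]
          ring
        rw [he, tsum_mul_left, hgeoval, mul_one]
      rw [h1, h2]; ring
    have hle : ∀ i, t i * (-a) ^ (i+1) ≤ g i := by
      intro i
      by_cases h : Even i
      · have hodd : Odd (i+1) := Even.add_one h
        rw [hg]; simp only [if_pos h]
        rw [hodd.neg_pow]
        have hp : (0:ℝ) ≤ a ^ (i+1) := pow_nonneg ha0.le _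
        nlinarith [dig_nonneg ht i]
      · have heven : Even (i+1) := (Nat.not_even_iff_odd.mp h).add_one
        rw [hg]; simp only [if_neg h]
        rw [heven.neg_pow]
        have hp : (0:ℝ) ≤ a ^ (i+1) := pow_nonneg ha0.le _
        nlinarith [dig_le_one ht i, dig_nonneg ht i]
    calc val a t ≤ ∑' i, g i := Summable.tsum_le_tsum hle hs hgs
      _ = a := hsumg


lemma val_succ (ha0 : 0 < a) (ha1 : a < 1) (ht : dig t) :
    val a t = -a * t 0 + (-a) * val a (fun i => t (i+1)) := by
  rw [val, Summable.tsum_eq_zero_add (summable_aux ha0 ha1 ht)]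
  congr 1
  · ring
  · rw [val, ← tsum_mul_left]
    congr 1; funext b; ring

/-- recurrence for shifted value -/
lemma val_shift (ha0 : 0 < a) (ha1 : a < 1) (haa : a^2 = 1 - a) (ht : dig t) :
    val a (fun i => t (i+1)) = -(1+a) * val a t - t 0 := by
  have h := val_succ ha0 ha1 ht
  have hne : a ≠ 0 := ha0.ne'
  have key : a * (1 + a) = 1 := by nlinarith
  linear_combination (1+a) * h - (t 0 + val a fun i => t (i + 1)) * key

lemma val_partial (ha0 : 0 < a) (ha1 : a < 1) (ht : dig t) (n : ℕ) :
    val a t = ∑ i ∈ Finset.range n, t i * (-a) ^ (i+1)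
      + (-a)^n * val a (fun j => t (j+n)) := by
  rw [val, ← Summable.sum_add_tsum_nat_add n (summable_aux ha0 ha1 ht)]
  congr 1
  rw [val, ← tsum_mul_left]
  congr 1; funext j
  rw [show j + n + 1 = n + (j+1) by ring, pow_add]
  ring

lemma dig_splice {s u : ℕ → ℝ} (hs : dig s) (hu : dig u) (n : ℕ) :
    dig (fun j => if j < n then s j else u (j - n)) := by
  intro i
  by_cases h : i < n
  · simpa [h] using hs i
  · simpa [h] using hu (i - n)

lemma val_splice {s u : ℕ → ℝ} (ha0 : 0 < a) (ha1 : a < 1) (hs : dig s) (hu : dig u) (n : ℕ) :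
    val a (fun j => if j < n then s j else u (j - n))
      = ∑ i ∈ Finset.range n, s i * (-a) ^ (i+1) + (-a)^n * val a u := by
  rw [val_partial ha0 ha1 (dig_splice hs hu n) n]
  congr 1
  · apply Finset.sum_congr rfl
    intro i hi
    rw [if_pos (Finset.mem_range.mp hi)]
  · congr 1
    apply congrArg
    funext j
    rw [if_neg (by omega)]
    congr 1; omega

/-- greedy construction state -/
noncomputable def gw (a v : ℝ) : ℕ → ℝ
  | 0 => v
  | n+1 => if gw a v n ≤ 0 then -(1+a) * gw a v n - 1 else -(1+a) * gw a v n

noncomputable def gt (a v : ℝ) (n : ℕ) : ℝ := if gw a v n ≤ 0 then 1 else 0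

lemma gw_mem (ha0 : 0 < a) (ha1 : a < 1) (haa : a^2 = 1 - a) {v : ℝ}
    (hv : v ∈ Set.Icc (-1:ℝ) a) (n : ℕ) : gw a v n ∈ Set.Icc (-1:ℝ) a := by
  induction n with
  | zero => exact hv
  | succ n ih =>
    obtain ⟨h1, h2⟩ := ih
    by_cases h : gw a v n ≤ 0
    · simp only [gw, if_pos h]
      constructor <;> nlinarith
    · simp only [gw, if_neg h]
      push_neg at h
      constructor <;> nlinarith

lemma gw_partial (ha0 : 0 < a) (ha1 : a < 1) (haa : a^2 = 1 - a) (v : ℝ) (n : ℕ) :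
    v = ∑ i ∈ Finset.range n, gt a v i * (-a) ^ (i+1) + (-a)^n * gw a v n := by
  induction n with
  | zero => simp [gw]
  | succ n ih =>
    rw [Finset.sum_range_succ]
    have key : (-a)^n * gw a v n
        = gt a v n * (-a)^(n+1) + (-a)^(n+1) * gw a v (n+1) := by
      by_cases h : gw a v n ≤ 0
      · simp only [gt, gw, if_pos h]
        linear_combination (-((-a)^n * gw a v n)) * haa
      · simp only [gt, gw, if_neg h]
        linear_combination (-((-a)^n * gw a v n)) * haa
    linarith [ih, key]

lemma exists_rep (ha0 : 0 < a) (ha1 : a < 1) (haa : a^2 = 1 - a) {v : ℝ}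
    (hv : v ∈ Set.Icc (-1:ℝ) a) : ∃ u : ℕ → ℝ, dig u ∧ val a u = v := by
  refine ⟨gt a v, ?_, ?_⟩
  · intro i; by_cases h : gw a v i ≤ 0 <;> simp [gt, h]
  · have hdig : dig (gt a v) := by
      intro i; by_cases h : gw a v i ≤ 0 <;> simp [gt, h]
    have hsum := summable_aux ha0 ha1 hdig
    have h1 : Filter.Tendsto (fun n => ∑ i ∈ Finset.range n, gt a v i * (-a) ^ (i+1))
        Filter.atTop (nhds (val a (gt a v))) := hsum.hasSum.tendsto_sum_nat
    have h2 : Filter.Tendsto (fun n => ∑ i ∈ Finset.range n, gt a v i * (-a) ^ (i+1))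
        Filter.atTop (nhds v) := by
      have heq : (fun n => ∑ i ∈ Finset.range n, gt a v i * (-a) ^ (i+1))
          = fun n => v - (-a)^n * gw a v n := by
        funext n; linarith [gw_partial ha0 ha1 haa v n]
      rw [heq]
      have h3 : Filter.Tendsto (fun n : ℕ => (-a)^n * gw a v n) Filter.atTop (nhds 0) := by
        apply squeeze_zero_norm (a := fun n => a ^ n)
        · intro n
          rw [norm_mul, norm_pow, Real.norm_eq_abs, Real.norm_eq_abs, abs_neg,
            abs_of_pos ha0]
          obtain ⟨hl, hr⟩ := gw_mem ha0 ha1 haa hv n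
          calc a ^ n * |gw a v n| ≤ a ^ n * 1 := by
                apply mul_le_mul_of_nonneg_left _ (pow_nonneg ha0.le _)
                rw [abs_le]; constructor <;> linarith
            _ = a ^ n := mul_one _
        · exact tendsto_pow_atTop_nhds_zero_of_lt_one ha0.le ha1
      have := Filter.Tendsto.sub (tendsto_const_nhds (x := v)) h3
      simpa using this
    exact tendsto_nhds_unique h1 h2


lemma key1 (haa : a^2 = 1 - a) : (1+a) * a^2 = a := by linear_combination a * haa
lemma key2 (haa : a^2 = 1 - a) : (1+a) * a = 1 := by linear_combination haa

lemma w_succ (ha0 : 0 < a) (ha1 : a < 1) (haa : a^2 = 1 - a) (ht : dig t) (n : ℕ) :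
    val a (shf t (n+1)) = -(1+a) * val a (shf t n) - t n := by
  rw [← shf_succ n, val_shift ha0 ha1 haa (dig_shf ht n), shf_apply_zero]

lemma forced_zero (ha0 : 0 < a) (ha1 : a < 1) (haa : a^2 = 1 - a) (ht : dig t)
    (h : 0 < val a t) : t 0 = 0 := by
  rcases ht 0 with h0 | h0
  · exact h0
  exfalso
  have hw := val_shift ha0 ha1 haa ht
  obtain ⟨h1, h2⟩ := val_mem ha0 ha1 haa (fun i => ht (i+1))
  rw [h0] at hw
  nlinarith

lemma forced_one (ha0 : 0 < a) (ha1 : a < 1) (haa : a^2 = 1 - a) (ht : dig t)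
    (h : val a t < -a^2) : t 0 = 1 := by
  rcases ht 0 with h0 | h0
  swap; · exact h0
  exfalso
  have hw := val_shift ha0 ha1 haa ht
  obtain ⟨h1, h2⟩ := val_mem ha0 ha1 haa (fun i => ht (i+1))
  rw [h0] at hw
  have hgt : (0:ℝ) < 1 + a := by linarith
  nlinarith [key1 haa, mul_lt_mul_of_pos_left h hgt]

lemma forced_neg_one (ha0 : 0 < a) (ha1 : a < 1) (haa : a^2 = 1 - a) (ht : dig t)
    (h : val a t = -1) : t 0 = 1 ∧ val a (fun i => t (i+1)) = a := by
  have hw := val_shift ha0 ha1 haa ht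
  obtain ⟨h1, h2⟩ := val_mem ha0 ha1 haa (fun i => ht (i+1))
  rcases ht 0 with h0 | h0
  · exfalso; rw [h0, h] at hw; nlinarith
  · rw [h0, h] at hw
    exact ⟨h0, by linarith⟩

lemma forced_a (ha0 : 0 < a) (ha1 : a < 1) (haa : a^2 = 1 - a) (ht : dig t)
    (h : val a t = a) : t 0 = 0 ∧ val a (fun i => t (i+1)) = -1 := by
  have hw := val_shift ha0 ha1 haa ht
  obtain ⟨h1, h2⟩ := val_mem ha0 ha1 haa (fun i => ht (i+1))
  have hk := key2 haa
  rcases ht 0 with h0 | h0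
  · rw [h0, h] at hw
    exact ⟨h0, by nlinarith⟩
  · exfalso; rw [h0, h] at hw; nlinarith

lemma endpoint_neg (ha0 : 0 < a) (ha1 : a < 1) (haa : a^2 = 1 - a) (ht : dig t)
    (hv : val a t = -1) : t = fun i => if Even i then (1:ℝ) else 0 := by
  have H : ∀ n, val a (shf t n) = if Even n then (-1:ℝ) else a := by
    intro n
    induction n with
    | zero => simpa [shf_zero] using hv
    | succ n ih =>
      by_cases hn : Even n
      · rw [if_pos hn] at ih
        have h2 := (forced_neg_one ha0 ha1 haa (dig_shf ht n) ih).2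
        rw [shf_succ] at h2
        simp [Nat.even_add_one, hn, h2]
      · rw [if_neg hn] at ih
        have h2 := (forced_a ha0 ha1 haa (dig_shf ht n) ih).2
        rw [shf_succ] at h2
        simp [Nat.even_add_one, hn, h2]
  funext n
  have hn := H n
  by_cases h : Even n
  · rw [if_pos h] at hn ⊢
    have := (forced_neg_one ha0 ha1 haa (dig_shf ht n) hn).1
    rwa [shf_apply_zero] at this
  · rw [if_neg h] at hn ⊢
    have := (forced_a ha0 ha1 haa (dig_shf ht n) hn).1
    rwa [shf_apply_zero] at this

lemma endpoint_pos (ha0 : 0 < a) (ha1 : a < 1) (haa : a^2 = 1 - a) (ht : dig t)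
    (hv : val a t = a) : t = fun i => if Even i then (0:ℝ) else 1 := by
  have H : ∀ n, val a (shf t n) = if Even n then a else (-1:ℝ) := by
    intro n
    induction n with
    | zero => simpa [shf_zero] using hv
    | succ n ih =>
      by_cases hn : Even n
      · rw [if_pos hn] at ih
        have h2 := (forced_a ha0 ha1 haa (dig_shf ht n) ih).2
        rw [shf_succ] at h2
        simp [Nat.even_add_one, hn, h2]
      · rw [if_neg hn] at ih
        have h2 := (forced_neg_one ha0 ha1 haa (dig_shf ht n) ih).2
        rw [shf_succ] at h2
        simp [Nat.even_add_one, hn, h2]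
  funext n
  have hn := H n
  by_cases h : Even n
  · rw [if_pos h] at hn ⊢
    have := (forced_a ha0 ha1 haa (dig_shf ht n) hn).1
    rwa [shf_apply_zero] at this
  · rw [if_neg h] at hn ⊢
    have := (forced_neg_one ha0 ha1 haa (dig_shf ht n) hn).1
    rwa [shf_apply_zero] at this

lemma val_alt_neg (ha0 : 0 < a) (ha1 : a < 1) (haa : a^2 = 1 - a) :
    val a (fun i => if Even i then (1:ℝ) else 0) = -1 := by
  obtain ⟨u, hu, huv⟩ := exists_rep ha0 ha1 haa
    (Set.mem_Icc.mpr ⟨le_refl (-1:ℝ), by linarith⟩)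
  rw [← endpoint_neg ha0 ha1 haa hu huv]
  exact huv

lemma val_alt_pos (ha0 : 0 < a) (ha1 : a < 1) (haa : a^2 = 1 - a) :
    val a (fun i => if Even i then (0:ℝ) else 1) = a := by
  obtain ⟨u, hu, huv⟩ := exists_rep ha0 ha1 haa
    (Set.mem_Icc.mpr ⟨by linarith, le_refl a⟩)
  rw [← endpoint_pos ha0 ha1 haa hu huv]
  exact huv

lemma main_forward (ha0 : 0 < a) (ha1 : a < 1) (haa : a^2 = 1 - a) {x : ℝ} {s : ℕ → ℝ}
    (hset : {t : ℕ → ℝ | dig t ∧ x = val a t} = {s}) : x = -1 ∨ x = a := by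
  have hsmem : dig s ∧ x = val a s := by
    have : s ∈ {t : ℕ → ℝ | dig t ∧ x = val a t} := hset ▸ rfl
    exact this
  obtain ⟨hds, hxs⟩ := hsmem
  by_contra hcon
  push_neg at hcon
  obtain ⟨hne1, hnea⟩ := hcon
  set w : ℕ → ℝ := fun n => val a (shf s n) with hwdef
  have huniq : ∀ n (u : ℕ → ℝ), dig u → val a u = w n → u = shf s n := by
    intro n u hu hval
    have hr : (fun j => if j < n then s j else u (j - n)) ∈
        {t : ℕ → ℝ | dig t ∧ x = val a t} := by
      refine ⟨dig_splice hds hu n, ?_⟩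
      rw [val_splice ha0 ha1 hds hu n, hval, hxs, val_partial ha0 ha1 hds n]
      rfl
    rw [hset] at hr
    have hr' : (fun j => if j < n then s j else u (j - n)) = s := hr
    funext j
    have := congrFun hr' (j + n)
    simp only [add_lt_iff_neg_left, if_neg (by omega : ¬ (j + n < n))] at this
    rw [show j + n - n = j by omega] at this
    rw [this]
    rfl
  have hmem : ∀ n, w n ∈ Set.Icc (-1:ℝ) a := fun n => val_mem ha0 ha1 haa (dig_shf hds n)
  have hrec : ∀ n, w (n+1) = -(1+a) * w n - s n := fun n => w_succ ha0 ha1 haa hds n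
  have hforb : ∀ n, ¬ (-a^2 ≤ w n ∧ w n ≤ 0) := by
    rintro n ⟨hl, hr⟩
    have hk1 := key1 haa
    have hk2 := key2 haa
    have hv0 : -(1+a) * w n ∈ Set.Icc (-1:ℝ) a := by
      constructor <;> nlinarith
    have hv1 : -(1+a) * w n - 1 ∈ Set.Icc (-1:ℝ) a := by
      constructor <;> nlinarith
    obtain ⟨u0, hu0d, hu0v⟩ := exists_rep ha0 ha1 haa hv0
    obtain ⟨u1, hu1d, hu1v⟩ := exists_rep ha0 ha1 haa hv1
    set c0 : ℕ → ℝ := fun i => if i = 0 then 0 else u0 (i-1) with hc0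
    set c1 : ℕ → ℝ := fun i => if i = 0 then 1 else u1 (i-1) with hc1
    have hc0d : dig c0 := by
      intro i; rcases i with _ | i
      · left; simp [hc0]
      · simpa [hc0] using hu0d i
    have hc1d : dig c1 := by
      intro i; rcases i with _ | i
      · right; simp [hc1]
      · simpa [hc1] using hu1d i
    have hsh0 : (fun i => c0 (i+1)) = u0 := funext fun i => by simp [hc0]
    have hsh1 : (fun i => c1 (i+1)) = u1 := funext fun i => by simp [hc1]
    have hv0' : val a c0 = w n := by
      rw [val_succ ha0 ha1 hc0d, hsh0, hu0v]
      have : c0 0 = 0 := by simp [hc0]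
      rw [this]; nlinarith
    have hv1' : val a c1 = w n := by
      rw [val_succ ha0 ha1 hc1d, hsh1, hu1v]
      have : c1 0 = 1 := by simp [hc1]
      rw [this]; nlinarith
    have e0 := huniq n c0 hc0d hv0'
    have e1 := huniq n c1 hc1d hv1'
    have : c0 0 = c1 0 := by rw [e0, e1]
    simp [hc0, hc1] at this
  -- find starting index m with 0 < w m < a
  have hx0 : w 0 = x := by rw [hwdef]; simp only [shf_zero]; exact hxs.symm
  obtain ⟨m, hm0, hma⟩ : ∃ m, 0 < w m ∧ w m < a := by
    rcases lt_or_ge 0 (w 0) with h | h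
    · exact ⟨0, h, lt_of_le_of_ne (hmem 0).2 (by rw [hx0]; exact hnea)⟩
    · have h1 : w 0 < -a^2 := by
        by_contra hcon
        push_neg at hcon
        exact hforb 0 ⟨hcon, h⟩
      have h2 : -1 < w 0 := lt_of_le_of_ne (hmem 0).1 (by rw [hx0]; exact fun hh => hne1 hh.symm)
      have h1' : val a s < -a^2 := by rw [← hxs, ← hx0]; exact h1
      have hs0 : s 0 = 1 := forced_one ha0 ha1 haa hds h1'
      have hw1 : w 1 = -(1+a) * w 0 - 1 := by rw [hrec 0, hs0]
      have hk1 := key1 haa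
      have hw1l : -a^2 < w 1 := by nlinarith
      have hw1a : w 1 < a := by nlinarith
      have hw1pos : 0 < w 1 := by
        by_contra hcon
        push_neg at hcon
        exact hforb 1 ⟨hw1l.le, hcon⟩
      exact ⟨1, hw1pos, hw1a⟩
  -- growth
  have hgrow : ∀ k, 0 < w (m + 2*k) ∧ a - w (m + 2*k) = ((1+a)^2)^k * (a - w m) := by
    intro k
    induction k with
    | zero => simpa using hm0
    | succ k ih =>
      obtain ⟨hpos, heq⟩ := ih
      have hk1 := key1 haa
      have hk2 := key2 haa
      have hua : w (m + 2*k) ≤ a := (hmem _).2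
      have hs0 : s (m + 2*k) = 0 := by
        rcases hds (m + 2*k) with h0 | h0
        · exact h0
        exfalso
        have := hrec (m + 2*k)
        rw [h0] at this
        have hb := (hmem (m + 2*k + 1)).1
        nlinarith
      have hw' : w (m + 2*k + 1) = -(1+a) * w (m + 2*k) := by
        rw [hrec (m + 2*k), hs0]; ring
      have hw'neg : w (m + 2*k + 1) < 0 := by nlinarith
      have hw'lt : w (m + 2*k + 1) < -a^2 := by
        by_contra hcon
        push_neg at hcon
        exact hforb (m + 2*k + 1) ⟨hcon, hw'neg.le⟩
      have hs1 : s (m + 2*k + 1) = 1 := by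
        rcases hds (m + 2*k + 1) with h0 | h0
        · exfalso
          have := hrec (m + 2*k + 1)
          rw [h0] at this
          have hb := (hmem (m + 2*k + 1 + 1)).2
          nlinarith
        · exact h0
      have hw'' : w (m + 2*k + 1 + 1) = (1+a)^2 * w (m + 2*k) - 1 := by
        rw [hrec (m + 2*k + 1), hs1, hw']; ring
      have hidx : m + 2*(k+1) = m + 2*k + 1 + 1 := by ring
      have hw''gt : -a^2 < w (m + 2*k + 1 + 1) := by
        have := hrec (m + 2*k + 1)
        rw [hs1] at this
        nlinarith
      have hw''pos : 0 < w (m + 2*k + 1 + 1) := by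
        by_contra hcon
        push_neg at hcon
        exact hforb (m + 2*k + 1 + 1) ⟨hw''gt.le, hcon⟩
      constructor
      · rw [hidx]; exact hw''pos
      · have hstep : a - ((1+a)^2 * w (m + 2*k) - 1) = (1+a)^2 * (a - w (m + 2*k)) := by
          nlinarith [haa, sq_nonneg a]
        rw [hidx, hw'']
        calc a - ((1+a)^2 * w (m + 2*k) - 1) = (1+a)^2 * (a - w (m + 2*k)) := hstep
          _ = (1+a)^2 * (((1+a)^2)^k * (a - w m)) := by rw [heq]
          _ = ((1+a)^2)^(k+1) * (a - w m) := by ring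
  -- contradiction
  obtain ⟨k, hk⟩ := pow_unbounded_of_one_lt (a / (a - w m)) (show (1:ℝ) < (1+a)^2 by nlinarith)
  have he : 0 < a - w m := by linarith
  have hklt : a < ((1+a)^2)^k * (a - w m) := by
    rw [div_lt_iff₀ he] at hk
    linarith
  obtain ⟨hp, hq⟩ := hgrow k
  linarith


end S15

theorem stmt15 (φ : ℝ) (hφ : φ = (1 + Real.sqrt 5) / 2)
    (x : ℝ) (hx : x ∈ Set.Icc (-1 : ℝ) (1 / φ)) :
    (∃ s : ℕ → ℝ,
        {t : ℕ → ℝ | (∀ i, t i = 0 ∨ t i = 1) ∧ x = ∑' i : ℕ, t i / (-φ) ^ (i + 1)} = {s}) ↔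
      (x = -1 ∨ x = 1 / φ) := by
  have h5 : Real.sqrt 5 ^ 2 = 5 := Real.sq_sqrt (by norm_num)
  have h5n : 0 ≤ Real.sqrt 5 := Real.sqrt_nonneg 5
  set a : ℝ := φ - 1 with ha
  have ha0 : 0 < a := by rw [ha, hφ]; nlinarith
  have ha1 : a < 1 := by rw [ha, hφ]; nlinarith
  have haa : a ^ 2 = 1 - a := by rw [ha, hφ]; linear_combination h5 / 4
  have hφa : φ = 1 + a := by rw [ha]; ring
  have hinv : 1 / φ = a := by
    rw [hφa, eq_comm, eq_div_iff (by linarith : (1:ℝ) + a ≠ 0)]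
    linear_combination haa
  have hneg : (-φ)⁻¹ = -a := by
    apply inv_eq_of_mul_eq_one_right
    rw [hφa]
    linear_combination haa
  have hsetrw : {t : ℕ → ℝ | (∀ i, t i = 0 ∨ t i = 1) ∧ x = ∑' i : ℕ, t i / (-φ) ^ (i + 1)}
      = {t : ℕ → ℝ | S15.dig t ∧ x = S15.val a t} := by
    ext t
    simp only [Set.mem_setOf_eq, S15.dig, S15.val]
    have htsum : (∑' i : ℕ, t i / (-φ) ^ (i + 1)) = ∑' i : ℕ, t i * (-a) ^ (i + 1) := by
      apply tsum_congr
      intro i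
      rw [div_eq_mul_inv, ← inv_pow, hneg]
    rw [htsum]
  rw [hsetrw]
  constructor
  · rintro ⟨s, hs⟩
    rcases S15.main_forward ha0 ha1 haa hs with h | h
    · exact Or.inl h
    · exact Or.inr (by rw [hinv]; exact h)
  · rintro (h | h)
    · refine ⟨fun i => if Even i then (1:ℝ) else 0, ?_⟩
      apply Set.eq_singleton_iff_unique_mem.mpr
      constructor
      · refine ⟨fun i => ?_, ?_⟩
        · by_cases hi : Even i <;> simp [hi]
        · rw [h, S15.val_alt_neg ha0 ha1 haa]
      · rintro t ⟨htd, htv⟩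
        exact S15.endpoint_neg ha0 ha1 haa htd (by rw [← htv, h])
    · refine ⟨fun i => if Even i then (0:ℝ) else 1, ?_⟩
      apply Set.eq_singleton_iff_unique_mem.mpr
      constructor
      · refine ⟨fun i => ?_, ?_⟩
        · by_cases hi : Even i <;> simp [hi]
        · rw [h, hinv, S15.val_alt_pos ha0 ha1 haa]
      · rintro t ⟨htd, htv⟩
        exact S15.endpoint_pos ha0 ha1 haa htd (by rw [← htv, h, hinv])
end

section
/- Let φ = (1+√5)/2. A sequence x₁x₂x₃… ∈ {0,1}^ℕ is the greedy (−φ)-representation of some x ∈ [−1, 0) if and only if all of the following hold: (i) for no k ≥ 1 does the sequence begin with the prefix 1^{2k}0, and for no k ≥ 1 does it begin with the prefix 0^{2k−1}1; (ii) it has no suffix 0^ω and no suffix 1^ω; (iii) it contains no factor 10^{2k}1 and no factor 01^{2k}0 for any k ≥ 1. -/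
noncomputable def gr : ℝ := (1 + Real.sqrt 5) / 2
lemma gr_def : gr = (1 + Real.sqrt 5) / 2 := rfl
lemma sqrt5_sq : Real.sqrt 5 ^ 2 = 5 := Real.sq_sqrt (by norm_num)
lemma sqrt5_gt : 2 < Real.sqrt 5 := by nlinarith [sqrt5_sq, Real.sqrt_nonneg 5]
lemma gr_gt_one : 1 < gr := by rw [gr_def]; nlinarith [sqrt5_gt]
lemma gr_pos : 0 < gr := lt_trans one_pos gr_gt_one
lemma gr_ne : gr ≠ 0 := ne_of_gt gr_pos
lemma gr_sq : gr ^ 2 = gr + 1 := by rw [gr_def]; nlinarith [sqrt5_sq]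
lemma u_pos : 0 < gr⁻¹ := inv_pos.mpr gr_pos
lemma u_lt_one : gr⁻¹ < 1 := by rw [inv_lt_one_iff₀]; right; exact gr_gt_one
lemma u_eq : gr⁻¹ = gr - 1 := inv_eq_of_mul_eq_one_right (by nlinarith [gr_sq])
lemma u_sq : gr⁻¹ ^ 2 = 1 - gr⁻¹ := by rw [u_eq]; nlinarith [gr_sq]

def Dig (r : ℕ → ℝ) : Prop := ∀ i, r i = 0 ∨ r i = 1

noncomputable def val (r : ℕ → ℝ) : ℝ := ∑' i, r i / (-gr) ^ (i + 1)

def sh (n : ℕ) (r : ℕ → ℝ) : ℕ → ℝ := fun i => r (n + i)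

lemma sh_sh (a b : ℕ) (r : ℕ → ℝ) : sh a (sh b r) = sh (b + a) r := by
  funext i; simp [sh]; ring_nf

lemma sh_zero (r : ℕ → ℝ) : sh 0 r = r := by funext i; simp [sh]

lemma Dig.sh {r : ℕ → ℝ} (hr : Dig r) (n : ℕ) : Dig (sh n r) := fun i => hr _

lemma Dig.nonneg {r : ℕ → ℝ} (hr : Dig r) (i : ℕ) : 0 ≤ r i := by
  rcases hr i with h | h <;> rw [h] <;> norm_num

lemma Dig.le_one {r : ℕ → ℝ} (hr : Dig r) (i : ℕ) : r i ≤ 1 := by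
  rcases hr i with h | h <;> rw [h] <;> norm_num

lemma neg_pow_even {i : ℕ} (h : Even i) : (-gr) ^ (i+1) = -(gr ^ (i+1)) := by
  have : Odd (i+1) := Even.add_one h
  rw [this.neg_pow]

lemma neg_pow_odd {i : ℕ} (h : Odd i) : (-gr) ^ (i+1) = gr ^ (i+1) := by
  have : Even (i+1) := Odd.add_one h
  rw [this.neg_pow]

lemma abs_neg_gr_pow (i : ℕ) : |(-gr) ^ i| = gr ^ i := by
  rw [abs_pow, abs_neg, abs_of_pos gr_pos]

lemma summable_val {r : ℕ → ℝ} (hr : Dig r) :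
    Summable (fun i => r i / (-gr) ^ (i + 1)) := by
  apply Summable.of_norm_bounded (g := fun i => (gr⁻¹) ^ i)
  · exact summable_geometric_of_lt_one u_pos.le u_lt_one
  · intro i
    rw [Real.norm_eq_abs, abs_div, abs_neg_gr_pow]
    rw [div_le_iff₀ (pow_pos gr_pos _)]
    have h1 : |r i| ≤ 1 := by rw [abs_of_nonneg (hr.nonneg i)]; exact hr.le_one i
    calc |r i| ≤ 1 := h1
      _ ≤ gr⁻¹ ^ i * gr ^ (i+1) := by
          rw [inv_pow, inv_mul_eq_div, le_div_iff₀ (pow_pos gr_pos _), one_mul]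
          exact pow_le_pow_right₀ (le_of_lt gr_gt_one) (by omega)

lemma val_rec {r : ℕ → ℝ} (hr : Dig r) :
    val r = -gr⁻¹ * (r 0 + val (sh 1 r)) := by
  have hsum := summable_val hr
  have h0 := Summable.tsum_eq_zero_add hsum
  have hshift : ∀ i : ℕ, r (i+1) / (-gr) ^ (i+2) = (sh 1 r i / (-gr) ^ (i+1)) * (-gr)⁻¹ := by
    intro i
    rw [sh]; rw [show (1 + i) = i + 1 from by ring]
    field_simp
    ring
  unfold val
  rw [h0]
  simp only [show ∀ i:ℕ, i + 1 + 1 = i + 2 from fun i => rfl, hshift]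
  rw [tsum_mul_right]
  have : (-gr)⁻¹ = -gr⁻¹ := by rw [neg_inv]
  rw [this]
  field_simp
  ring

noncomputable def e1 : ℕ → ℝ := fun i => if Even i then 0 else 1
noncomputable def e0 : ℕ → ℝ := fun i => if Even i then 1 else 0

lemma dig_e1 : Dig e1 := by intro i; unfold e1; split <;> simp
lemma dig_e0 : Dig e0 := by intro i; unfold e0; split <;> simp

lemma sh_one_e1 : sh 1 e1 = e0 := by
  funext i; simp only [sh, e1, e0, Nat.add_comm 1 i, Nat.even_add_one]
  by_cases h : Even i <;> simp [h]

lemma sh_one_e0 : sh 1 e0 = e1 := by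
  funext i; simp only [sh, e1, e0, Nat.add_comm 1 i, Nat.even_add_one]
  by_cases h : Even i <;> simp [h]

lemma val_e1 : val e1 = gr⁻¹ := by
  have h1 := val_rec dig_e1
  have h0 := val_rec dig_e0
  rw [sh_one_e1] at h1
  rw [sh_one_e0] at h0
  have he1 : e1 0 = 0 := by simp [e1]
  have he0 : e0 0 = 1 := by simp [e0]
  rw [he1] at h1; rw [he0] at h0
  have hv : val e1 = gr⁻¹ ^ 2 * (1 + val e1) := by
    conv_lhs => rw [h1, h0]
    ring
  have h2 : gr⁻¹ * val e1 = gr⁻¹ * gr⁻¹ := by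
    linear_combination hv + val e1 * u_sq
  exact mul_left_cancel₀ (ne_of_gt u_pos) h2

lemma val_e0 : val e0 = -1 := by
  have h0 := val_rec dig_e0
  rw [sh_one_e0, val_e1] at h0
  have he0 : e0 0 = 1 := by simp [e0]
  rw [he0] at h0
  rw [h0]; nlinarith [u_sq]


lemma val_sh_rec {r : ℕ → ℝ} (hr : Dig r) (n : ℕ) :
    val (sh n r) = -gr⁻¹ * (r n + val (sh (n+1) r)) := by
  have := val_rec (Dig.sh hr n)
  rw [sh_sh] at this
  simpa [sh] using this

lemma val_split {r : ℕ → ℝ} (hr : Dig r) (n : ℕ) :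
    val r = (∑ i ∈ Finset.range n, r i / (-gr) ^ (i+1)) + val (sh n r) / (-gr) ^ n := by
  induction n with
  | zero =>
    have : sh 0 r = r := by funext i; simp [sh]
    simp [this]
  | succ n ih =>
    rw [ih, Finset.sum_range_succ, val_sh_rec hr n]
    have hne : (-gr) ^ n ≠ 0 := pow_ne_zero _ (neg_ne_zero.mpr gr_ne)
    have hinv : -gr⁻¹ = (-gr)⁻¹ := by rw [neg_inv]
    rw [hinv]
    ring

lemma term_le_e1 {r : ℕ → ℝ} (hr : Dig r) (i : ℕ) :
    r i / (-gr) ^ (i+1) ≤ e1 i / (-gr) ^ (i+1) := by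
  rcases Nat.even_or_odd i with h | h
  · have he : e1 i = 0 := by simp [e1, h]
    rw [neg_pow_even h, he, zero_div, div_neg, neg_nonpos]
    exact div_nonneg (hr.nonneg i) (le_of_lt (pow_pos gr_pos _))
  · have he : e1 i = 1 := by simp [e1, Nat.not_even_iff_odd.mpr h]
    rw [neg_pow_odd h, he]
    exact div_le_div_of_nonneg_right (hr.le_one i) (le_of_lt (pow_pos gr_pos _))

lemma term_lt_e1 {r : ℕ → ℝ} (hr : Dig r) {i : ℕ} (hi : r i ≠ e1 i) :
    r i / (-gr) ^ (i+1) < e1 i / (-gr) ^ (i+1) := by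
  rcases Nat.even_or_odd i with h | h
  · have he : e1 i = 0 := by simp [e1, h]
    have hri : r i = 1 := (hr i).resolve_left (by rw [he] at hi; exact hi)
    rw [neg_pow_even h, he, hri, zero_div, div_neg, neg_lt_zero]
    exact div_pos one_pos (pow_pos gr_pos _)
  · have he : e1 i = 1 := by simp [e1, Nat.not_even_iff_odd.mpr h]
    have hri : r i = 0 := (hr i).resolve_right (by rw [he] at hi; exact hi)
    rw [neg_pow_odd h, he, hri, zero_div]
    exact div_pos one_pos (pow_pos gr_pos _)

lemma term_ge_e0 {r : ℕ → ℝ} (hr : Dig r) (i : ℕ) :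
    e0 i / (-gr) ^ (i+1) ≤ r i / (-gr) ^ (i+1) := by
  rcases Nat.even_or_odd i with h | h
  · have he : e0 i = 1 := by simp [e0, h]
    rw [neg_pow_even h, he, div_neg, div_neg, neg_le_neg_iff]
    exact div_le_div_of_nonneg_right (hr.le_one i) (le_of_lt (pow_pos gr_pos _))
  · have he : e0 i = 0 := by simp [e0, Nat.not_even_iff_odd.mpr h]
    rw [neg_pow_odd h, he, zero_div]
    exact div_nonneg (hr.nonneg i) (le_of_lt (pow_pos gr_pos _))

lemma term_gt_e0 {r : ℕ → ℝ} (hr : Dig r) {i : ℕ} (hi : r i ≠ e0 i) :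
    e0 i / (-gr) ^ (i+1) < r i / (-gr) ^ (i+1) := by
  rcases Nat.even_or_odd i with h | h
  · have he : e0 i = 1 := by simp [e0, h]
    have hri : r i = 0 := (hr i).resolve_right (by rw [he] at hi; exact hi)
    rw [neg_pow_even h, he, hri, zero_div, div_neg, neg_lt_zero]
    exact div_pos one_pos (pow_pos gr_pos _)
  · have he : e0 i = 0 := by simp [e0, Nat.not_even_iff_odd.mpr h]
    have hri : r i = 1 := (hr i).resolve_left (by rw [he] at hi; exact hi)
    rw [neg_pow_odd h, he, hri, zero_div]
    exact div_pos one_pos (pow_pos gr_pos _)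

lemma val_le_u {r : ℕ → ℝ} (hr : Dig r) : val r ≤ gr⁻¹ := by
  rw [← val_e1]
  exact Summable.tsum_le_tsum (term_le_e1 hr) (summable_val hr) (summable_val dig_e1)

lemma val_lt_u {r : ℕ → ℝ} (hr : Dig r) {j : ℕ} (hj : r j ≠ e1 j) : val r < gr⁻¹ := by
  rw [← val_e1]
  exact Summable.tsum_lt_tsum (term_le_e1 hr) (term_lt_e1 hr hj) (summable_val hr) (summable_val dig_e1)

lemma neg_one_le_val {r : ℕ → ℝ} (hr : Dig r) : -1 ≤ val r := by
  rw [← val_e0]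
  exact Summable.tsum_le_tsum (term_ge_e0 hr) (summable_val dig_e0) (summable_val hr)

lemma neg_one_lt_val {r : ℕ → ℝ} (hr : Dig r) {j : ℕ} (hj : r j ≠ e0 j) : -1 < val r := by
  rw [← val_e0]
  exact Summable.tsum_lt_tsum (term_ge_e0 hr) (term_gt_e0 hr hj) (summable_val dig_e0) (summable_val hr)
section S4
lemma val_zero {r : ℕ → ℝ} (h : ∀ i, r i = 0) : val r = 0 := by
  unfold val
  rw [tsum_congr (fun i => by rw [h i, zero_div]), tsum_zero]

lemma val_ones {r : ℕ → ℝ} (h : ∀ i, r i = 1) : val r = gr⁻¹ - 1 := by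
  have hr : r = fun _ => 1 := funext h
  subst hr
  have hd : Dig (fun _ : ℕ => (1:ℝ)) := fun i => Or.inr rfl
  have hrec := val_rec hd
  have hsh : sh 1 (fun _ : ℕ => (1:ℝ)) = fun _ => 1 := rfl
  rw [hsh] at hrec
  have h2 : (1 + gr⁻¹) * val (fun _ : ℕ => (1:ℝ)) = (1 + gr⁻¹) * (gr⁻¹ - 1) := by
    linear_combination hrec - u_sq
  have hne : (1 + gr⁻¹) ≠ 0 := ne_of_gt (by nlinarith [u_pos])
  exact mul_left_cancel₀ hne h2

lemma ne_exists {r q : ℕ → ℝ} (h : r ≠ q) : ∃ j, r j ≠ q j := Function.ne_iff.mp h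

lemma val_lt_u' {r : ℕ → ℝ} (hr : Dig r) (h : r ≠ e1) : val r < gr⁻¹ := by
  obtain ⟨j, hj⟩ := ne_exists h
  exact val_lt_u hr hj

lemma neg_one_lt_val' {r : ℕ → ℝ} (hr : Dig r) (h : r ≠ e0) : -1 < val r := by
  obtain ⟨j, hj⟩ := ne_exists h
  exact neg_one_lt_val hr hj

lemma val_one_start_le {r : ℕ → ℝ} (hr : Dig r) (h0 : r 0 = 1) : val r ≤ 0 := by
  have hrec := val_rec hr
  rw [h0] at hrec
  have := neg_one_le_val (hr.sh 1)
  nlinarith [u_pos]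

lemma val_one_start_neg {r : ℕ → ℝ} (hr : Dig r) (h0 : r 0 = 1) (hne : sh 1 r ≠ e0) :
    val r < 0 := by
  have hrec := val_rec hr
  rw [h0] at hrec
  have := neg_one_lt_val' (hr.sh 1) hne
  nlinarith [u_pos]

lemma val_one_start_eq0 {r : ℕ → ℝ} (hr : Dig r) (h0 : r 0 = 1) (he : sh 1 r = e0) :
    val r = 0 := by
  have hrec := val_rec hr
  rw [h0, he, val_e0] at hrec
  rw [hrec]; ring

lemma val_zero_start {r : ℕ → ℝ} (hr : Dig r) (h0 : r 0 = 0) :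
    val r = -gr⁻¹ * val (sh 1 r) := by
  have hrec := val_rec hr
  rw [h0] at hrec
  rw [hrec]; ring

lemma val_zero_start_ge {r : ℕ → ℝ} (hr : Dig r) (h0 : r 0 = 0) : gr⁻¹ - 1 ≤ val r := by
  rw [val_zero_start hr h0]
  have := val_le_u (hr.sh 1)
  nlinarith [u_pos, u_sq]

lemma val_zero_start_gt {r : ℕ → ℝ} (hr : Dig r) (h0 : r 0 = 0) (hne : sh 1 r ≠ e1) :
    gr⁻¹ - 1 < val r := by
  rw [val_zero_start hr h0]
  have := val_lt_u' (hr.sh 1) hne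
  nlinarith [u_pos, u_sq]

lemma val_zero_start_eq {r : ℕ → ℝ} (hr : Dig r) (h0 : r 0 = 0) (he : sh 1 r = e1) :
    val r = gr⁻¹ - 1 := by
  rw [val_zero_start hr h0, he, val_e1]
  nlinarith [u_sq]

lemma val_zero_start_pos_iff {r : ℕ → ℝ} (hr : Dig r) (h0 : r 0 = 0) :
    0 < val r ↔ val (sh 1 r) < 0 := by
  rw [val_zero_start hr h0]
  constructor
  · intro h; nlinarith [u_pos]
  · intro h; nlinarith [u_pos]

lemma flip_lt {t : ℝ} : -gr⁻¹ * (1 + t) < gr⁻¹ - 1 ↔ gr⁻¹ - 1 < t := by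
  constructor
  · intro h; nlinarith [u_pos, u_sq, mul_pos u_pos u_pos]
  · intro h; nlinarith [u_pos, u_sq, mul_lt_mul_of_pos_left h u_pos]

lemma flip_gt {t : ℝ} : gr⁻¹ - 1 < -gr⁻¹ * (1 + t) ↔ t < gr⁻¹ - 1 := by
  constructor
  · intro h; nlinarith [u_pos, u_sq]
  · intro h; nlinarith [u_pos, u_sq, mul_lt_mul_of_pos_left h u_pos]

lemma val_head_zeros {r : ℕ → ℝ} (hr : Dig r) (n : ℕ) (h : ∀ i < n, r i = 0) :
    val r = val (sh n r) / (-gr) ^ n := by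
  rw [val_split hr n]
  have : ∀ i ∈ Finset.range n, r i / (-gr) ^ (i+1) = 0 := by
    intro i hi
    rw [h i (Finset.mem_range.mp hi), zero_div]
  rw [Finset.sum_congr rfl this, Finset.sum_const_zero, zero_add]

/-- flipping along a run of ones -/
lemma run_flip {r : ℕ → ℝ} (hr : Dig r) (m : ℕ) (hm : ∀ i < m, r i = 1) :
    (Even m → (val r < gr⁻¹ - 1 ↔ val (sh m r) < gr⁻¹ - 1)) ∧
    (Odd m → (val r < gr⁻¹ - 1 ↔ gr⁻¹ - 1 < val (sh m r))) := by
  induction m with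
  | zero =>
    constructor
    · intro _
      have : sh 0 r = r := by funext i; simp [sh]
      rw [this]
    · intro h; exact absurd h (by simp)
  | succ m ih =>
    have hm' : ∀ i < m, r i = 1 := fun i hi => hm i (Nat.lt_succ_of_lt hi)
    obtain ⟨ihe, iho⟩ := ih hm'
    have hrm : (sh m r) 0 = 1 := by
      show r (m + 0) = 1
      rw [Nat.add_zero]; exact hm m (Nat.lt_succ_self m)
    have hrec := val_rec (hr.sh m)
    rw [hrm] at hrec
    have hshsh : sh 1 (sh m r) = sh (m+1) r := sh_sh 1 m r
    rw [hshsh] at hrec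
    constructor
    · intro he
      have hom : Odd m := by
        rcases Nat.even_or_odd m with h | h
        · exact absurd (by exact h.add_one) (by simpa using he)
        · exact h
      rw [iho hom, hrec, flip_gt]
    · intro ho
      have hem : Even m := by
        rcases Nat.even_or_odd m with h | h
        · exact h
        · exact absurd (h.add_one) (by simpa using ho)
      rw [ihe hem, hrec, flip_lt]

end S4
section S5

lemma sh_at {r : ℕ → ℝ} (n i : ℕ) : sh n r i = r (n + i) := rfl

lemma val_neg_char {r : ℕ → ℝ} (hr : Dig r) :
    val r < 0 ↔ ∃ e, Even e ∧ (∀ i < e, r i = 0) ∧ r e = 1 ∧ sh (e+1) r ≠ e0 := by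
  constructor
  · intro h
    have hex : ∃ i, r i = 1 := by
      by_contra hc
      push_neg at hc
      have : ∀ i, r i = 0 := fun i => (hr i).resolve_right (hc i)
      rw [val_zero this] at h
      exact absurd h (lt_irrefl 0)
    set e := Nat.find hex with hedef
    have h1 : r e = 1 := Nat.find_spec hex
    have hz : ∀ i < e, r i = 0 := fun i hi => (hr i).resolve_right (Nat.find_min hex hi)
    have hsplit := val_head_zeros hr e hz
    have hsh0 : (sh e r) 0 = 1 := by rw [sh_at, Nat.add_zero]; exact h1
    have hshsh : sh 1 (sh e r) = sh (e+1) r := sh_sh 1 e r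
    have heven : Even e := by
      by_contra hodd
      have ho : Odd e := Nat.odd_iff.mpr (Nat.not_even_iff.mp hodd)
      rw [ho.neg_pow] at hsplit
      have hle : val (sh e r) ≤ 0 := val_one_start_le (hr.sh e) hsh0
      have : 0 ≤ val r := by
        rw [hsplit, div_neg, neg_nonneg]
        exact div_nonpos_of_nonpos_of_nonneg hle (le_of_lt (pow_pos gr_pos e))
      linarith
    refine ⟨e, heven, hz, h1, ?_⟩
    intro hcon
    have : val (sh e r) = 0 := val_one_start_eq0 (hr.sh e) hsh0 (by rw [hshsh]; exact hcon)
    rw [this, zero_div] at hsplit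
    rw [hsplit] at h
    exact absurd h (lt_irrefl 0)
  · rintro ⟨e, he, hz, h1, hne⟩
    have hsplit := val_head_zeros hr e hz
    have hsh0 : (sh e r) 0 = 1 := by rw [sh_at, Nat.add_zero]; exact h1
    have hshsh : sh 1 (sh e r) = sh (e+1) r := sh_sh 1 e r
    have hneg : val (sh e r) < 0 :=
      val_one_start_neg (hr.sh e) hsh0 (by rw [hshsh]; exact hne)
    rw [hsplit, he.neg_pow]
    exact div_neg_of_neg_of_pos hneg (pow_pos gr_pos e)

lemma val_lt_char {r : ℕ → ℝ} (hr : Dig r) :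
    val r < gr⁻¹ - 1 ↔ ∃ m, Odd m ∧ (∀ i < m, r i = 1) ∧ r m = 0 ∧ sh (m+1) r ≠ e1 := by
  constructor
  · intro h
    have hex : ∃ i, r i = 0 := by
      by_contra hc
      push_neg at hc
      have : ∀ i, r i = 1 := fun i => (hr i).resolve_left (hc i)
      rw [val_ones this] at h
      exact absurd h (lt_irrefl _)
    set m := Nat.find hex with hmdef
    have h1 : r m = 0 := Nat.find_spec hex
    have ho : ∀ i < m, r i = 1 := fun i hi => (hr i).resolve_left (Nat.find_min hex hi)
    have hsh0 : (sh m r) 0 = 0 := by rw [sh_at, Nat.add_zero]; exact h1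
    have hshsh : sh 1 (sh m r) = sh (m+1) r := sh_sh 1 m r
    obtain ⟨hfe, hfo⟩ := run_flip hr m ho
    have hodd : Odd m := by
      by_contra hev
      have he : Even m := Nat.even_iff.mpr (Nat.not_odd_iff.mp hev)
      have := (hfe he).mp h
      have := val_zero_start_ge (hr.sh m) hsh0
      linarith
    refine ⟨m, hodd, ho, h1, ?_⟩
    intro hcon
    have h2 := (hfo hodd).mp h
    have : val (sh m r) = gr⁻¹ - 1 :=
      val_zero_start_eq (hr.sh m) hsh0 (by rw [hshsh]; exact hcon)
    linarith
  · rintro ⟨m, hodd, ho, h1, hne⟩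
    have hsh0 : (sh m r) 0 = 0 := by rw [sh_at, Nat.add_zero]; exact h1
    have hshsh : sh 1 (sh m r) = sh (m+1) r := sh_sh 1 m r
    obtain ⟨hfe, hfo⟩ := run_flip hr m ho
    have h2 : gr⁻¹ - 1 < val (sh m r) :=
      val_zero_start_gt (hr.sh m) hsh0 (by rw [hshsh]; exact hne)
    exact (hfo hodd).mpr h2

end S5
section S6

noncomputable def repSeq (y : ℝ) : ℕ → ℝ
  | 0 => y
  | n+1 => -gr * repSeq y n - (if -gr * repSeq y n ≤ gr⁻¹ then 0 else 1)

noncomputable def repDig (y : ℝ) (n : ℕ) : ℝ :=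
  if -gr * repSeq y n ≤ gr⁻¹ then 0 else 1

lemma repSeq_succ (y : ℝ) (n : ℕ) :
    repSeq y (n+1) = -gr * repSeq y n - repDig y n := rfl

lemma dig_repDig (y : ℝ) : Dig (repDig y) := by
  intro i; unfold repDig; split
  · exact Or.inl rfl
  · exact Or.inr rfl

lemma repSeq_mem (y : ℝ) (h1 : -1 ≤ y) (h2 : y ≤ gr⁻¹) :
    ∀ n, -1 ≤ repSeq y n ∧ repSeq y n ≤ gr⁻¹ := by
  intro n
  induction n with
  | zero => exact ⟨h1, h2⟩
  | succ n ih =>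
    obtain ⟨hl, hu⟩ := ih
    have hgu : gr * gr⁻¹ = 1 := mul_inv_cancel₀ gr_ne
    rw [repSeq_succ]
    unfold repDig
    split
    · rename_i hc
      constructor
      · nlinarith [gr_pos]
      · nlinarith [hc]
    · rename_i hc
      push_neg at hc
      constructor
      · nlinarith [u_pos]
      · nlinarith [gr_pos, u_eq]

lemma repSeq_eq (y : ℝ) (n : ℕ) :
    repSeq y n = (-gr) ^ n * (y - ∑ i ∈ Finset.range n, repDig y i / (-gr) ^ (i+1)) := by
  induction n with
  | zero => simp [repSeq]
  | succ n ih =>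
    rw [repSeq_succ, ih, Finset.sum_range_succ]
    have hne : (-gr) ^ n ≠ 0 := pow_ne_zero _ (neg_ne_zero.mpr gr_ne)
    have hne2 : (-gr : ℝ) ≠ 0 := neg_ne_zero.mpr gr_ne
    field_simp
    ring

lemma val_repDig (y : ℝ) (h1 : -1 ≤ y) (h2 : y ≤ gr⁻¹) : val (repDig y) = y := by
  have hsum := summable_val (dig_repDig y)
  have htend : Filter.Tendsto (fun n => ∑ i ∈ Finset.range n, repDig y i / (-gr) ^ (i+1))
      Filter.atTop (nhds y) := by
    rw [tendsto_iff_dist_tendsto_zero]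
    apply squeeze_zero (fun n => dist_nonneg) (g := fun n => (gr⁻¹) ^ n)
    · intro n
      rw [Real.dist_eq]
      have heq := repSeq_eq y n
      have hb := repSeq_mem y h1 h2 n
      have habs : |repSeq y n| ≤ 1 := by
        rw [abs_le]
        exact ⟨hb.1, le_trans hb.2 (le_of_lt u_lt_one)⟩
      have hne : (-gr) ^ n ≠ 0 := pow_ne_zero _ (neg_ne_zero.mpr gr_ne)
      have : (∑ i ∈ Finset.range n, repDig y i / (-gr) ^ (i+1)) - y
          = -(repSeq y n) / (-gr) ^ n := by
        rw [heq]; field_simp; ring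
      rw [this, abs_div, abs_neg]
      rw [abs_pow, abs_neg, abs_of_pos gr_pos]
      rw [div_le_iff₀ (pow_pos gr_pos n)]
      calc |repSeq y n| ≤ 1 := habs
        _ ≤ gr⁻¹ ^ n * gr ^ n := by
            rw [inv_pow, inv_mul_cancel₀ (pow_ne_zero _ gr_ne)]
    · exact tendsto_pow_atTop_nhds_zero_of_lt_one (le_of_lt u_pos) u_lt_one
  have := (hsum.hasSum_iff_tendsto_nat).mpr htend
  exact this.tsum_eq

lemma exists_rep (y : ℝ) (h1 : -1 ≤ y) (h2 : y ≤ gr⁻¹) :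
    ∃ r, Dig r ∧ val r = y :=
  ⟨repDig y, dig_repDig y, val_repDig y h1 h2⟩

end S6
section S7

lemma dig_ne10 : (1:ℝ) ≠ 0 := one_ne_zero
lemma dig_ne01 : (0:ℝ) ≠ 1 := zero_ne_one

lemma star_of_G {s : ℕ → ℝ} (hs : Dig s)
    (hg0 : ∃ e, Even e ∧ (∀ i < e, s i = 0) ∧ s e = 1)
    (hg1 : ∀ n, Even n → s n = 1 → ∃ m, Odd m ∧ (∀ i < m, s (n+i) = 1) ∧ s (n+m) = 0)
    (hg2 : ∀ n, Odd n → s n = 0 → ∃ e, Even e ∧ (∀ i < e, s (n+1+i) = 0) ∧ s (n+1+e) = 1) :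
    ∀ n, (s n = 1 → s (n+1) = 0 → Even n) ∧ (s n = 0 → s (n+1) = 1 → Odd n) := by
  intro n
  induction n using Nat.strong_induction_on with
  | _ n ih =>
  constructor
  · intro h1 h0
    by_contra hodd
    have hodd : Odd n := Nat.odd_iff.mpr (Nat.not_even_iff.mp hodd)
    have hn1 : 1 ≤ n := hodd.pos
    rcases hs (n-1) with hprev | hprev
    · -- s (n-1) = 0, boundary 0→1 at n-1, IH says Odd (n-1), contradiction
      have h1' : s ((n-1)+1) = 1 := by rwa [show (n-1)+1 = n by omega]
      have := ((ih (n-1) (by omega)).2 hprev h1')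
      rw [Nat.odd_iff] at this hodd
      omega
    · -- s (n-1) = 1, even position; hg1 gives odd run
      have he : Even (n-1) := by
        rw [Nat.even_iff]; rw [Nat.odd_iff] at hodd; omega
      obtain ⟨m, hmo, hones, hz⟩ := hg1 (n-1) he hprev
      rcases eq_or_lt_of_le (show 1 ≤ m from hmo.pos) with hm1 | hm2
      · -- m = 1 : s n = 0 contradiction
        rw [← hm1] at hz
        rw [show (n-1)+1 = n by omega] at hz
        rw [h1] at hz; exact dig_ne10 hz
      · -- m ≥ 2, odd so m ≥ 3, then s (n+1) = 1 contradiction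
        have hm3 : 3 ≤ m := by rw [Nat.odd_iff] at hmo; omega
        have := hones 2 (by omega)
        rw [show (n-1)+2 = n+1 by omega] at this
        rw [h0] at this; exact dig_ne01 this
  · intro h0 h1
    by_contra heven
    have heven : Even n := Nat.even_iff.mpr (Nat.not_odd_iff.mp heven)
    rcases Nat.eq_zero_or_pos n with hn0 | hn1
    · subst hn0
      obtain ⟨e, hee, hzer, hone⟩ := hg0
      have he0 : e ≠ 0 := by
        intro h; rw [h] at hone; rw [hone] at h0; exact dig_ne10 h0
      have he2 : 2 ≤ e := by rw [Nat.even_iff] at hee; omega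
      have := hzer 1 (by omega)
      rw [h1] at this; exact dig_ne10 this
    · rcases hs (n-1) with hprev | hprev
      · -- s(n-1)=0 at odd position n-1, hg2
        have ho : Odd (n-1) := by
          rw [Nat.odd_iff]; rw [Nat.even_iff] at heven; omega
        obtain ⟨e, hee, hz, hone⟩ := hg2 (n-1) ho hprev
        rcases Nat.eq_zero_or_pos e with he0 | he1
        · subst he0
          rw [show (n-1)+1+0 = n by omega] at hone
          rw [h0] at hone; exact dig_ne01 hone
        · have he2 : 2 ≤ e := by rw [Nat.even_iff] at hee; omega
          have := hz 1 (by omega)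
          rw [show (n-1)+1+1 = n+1 by omega] at this
          rw [h1] at this; exact dig_ne10 this
      · -- s(n-1)=1 boundary 1→0 at n-1, IH gives Even (n-1)
        have h0' : s ((n-1)+1) = 0 := by rwa [show (n-1)+1 = n by omega]
        have := (ih (n-1) (by omega)).1 hprev h0'
        rw [Nat.even_iff] at this heven
        omega

end S7
section S8

lemma star_of_C {s : ℕ → ℝ} (hs : Dig s)
    (c1 : ¬ ∃ k : ℕ, 1 ≤ k ∧ (∀ i < 2 * k, s i = 1) ∧ s (2 * k) = 0)
    (c2 : ¬ ∃ k : ℕ, 1 ≤ k ∧ (∀ i < 2 * k - 1, s i = 0) ∧ s (2 * k - 1) = 1)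
    (c5 : ¬ ∃ i k : ℕ, 1 ≤ k ∧ s i = 1 ∧ (∀ j, 1 ≤ j → j ≤ 2 * k → s (i + j) = 0) ∧
          s (i + 2 * k + 1) = 1)
    (c6 : ¬ ∃ i k : ℕ, 1 ≤ k ∧ s i = 0 ∧ (∀ j, 1 ≤ j → j ≤ 2 * k → s (i + j) = 1) ∧
          s (i + 2 * k + 1) = 0) :
    ∀ n, (s n = 1 → s (n+1) = 0 → Even n) ∧ (s n = 0 → s (n+1) = 1 → Odd n) := by
  intro n
  induction n using Nat.strong_induction_on with
  | _ n ih =>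
  constructor
  · intro h1 h0
    -- find start of the 1-run
    have hPn : ∀ i, n ≤ i → i ≤ n → s i = 1 := by
      intro i hi1 hi2
      have : i = n := le_antisymm hi2 hi1
      rw [this]; exact h1
    have hex : ∃ j, ∀ i, j ≤ i → i ≤ n → s i = 1 := ⟨n, hPn⟩
    set p := Nat.find hex with hpdef
    have hp : ∀ i, p ≤ i → i ≤ n → s i = 1 := Nat.find_spec hex
    have hple : p ≤ n := Nat.find_min' hex hPn
    rcases Nat.eq_zero_or_pos p with hp0 | hp1
    · -- run goes to the start : use c1
      by_contra heven
      have hodd : n % 2 = 1 := by rw [Nat.even_iff] at heven; omega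
      apply c1
      refine ⟨(n+1)/2, by omega, ?_, ?_⟩
      · intro i hi
        exact hp i (by omega) (by omega)
      · rwa [show 2*((n+1)/2) = n+1 by omega]
    · -- s (p-1) = 0
      have hnotp : ¬ (∀ i, p-1 ≤ i → i ≤ n → s i = 1) := Nat.find_min hex (by omega)
      push_neg at hnotp
      obtain ⟨i, hi1, hi2, hi3⟩ := hnotp
      have hieq : i = p - 1 := by
        by_contra hne
        exact hi3 (hp i (by omega) hi2)
      rw [hieq] at hi3
      have hprev : s (p-1) = 0 := (hs (p-1)).resolve_right hi3
      -- boundary 0→1 at p-1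
      have h1' : s ((p-1)+1) = 1 := by
        rw [show (p-1)+1 = p by omega]; exact hp p le_rfl hple
      have hoddp : Odd (p-1) := (ih (p-1) (by omega)).2 hprev h1'
      -- run length must be odd by c6
      have hlen : (n - p + 1) % 2 = 1 := by
        by_contra hevenlen
        have he : (n - p + 1) % 2 = 0 := by omega
        apply c6
        refine ⟨p-1, (n-p+1)/2, by omega, hprev, ?_, ?_⟩
        · intro j hj1 hj2
          exact hp (p-1+j) (by omega) (by omega)
        · rw [show p-1 + 2*((n-p+1)/2) + 1 = n+1 by omega]
          exact h0
      rw [Nat.odd_iff] at hoddp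
      rw [Nat.even_iff]
      omega
  · intro h0 h1
    have hPn : ∀ i, n ≤ i → i ≤ n → s i = 0 := by
      intro i hi1 hi2
      have : i = n := le_antisymm hi2 hi1
      rw [this]; exact h0
    have hex : ∃ j, ∀ i, j ≤ i → i ≤ n → s i = 0 := ⟨n, hPn⟩
    set p := Nat.find hex with hpdef
    have hp : ∀ i, p ≤ i → i ≤ n → s i = 0 := Nat.find_spec hex
    have hple : p ≤ n := Nat.find_min' hex hPn
    rcases Nat.eq_zero_or_pos p with hp0 | hp1
    · -- zero-prefix : use c2
      by_contra hodd
      have heven : n % 2 = 0 := by rw [Nat.odd_iff] at hodd; omega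
      apply c2
      refine ⟨(n+2)/2, by omega, ?_, ?_⟩
      · intro i hi
        exact hp i (by omega) (by omega)
      · rwa [show 2*((n+2)/2) - 1 = n+1 by omega]
    · have hnotp : ¬ (∀ i, p-1 ≤ i → i ≤ n → s i = 0) := Nat.find_min hex (by omega)
      push_neg at hnotp
      obtain ⟨i, hi1, hi2, hi3⟩ := hnotp
      have hieq : i = p - 1 := by
        by_contra hne
        exact hi3 (hp i (by omega) hi2)
      rw [hieq] at hi3
      have hprev : s (p-1) = 1 := (hs (p-1)).resolve_left hi3
      have h0' : s ((p-1)+1) = 0 := by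
        rw [show (p-1)+1 = p by omega]; exact hp p le_rfl hple
      have hevenp : Even (p-1) := (ih (p-1) (by omega)).1 hprev h0'
      have hlen : (n - p + 1) % 2 = 1 := by
        by_contra hevenlen
        have he : (n - p + 1) % 2 = 0 := by omega
        apply c5
        refine ⟨p-1, (n-p+1)/2, by omega, hprev, ?_, ?_⟩
        · intro j hj1 hj2
          exact hp (p-1+j) (by omega) (by omega)
        · rw [show p-1 + 2*((n-p+1)/2) + 1 = n+1 by omega]
          exact h1
      rw [Nat.even_iff] at hevenp
      rw [Nat.odd_iff]
      omega

end S8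
section S9

lemma e1_0 : e1 0 = 0 := by simp [e1]
lemma e1_1 : e1 1 = 1 := by norm_num [e1]
lemma e0_0 : e0 0 = 1 := by simp [e0]
lemma e0_1 : e0 1 = 0 := by norm_num [e0]

variable {s : ℕ → ℝ}

lemma GfromC (hs : Dig s)
    (star : ∀ n, (s n = 1 → s (n+1) = 0 → Even n) ∧ (s n = 0 → s (n+1) = 1 → Odd n))
    (hinf1 : ∀ N, ∃ i, N ≤ i ∧ s i = 1)
    (hinf0 : ∀ N, ∃ i, N ≤ i ∧ s i = 0) :
    val s < 0 ∧
    (∀ n, Even n → s n = 1 → val (sh n s) < gr⁻¹ - 1) ∧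
    (∀ n, Odd n → s n = 0 → 0 < val (sh n s)) := by
  refine ⟨?_, ?_, ?_⟩
  · -- val s < 0
    obtain ⟨i0, _, hi0⟩ := hinf1 0
    have hex : ∃ e, s e = 1 := ⟨i0, hi0⟩
    set e := Nat.find hex with hedef
    have he1 : s e = 1 := Nat.find_spec hex
    have hz : ∀ i < e, s i = 0 := fun i hi => (hs i).resolve_right (Nat.find_min hex hi)
    have heven : Even e := by
      rcases Nat.eq_zero_or_pos e with h | h
      · rw [h]; exact Even.zero
      · have hb := (star (e-1)).2 (hz (e-1) (by omega)) (by rwa [show e-1+1 = e by omega])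
        rw [Nat.odd_iff] at hb; rw [Nat.even_iff]; omega
    apply (val_neg_char hs).mpr
    refine ⟨e, heven, hz, he1, ?_⟩
    intro hcon
    have ha : s (e+1) = 1 := by
      have : sh (e+1) s 0 = e0 0 := by rw [hcon]
      rw [sh_at, e0_0, Nat.add_zero] at this; exact this
    have hb : s (e+2) = 0 := by
      have : sh (e+1) s 1 = e0 1 := by rw [hcon]
      rw [sh_at, e0_1, show e+1+1 = e+2 by omega] at this; exact this
    have := (star (e+1)).1 ha (by rwa [show e+1+1 = e+2 by omega])
    rw [Nat.even_iff] at this heven; omega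
  · -- G1
    intro n hne hn1
    apply (val_lt_char (hs.sh n)).mpr
    obtain ⟨i0, hi0n, hi0⟩ := hinf0 (n+1)
    have hex : ∃ m, s (n+(m+1)) = 0 := ⟨i0 - n - 1, by rwa [show n+(i0-n-1+1) = i0 by omega]⟩
    set mf := Nat.find hex with hmfdef
    have hmz : s (n+(mf+1)) = 0 := Nat.find_spec hex
    have hones : ∀ i < mf+1, sh n s i = 1 := by
      intro i hi
      rw [sh_at]
      rcases Nat.eq_zero_or_pos i with h | h
      · rw [h, Nat.add_zero]; exact hn1
      · exact (hs (n+i)).resolve_left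
          (by have := Nat.find_min hex (show i-1 < mf by omega)
              rwa [show n+(i-1+1) = n+i by omega] at this)
    have hlast : s (n+mf) = 1 := by
      have := hones mf (by omega); rwa [sh_at] at this
    have hbd := (star (n+mf)).1 hlast (by rwa [show n+mf+1 = n+(mf+1) by omega])
    have hodd : Odd (mf+1) := by
      rw [Nat.even_iff] at hbd hne; rw [Nat.odd_iff]; omega
    refine ⟨mf+1, hodd, hones, by rw [sh_at]; exact hmz, ?_⟩
    rw [sh_sh]
    intro hcon
    have ha : s (n+(mf+1+1)) = 0 := by
      have : sh (n+(mf+1+1)) s 0 = e1 0 := by rw [hcon]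
      rwa [sh_at, e1_0, Nat.add_zero] at this
    have hb : s (n+(mf+1+1)+1) = 1 := by
      have : sh (n+(mf+1+1)) s 1 = e1 1 := by rw [hcon]
      rwa [sh_at, e1_1] at this
    have := (star (n+(mf+1+1))).2 ha hb
    rw [Nat.odd_iff] at this
    rw [Nat.even_iff] at hne
    rw [Nat.odd_iff] at hodd
    omega
  · -- G2
    intro n hno hn0
    have h0 : sh n s 0 = 0 := by rw [sh_at, Nat.add_zero]; exact hn0
    rw [val_zero_start_pos_iff (hs.sh n) h0, sh_sh]
    apply (val_neg_char (hs.sh (n+1))).mpr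
    obtain ⟨i0, hi0n, hi0⟩ := hinf1 (n+1)
    have hex : ∃ e, s (n+1+e) = 1 := ⟨i0 - n - 1, by rwa [show n+1+(i0-n-1) = i0 by omega]⟩
    set e := Nat.find hex with hedef
    have he1 : s (n+1+e) = 1 := Nat.find_spec hex
    have hz : ∀ i < e, sh (n+1) s i = 0 := by
      intro i hi
      rw [sh_at]
      exact (hs (n+1+i)).resolve_right (Nat.find_min hex hi)
    have hprev : s (n+e) = 0 := by
      rcases Nat.eq_zero_or_pos e with h | h
      · rw [h, Nat.add_zero]; exact hn0
      · have := hz (e-1) (by omega); rwa [sh_at, show n+1+(e-1) = n+e by omega] at this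
    have hbd := (star (n+e)).2 hprev (by rwa [show n+e+1 = n+1+e by omega])
    have heven : Even e := by
      rw [Nat.odd_iff] at hbd hno; rw [Nat.even_iff]; omega
    refine ⟨e, heven, hz, by rw [sh_at]; exact he1, ?_⟩
    rw [sh_sh]
    intro hcon
    have ha : s (n+1+(e+1)) = 1 := by
      have : sh (n+1+(e+1)) s 0 = e0 0 := by rw [hcon]
      rwa [sh_at, e0_0, Nat.add_zero] at this
    have hb : s (n+1+(e+1)+1) = 0 := by
      have : sh (n+1+(e+1)) s 1 = e0 1 := by rw [hcon]
      rwa [sh_at, e0_1] at this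
    have := (star (n+1+(e+1))).1 ha hb
    rw [Nat.even_iff] at this heven
    rw [Nat.odd_iff] at hno
    omega

end S9
section S10

variable {s : ℕ → ℝ}

lemma CfromG (hs : Dig s)
    (hg0 : val s < 0)
    (hg1 : ∀ n, Even n → s n = 1 → val (sh n s) < gr⁻¹ - 1)
    (hg2 : ∀ n, Odd n → s n = 0 → 0 < val (sh n s)) :
    (¬ ∃ k : ℕ, 1 ≤ k ∧ (∀ i < 2 * k, s i = 1) ∧ s (2 * k) = 0) ∧
    (¬ ∃ k : ℕ, 1 ≤ k ∧ (∀ i < 2 * k - 1, s i = 0) ∧ s (2 * k - 1) = 1) ∧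
    (¬ ∃ N : ℕ, ∀ i ≥ N, s i = 0) ∧
    (¬ ∃ N : ℕ, ∀ i ≥ N, s i = 1) ∧
    (¬ ∃ i k : ℕ, 1 ≤ k ∧ s i = 1 ∧ (∀ j, 1 ≤ j → j ≤ 2 * k → s (i + j) = 0) ∧
        s (i + 2 * k + 1) = 1) ∧
    (¬ ∃ i k : ℕ, 1 ≤ k ∧ s i = 0 ∧ (∀ j, 1 ≤ j → j ≤ 2 * k → s (i + j) = 1) ∧
        s (i + 2 * k + 1) = 0) := by
  -- existential (combinatorial) consequences of the analytic hypotheses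
  have HG0 : ∃ e, Even e ∧ (∀ i < e, s i = 0) ∧ s e = 1 := by
    obtain ⟨e, he, hz, h1, _⟩ := (val_neg_char hs).mp hg0
    exact ⟨e, he, hz, h1⟩
  have HG1 : ∀ n, Even n → s n = 1 → ∃ m, Odd m ∧ (∀ i < m, s (n+i) = 1) ∧ s (n+m) = 0 := by
    intro n hne hn1
    obtain ⟨m, hmo, hones, hz, _⟩ := (val_lt_char (hs.sh n)).mp (hg1 n hne hn1)
    exact ⟨m, hmo, fun i hi => hones i hi, hz⟩
  have HG2 : ∀ n, Odd n → s n = 0 →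
      ∃ e, Even e ∧ (∀ i < e, s (n+1+i) = 0) ∧ s (n+1+e) = 1 := by
    intro n hno hn0
    have h0 : sh n s 0 = 0 := by rw [sh_at, Nat.add_zero]; exact hn0
    have := (val_zero_start_pos_iff (hs.sh n) h0).mp (hg2 n hno hn0)
    rw [sh_sh] at this
    obtain ⟨e, he, hz, h1, _⟩ := (val_neg_char (hs.sh (n+1))).mp this
    exact ⟨e, he, fun i hi => hz i hi, h1⟩
  have star := star_of_G hs HG0 HG1 HG2
  refine ⟨?_, ?_, ?_, ?_, ?_, ?_⟩
  · rintro ⟨k, hk, hones, hz⟩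
    have h1 : s (2*k-1) = 1 := hones (2*k-1) (by omega)
    have hbd := (star (2*k-1)).1 h1 (by rwa [show 2*k-1+1 = 2*k by omega])
    rw [Nat.even_iff] at hbd; omega
  · rintro ⟨k, hk, hz, h1⟩
    rcases Nat.eq_zero_or_pos (2*k-1) with h | h
    · omega
    · have h0 : s (2*k-2) = 0 := hz (2*k-2) (by omega)
      have hbd := (star (2*k-2)).2 h0 (by rwa [show 2*k-2+1 = 2*k-1 by omega])
      rw [Nat.odd_iff] at hbd; omega
  · rintro ⟨N, hN⟩
    obtain ⟨e, _, _, h1⟩ := HG2 (2*N+1) (by rw [Nat.odd_iff]; omega) (hN _ (by omega))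
    have := hN (2*N+1+1+e) (by omega)
    rw [h1] at this; exact dig_ne10 this
  · rintro ⟨N, hN⟩
    obtain ⟨m, _, _, h0⟩ := HG1 (2*N) (by rw [Nat.even_iff]; omega) (hN _ (by omega))
    have := hN (2*N+m) (by omega)
    rw [h0] at this; exact dig_ne01 this
  · rintro ⟨i, k, hk, h1, hz, h1'⟩
    have ha := (star i).1 h1 (by have := hz 1 (by omega) (by omega); rwa [show i+1 = i+1 from rfl])
    have hb := (star (i+2*k)).2 (hz (2*k) (by omega) (by omega))
      (by rwa [show i+2*k+1 = i+2*k+1 from rfl])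
    rw [Nat.even_iff] at ha; rw [Nat.odd_iff] at hb; omega
  · rintro ⟨i, k, hk, h0, ho, h0'⟩
    have ha := (star i).2 h0 (by have := ho 1 (by omega) (by omega); rwa [show i+1 = i+1 from rfl])
    have hb := (star (i+2*k)).1 (ho (2*k) (by omega) (by omega))
      (by rwa [show i+2*k+1 = i+2*k+1 from rfl])
    rw [Nat.odd_iff] at ha; rw [Nat.even_iff] at hb; omega

end S10
/-- Alternate order on infinite sequences of reals. -/
def AltLt (x y : ℕ → ℝ) : Prop :=
  ∃ k, (∀ i < k, x i = y i) ∧ (-1 : ℝ) ^ (k + 1) * x k < (-1 : ℝ) ^ (k + 1) * y k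

section S11

variable {s : ℕ → ℝ}

lemma tails_eq {w : ℕ → ℝ} (hs : Dig s) (hw : Dig w) (k : ℕ)
    (hagree : ∀ i < k, w i = s i) (hv : val w = val s) :
    val (sh k w) = val (sh k s) := by
  have h1 := val_split hw k
  have h2 := val_split hs k
  have hps : (∑ i ∈ Finset.range k, w i / (-gr) ^ (i+1))
      = ∑ i ∈ Finset.range k, s i / (-gr) ^ (i+1) := by
    apply Finset.sum_congr rfl
    intro i hi
    rw [hagree i (Finset.mem_range.mp hi)]
  have hc : ((-gr) : ℝ) ^ k ≠ 0 := pow_ne_zero _ (neg_ne_zero.mpr gr_ne)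
  have heq : val (sh k w) / (-gr) ^ k = val (sh k s) / (-gr) ^ k := by
    rw [h1, hps] at hv
    rw [h2] at hv
    linarith
  rw [div_eq_div_iff hc hc] at heq
  exact mul_right_cancel₀ hc heq

lemma max_of_G (hs : Dig s)
    (hg1 : ∀ n, Even n → s n = 1 → val (sh n s) < gr⁻¹ - 1)
    (hg2 : ∀ n, Odd n → s n = 0 → 0 < val (sh n s)) :
    ∀ w, Dig w → val w = val s → w = s ∨ AltLt w s := by
  intro w hw hv
  by_cases hws : w = s
  · exact Or.inl hws
  right
  have hne : ∃ j, w j ≠ s j := Function.ne_iff.mp hws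
  set k := Nat.find hne with hkdef
  have hk : w k ≠ s k := Nat.find_spec hne
  have hagree : ∀ i < k, w i = s i := fun i hi => not_ne_iff.mp (Nat.find_min hne hi)
  have htails : val (sh k w) = val (sh k s) := tails_eq hs hw k hagree hv
  refine ⟨k, hagree, ?_⟩
  rcases hw k with hwk | hwk <;> rcases hs k with hsk | hsk
  · exact absurd (hwk.trans hsk.symm) hk
  · -- w k = 0, s k = 1 : k must be odd
    have hkodd : Odd k := by
      by_contra hke
      have hke : Even k := Nat.even_iff.mpr (Nat.not_odd_iff.mp hke)
      have h1 := hg1 k hke hsk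
      have h2 : gr⁻¹ - 1 ≤ val (sh k w) :=
        val_zero_start_ge (hw.sh k) (by rw [sh_at, Nat.add_zero]; exact hwk)
      linarith
    have : ((-1:ℝ)) ^ (k+1) = 1 := (Odd.add_one hkodd).neg_one_pow
    rw [this, hwk, hsk]; norm_num
  · -- w k = 1, s k = 0 : k must be even
    have hkev : Even k := by
      by_contra hko
      have hko : Odd k := Nat.odd_iff.mpr (Nat.not_even_iff.mp hko)
      have h1 := hg2 k hko hsk
      have h2 : val (sh k w) ≤ 0 :=
        val_one_start_le (hw.sh k) (by rw [sh_at, Nat.add_zero]; exact hwk)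
      linarith
    have : ((-1:ℝ)) ^ (k+1) = -1 := (Even.add_one hkev).neg_one_pow
    rw [this, hwk, hsk]; norm_num
  · exact absurd (hwk.trans hsk.symm) hk

end S11
section S12

variable {s : ℕ → ℝ}

lemma improve (hs : Dig s) (n : ℕ) (d : ℝ) (hd : d = 0 ∨ d = 1) (y : ℝ)
    (h1 : -1 ≤ y) (h2 : y ≤ gr⁻¹) (hy : -gr⁻¹ * (d + y) = val (sh n s)) :
    ∃ w, Dig w ∧ val w = val s ∧ (∀ i < n, w i = s i) ∧ w n = d := by
  obtain ⟨r, hr, hrv⟩ := exists_rep y h1 h2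
  set w : ℕ → ℝ := fun i => if i < n then s i else if i = n then d else r (i - (n+1))
    with hwdef
  have hw : Dig w := by
    intro i
    simp only [hwdef]
    split
    · exact hs i
    split
    · exact hd
    · exact hr _
  have hwn : w n = d := by simp [hwdef]
  have hagree : ∀ i < n, w i = s i := by
    intro i hi; simp [hwdef, hi]
  have hshw : sh (n+1) w = r := by
    funext i
    show w (n+1+i) = r i
    simp only [hwdef]
    rw [if_neg (by omega), if_neg (by omega)]
    congr 1
    omega
  have htail : val (sh n w) = val (sh n s) := by
    have hrec := val_rec (hw.sh n)
    have h0 : (sh n w) 0 = d := by rw [sh_at, Nat.add_zero]; exact hwn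
    rw [h0, sh_sh, hshw, hrv] at hrec
    rw [hrec]; exact hy
  have hval : val w = val s := by
    rw [val_split hw n, val_split hs n, htail]
    congr 1
    apply Finset.sum_congr rfl
    intro i hi
    rw [hagree i (Finset.mem_range.mp hi)]
  exact ⟨w, hw, hval, hagree, hwn⟩

lemma G_of_max (hs : Dig s)
    (hmax : ∀ w, Dig w → val w = val s → w = s ∨ AltLt w s) :
    (∀ n, Even n → s n = 1 → val (sh n s) < gr⁻¹ - 1) ∧
    (∀ n, Odd n → s n = 0 → 0 < val (sh n s)) := by
  have hgu : gr * gr⁻¹ = 1 := mul_inv_cancel₀ gr_ne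
  constructor
  · intro n hne hn1
    by_contra hcon
    push_neg at hcon
    set t := val (sh n s) with htdef
    have htu : t ≤ gr⁻¹ := val_le_u (hs.sh n)
    have hy1 : -1 ≤ -gr * t := by nlinarith [gr_pos]
    have hy2 : -gr * t ≤ gr⁻¹ := by nlinarith [gr_pos, u_eq]
    have hy : -gr⁻¹ * (0 + -gr * t) = t := by
      have h : -gr⁻¹ * (0 + -gr * t) = (gr⁻¹ * gr) * t := by ring
      rw [h, inv_mul_cancel₀ gr_ne, one_mul]
    obtain ⟨w, hw, hwv, hagree, hwn⟩ :=
      improve hs n 0 (Or.inl rfl) (-gr * t) hy1 hy2 hy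
    have hwns : w n ≠ s n := by rw [hwn, hn1]; exact dig_ne01
    rcases hmax w hw hwv with heq | ⟨k, hag, hlt⟩
    · exact hwns (by rw [heq])
    · have hkn : k = n := by
        by_contra hkn
        rcases Nat.lt_or_ge k n with h | h
        · rw [hagree k h] at hlt; exact lt_irrefl _ hlt
        · have : n < k := by omega
          exact hwns (hag n this)
      subst hkn
      have hp : ((-1:ℝ)) ^ (k+1) = -1 := (Even.add_one hne).neg_one_pow
      rw [hp, hwn, hn1] at hlt
      linarith
  · intro n hno hn0
    by_contra hcon
    push_neg at hcon
    set t := val (sh n s) with htdef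
    have htl : -1 ≤ t := neg_one_le_val (hs.sh n)
    have hy1 : -1 ≤ -gr * t - 1 := by nlinarith [gr_pos]
    have hy2 : -gr * t - 1 ≤ gr⁻¹ := by nlinarith [gr_pos, u_eq]
    have hy : -gr⁻¹ * (1 + (-gr * t - 1)) = t := by
      have h : -gr⁻¹ * (1 + (-gr * t - 1)) = (gr⁻¹ * gr) * t := by ring
      rw [h, inv_mul_cancel₀ gr_ne, one_mul]
    obtain ⟨w, hw, hwv, hagree, hwn⟩ :=
      improve hs n 1 (Or.inr rfl) (-gr * t - 1) hy1 hy2 hy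
    have hwns : w n ≠ s n := by rw [hwn, hn0]; exact dig_ne10
    rcases hmax w hw hwv with heq | ⟨k, hag, hlt⟩
    · exact hwns (by rw [heq])
    · have hkn : k = n := by
        by_contra hkn
        rcases Nat.lt_or_ge k n with h | h
        · rw [hagree k h] at hlt; exact lt_irrefl _ hlt
        · have : n < k := by omega
          exact hwns (hag n this)
      subst hkn
      have hp : ((-1:ℝ)) ^ (k+1) = 1 := (Odd.add_one hno).neg_one_pow
      rw [hp, hwn, hn0] at hlt
      linarith

end S12
theorem stmt16 (φ : ℝ) (hφ : φ = (1 + Real.sqrt 5) / 2)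
    (s : ℕ → ℝ) (hs : ∀ i, s i = 0 ∨ s i = 1) :
    (∃ x ∈ Set.Ico (-1 : ℝ) 0,
        ((∀ i, s i = 0 ∨ s i = 1) ∧ x = ∑' i : ℕ, s i / (-φ) ^ (i + 1)) ∧
        ∀ w : ℕ → ℝ,
          ((∀ i, w i = 0 ∨ w i = 1) ∧ x = ∑' i : ℕ, w i / (-φ) ^ (i + 1)) →
            w = s ∨ AltLt w s) ↔
      -- (i) no prefix 1^{2k}0 nor 0^{2k-1}1, k ≥ 1
      ((¬ ∃ k : ℕ, 1 ≤ k ∧ (∀ i < 2 * k, s i = 1) ∧ s (2 * k) = 0) ∧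
        (¬ ∃ k : ℕ, 1 ≤ k ∧ (∀ i < 2 * k - 1, s i = 0) ∧ s (2 * k - 1) = 1) ∧
        -- (ii) no suffix 0^ω nor 1^ω
        (¬ ∃ N : ℕ, ∀ i ≥ N, s i = 0) ∧
        (¬ ∃ N : ℕ, ∀ i ≥ N, s i = 1) ∧
        -- (iii) no factor 10^{2k}1 nor 01^{2k}0, k ≥ 1
        (¬ ∃ i k : ℕ, 1 ≤ k ∧ s i = 1 ∧ (∀ j, 1 ≤ j → j ≤ 2 * k → s (i + j) = 0) ∧
          s (i + 2 * k + 1) = 1) ∧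
        (¬ ∃ i k : ℕ, 1 ≤ k ∧ s i = 0 ∧ (∀ j, 1 ≤ j → j ≤ 2 * k → s (i + j) = 1) ∧
          s (i + 2 * k + 1) = 0)) := by
  subst hφ
  have hval : ∀ r : ℕ → ℝ,
      (∑' i : ℕ, r i / (-((1 + Real.sqrt 5) / 2)) ^ (i + 1)) = val r := fun r => rfl
  constructor
  · rintro ⟨x, hx, ⟨-, hxv⟩, hmax⟩
    rw [hval s] at hxv
    have hmax' : ∀ w, Dig w → val w = val s → w = s ∨ AltLt w s := by
      intro w hw hv
      exact hmax w ⟨hw, by rw [hval w]; exact hxv.trans hv.symm⟩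
    obtain ⟨hg1, hg2⟩ := G_of_max hs hmax'
    have hg0 : val s < 0 := by rw [← hxv]; exact (Set.mem_Ico.mp hx).2
    exact CfromG hs hg0 hg1 hg2
  · rintro ⟨c1, c2, c3, c4, c5, c6⟩
    have star := star_of_C hs c1 c2 c5 c6
    have hinf1 : ∀ N, ∃ i, N ≤ i ∧ s i = 1 := by
      intro N
      by_contra h
      push_neg at h
      exact c3 ⟨N, fun i hi => (hs i).resolve_right (h i hi)⟩
    have hinf0 : ∀ N, ∃ i, N ≤ i ∧ s i = 0 := by
      intro N
      by_contra h
      push_neg at h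
      exact c4 ⟨N, fun i hi => (hs i).resolve_left (h i hi)⟩
    obtain ⟨hg0, hg1, hg2⟩ := GfromC hs star hinf1 hinf0
    refine ⟨val s, Set.mem_Ico.mpr ⟨neg_one_le_val hs, hg0⟩, ⟨hs, (hval s).symm⟩, ?_⟩
    rintro w ⟨hw, hwx⟩
    rw [hval w] at hwx
    exact max_of_G hs hg1 hg2 w hw hwx.symm
end

section
/- Let φ = (1+√5)/2. For every x ∈ [−1/φ, 1/φ²), the Ito–Sadahiro representation d_IS(x) is neither the maximal nor the minimal element of R_{−φ,{0,1}}(x) with respect to the alternate order; that is, the Ito–Sadahiro (−φ)-representation of x is neither the greedy nor the lazy (−φ)-representation of x. -/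
noncomputable def dig (φ y : ℝ) : ℝ := if y ≤ 3 - 2*φ then 1 else 0

lemma dig01 (φ y : ℝ) : dig φ y = 0 ∨ dig φ y = 1 := by
  unfold dig; split_ifs <;> simp

lemma phi_facts {φ : ℝ} (h1 : 1 < φ) (h2 : φ*φ = φ+1) :
    3 < 2*φ ∧ 3*φ < 5 := by
  constructor
  · nlinarith [sq_nonneg (2*φ - 3)]
  · nlinarith [sq_nonneg (3*φ - 5)]

lemma dig_invar {φ : ℝ} (h1 : 1 < φ) (h2 : φ*φ = φ+1) {y : ℝ}
    (hy : y ∈ Set.Ico (1-φ) (2-φ)) :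
    -φ*y - dig φ y ∈ Set.Ico (1-φ) (2-φ) := by
  obtain ⟨hy1, hy2⟩ := hy
  have hφ0 : (0:ℝ) ≤ φ := by linarith
  obtain ⟨hb1, hb2⟩ := phi_facts h1 h2
  unfold dig; split_ifs with h
  · constructor
    · nlinarith [mul_le_mul_of_nonneg_left h hφ0]
    · nlinarith [mul_le_mul_of_nonneg_left hy1 hφ0]
  · push_neg at h
    constructor
    · nlinarith [mul_lt_mul_of_pos_left hy2 (by linarith : (0:ℝ) < φ)]
    · nlinarith [mul_lt_mul_of_pos_left h (by linarith : (0:ℝ) < φ)]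

noncomputable def tSeq (φ a : ℝ) : ℕ → ℝ
  | 0 => a
  | n+1 => -φ * tSeq φ a n - (if tSeq φ a n ≤ 0 then 1 else 0)

lemma tSeq_mem {φ : ℝ} (h1 : 1 < φ) (h2 : φ*φ = φ+1) {a : ℝ}
    (ha : a ∈ Set.Icc (-1) (φ-1)) : ∀ n, tSeq φ a n ∈ Set.Icc (-1:ℝ) (φ-1) := by
  intro n
  induction n with
  | zero => exact ha
  | succ n ih =>
    obtain ⟨hl, hr⟩ := ih
    show -φ * tSeq φ a n - (if tSeq φ a n ≤ 0 then 1 else 0) ∈ _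
    split_ifs with h
    · constructor
      · nlinarith
      · nlinarith
    · push_neg at h
      constructor
      · nlinarith
      · nlinarith

lemma sum_repr {φ : ℝ} (h1 : 1 < φ) (u ρ : ℕ → ℝ)
    (hρ : ∀ n, |ρ n| ≤ 2) (hu : ∀ n, |u n| ≤ 1)
    (hrec : ∀ n, ρ (n+1) = -φ * ρ n - u n) :
    ρ 0 = ∑' i : ℕ, u i / (-φ)^(i+1) := by
  have hφ0 : (0:ℝ) < φ := by linarith
  have hφne : φ ≠ 0 := ne_of_gt hφ0
  have h0' : (0:ℝ) ≤ 1/φ := by positivity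
  have h1' : 1/φ < 1 := by rw [div_lt_one hφ0]; exact h1
  have hgeo : Summable (fun i : ℕ => (1/φ)^(i+1)) := by
    simpa [pow_succ, mul_comm] using
      (summable_geometric_of_lt_one h0' h1').mul_left (1/φ)
  have hS : Summable (fun i : ℕ => u i / (-φ)^(i+1)) := by
    apply Summable.of_norm_bounded hgeo
    intro i
    have hnorm : ‖(-φ)^(i+1)‖ = φ^(i+1) := by
      rw [norm_pow, Real.norm_eq_abs, abs_neg, abs_of_pos hφ0]
    rw [norm_div, hnorm]
    rw [div_pow, one_pow, div_le_div_iff₀ (by positivity) (by positivity), one_mul]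
    calc ‖u i‖ * φ^(i+1) ≤ 1 * φ^(i+1) := by
          apply mul_le_mul_of_nonneg_right _ (by positivity)
          simpa [Real.norm_eq_abs] using hu i
      _ = φ^(i+1) := one_mul _
  have hne : ∀ n : ℕ, (-φ)^n ≠ 0 := fun n => pow_ne_zero _ (by simpa using hφne)
  have hpart : ∀ n, ∑ i ∈ Finset.range n, u i / (-φ)^(i+1) = ρ 0 - ρ n / (-φ)^n := by
    intro n
    induction n with
    | zero => simp
    | succ n ih =>
      rw [Finset.sum_range_succ, ih, hrec n]
      have h1 := hne n
      have h2 := hne (n+1)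
      field_simp
      ring
  have hlim0 : Filter.Tendsto (fun n => ρ n / (-φ)^n) Filter.atTop (nhds 0) := by
    apply squeeze_zero_norm (a := fun n => 2 * (1/φ)^n) ?_ ?_
    · intro n
      have hnorm : ‖(-φ)^n‖ = φ^n := by
        rw [norm_pow, Real.norm_eq_abs, abs_neg, abs_of_pos hφ0]
      rw [norm_div, hnorm, div_le_iff₀ (by positivity)]
      calc ‖ρ n‖ ≤ 2 := by simpa [Real.norm_eq_abs] using hρ n
        _ = 2 * ((1/φ)^n * φ^n) := by
            rw [div_pow, one_pow, div_mul_cancel₀]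
            · ring
            · positivity
        _ = 2 * (1/φ)^n * φ^n := by ring
    · simpa using (tendsto_pow_atTop_nhds_zero_of_lt_one h0' h1').const_mul 2
  have hlim : Filter.Tendsto (fun n => ∑ i ∈ Finset.range n, u i / (-φ)^(i+1))
      Filter.atTop (nhds (ρ 0)) := by
    simp only [hpart]
    simpa using Filter.Tendsto.sub (tendsto_const_nhds (x := ρ 0)) hlim0
  exact (tendsto_nhds_unique hS.hasSum.tendsto_sum_nat hlim).symm

lemma orbit_invar {φ : ℝ} (h1 : 1 < φ) (h2 : φ*φ = φ+1) (ρ : ℕ → ℝ)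
    (h0 : ρ 0 ∈ Set.Ico (1-φ) (2-φ))
    (hrec : ∀ n, ρ (n+1) = -φ * ρ n - dig φ (ρ n)) :
    ∀ n, ρ n ∈ Set.Ico (1-φ) (2-φ) := by
  intro n
  induction n with
  | zero => exact h0
  | succ n ih => rw [hrec n]; exact dig_invar h1 h2 ih

lemma exists_good {φ : ℝ} (h1 : 1 < φ) (h2 : φ*φ = φ+1) (ρ : ℕ → ℝ)
    (h0 : ρ 0 ∈ Set.Ico (1-φ) (2-φ))
    (hrec : ∀ n, ρ (n+1) = -φ * ρ n - dig φ (ρ n)) :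
    ∃ k, (Even k ∧ ρ k ∈ Set.Icc (φ-2) (3-2*φ)) ∨ (Odd k ∧ ρ k ∈ Set.Ioc (3-2*φ) 0) := by
  have hI := orbit_invar h1 h2 ρ h0 hrec
  obtain ⟨hb1, hb2⟩ := phi_facts h1 h2
  have hφ0 : (0:ℝ) < φ := by linarith
  by_contra H
  push_neg at H
  have HP : ∀ k, Even k → ρ k ∉ Set.Icc (φ-2) (3-2*φ) := fun k hk => (H k).1 hk
  have HQ : ∀ k, Odd k → ρ k ∉ Set.Ioc (3-2*φ) 0 := fun k hk => (H k).2 hk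
  have step1 : ∀ n, ρ n ≤ 3-2*φ → ρ (n+1) = -φ * ρ n - 1 := by
    intro n h; rw [hrec n]; unfold dig; rw [if_pos h]
  have step0 : ∀ n, 3-2*φ < ρ n → ρ (n+1) = -φ * ρ n := by
    intro n h; rw [hrec n]; unfold dig; rw [if_neg (not_le.mpr h)]; ring
  -- bounded orbit with all digits 1 forces the fixed point φ-2
  have hones : ∀ j, (∀ n, ρ (j+n) ≤ 3-2*φ) → ρ j = φ-2 := by
    intro j hj
    have key : ∀ n, ρ (j+n) - (φ-2) = (-φ)^n * (ρ j - (φ-2)) := by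
      intro n
      induction n with
      | zero => simp
      | succ n ih =>
        have e := step1 (j+n) (hj n)
        have hswap : j + (n+1) = (j+n)+1 := by omega
        rw [hswap, e, pow_succ]
        nlinarith [ih]
    by_contra hne'
    have hd : ρ j - (φ-2) ≠ 0 := sub_ne_zero.mpr hne'
    have hdpos : 0 < |ρ j - (φ-2)| := abs_pos.mpr hd
    obtain ⟨n, hn⟩ := pow_unbounded_of_one_lt (2 / |ρ j - (φ-2)|) h1
    have hb : |ρ (j+n) - (φ-2)| ≤ 2 := by
      obtain ⟨ha, hbb⟩ := hI (j+n)
      rw [abs_le]; constructor <;> nlinarith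
    have heq : |ρ (j+n) - (φ-2)| = φ^n * |ρ j - (φ-2)| := by
      rw [key n, abs_mul, abs_pow, abs_neg, abs_of_pos hφ0]
    rw [div_lt_iff₀ hdpos] at hn
    linarith [heq ▸ hb]
  -- bounded orbit with all digits 0 forces the fixed point 0
  have hzeros : ∀ j, (∀ n, 3-2*φ < ρ (j+n)) → ρ j = 0 := by
    intro j hj
    have key : ∀ n, ρ (j+n) = (-φ)^n * ρ j := by
      intro n
      induction n with
      | zero => simp
      | succ n ih =>
        have e := step0 (j+n) (hj n)
        have hswap : j + (n+1) = (j+n)+1 := by omega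
        rw [hswap, e, pow_succ]
        nlinarith [ih]
    by_contra hne'
    have hdpos : 0 < |ρ j| := abs_pos.mpr hne'
    obtain ⟨n, hn⟩ := pow_unbounded_of_one_lt (2 / |ρ j|) h1
    have hb : |ρ (j+n)| ≤ 2 := by
      obtain ⟨ha, hbb⟩ := hI (j+n)
      rw [abs_le]; constructor <;> nlinarith
    have heq : |ρ (j+n)| = φ^n * |ρ j| := by
      rw [key n, abs_mul, abs_pow, abs_neg, abs_of_pos hφ0]
    rw [div_lt_iff₀ hdpos] at hn
    linarith [heq ▸ hb]
  -- transitions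
  have stepAF : ∀ m, Even m → ρ m ∈ Set.Ico (1-φ) (φ-2) →
      ρ (m+1) ∈ Set.Icc (φ-2) (3-2*φ) := by
    intro m hm hmem
    obtain ⟨h1m, h2m⟩ := hmem
    have hle : ρ m ≤ 3-2*φ := by linarith
    have e := step1 m hle
    have hio1 : φ-2 < ρ (m+1) := by
      rw [e]; nlinarith [mul_lt_mul_of_pos_left h2m hφ0]
    have hio2 : ρ (m+1) ≤ 0 := by
      rw [e]; nlinarith [mul_le_mul_of_nonneg_left h1m (le_of_lt hφ0)]
    have hq := HQ (m+1) (Even.add_one hm)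
    constructor
    · linarith
    · by_contra hgt
      push_neg at hgt
      exact hq ⟨hgt, hio2⟩
  have stepFA : ∀ m, Odd m → ρ m ∈ Set.Icc (φ-2) (3-2*φ) →
      ρ (m+1) ∈ Set.Ico (1-φ) (φ-2) := by
    intro m hm hmem
    obtain ⟨h1m, h2m⟩ := hmem
    have e := step1 m h2m
    have hi1 : 1-φ ≤ ρ (m+1) := by
      rw [e]; nlinarith [mul_le_mul_of_nonneg_left h2m (le_of_lt hφ0)]
    have hi2 : ρ (m+1) ≤ φ-2 := by
      rw [e]; nlinarith [mul_le_mul_of_nonneg_left h1m (le_of_lt hφ0)]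
    have hp := HP (m+1) (Odd.add_one hm)
    refine ⟨hi1, ?_⟩
    rcases eq_or_lt_of_le hi2 with he | hl
    · exact absurd ⟨le_of_eq he.symm, by linarith⟩ hp
    · exact hl
  -- A-trap for even indices
  have hA : ∀ j, Even j → ρ j ∉ Set.Ico (1-φ) (φ-2) := by
    intro j hj hmem
    have claim : ∀ n, ρ (j+2*n) ∈ Set.Ico (1-φ) (φ-2) := by
      intro n
      induction n with
      | zero => simpa using hmem
      | succ n ih =>
        have hev : Even (j+2*n) := hj.add (even_two_mul n)
        have e1 := stepAF (j+2*n) hev ih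
        have e2 := stepFA (j+2*n+1) hev.add_one e1
        have hswap : j + 2*(n+1) = j+2*n+1+1 := by omega
        rw [hswap]; exact e2
    have hall : ∀ n, ρ (j+n) ≤ 3-2*φ := by
      intro n
      rcases Nat.even_or_odd n with he | ho
      · obtain ⟨m, rfl⟩ := he
        have hswap : j + (m+m) = j + 2*m := by omega
        rw [hswap]
        linarith [(claim m).2]
      · obtain ⟨m, rfl⟩ := ho
        have hev : Even (j+2*m) := hj.add (even_two_mul m)
        have := stepAF (j+2*m) hev (claim m)
        have hswap : j + (2*m+1) = j+2*m+1 := by omega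
        rw [hswap]
        exact this.2
    have := hones j hall
    linarith [hmem.2]
  -- F0-trap for even indices
  have hF0 : ∀ j, Even j → ρ j ∉ Set.Ioc (3-2*φ) 0 := by
    intro j hj hmem
    rcases eq_or_lt_of_le hmem.2 with heq | hlt
    · have e := step0 j (by rw [heq]; linarith)
      have hz : ρ (j+1) = 0 := by rw [e, heq, mul_zero]
      exact HQ (j+1) hj.add_one ⟨by rw [hz]; linarith, le_of_eq hz⟩
    · have stepQB : ∀ m, ρ m ∈ Set.Ioo (3-2*φ) 0 → ρ (m+1) ∈ Set.Ioo 0 (2-φ) := by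
        intro m hmm
        obtain ⟨hm1, hm2⟩ := hmm
        rw [step0 m hm1]
        constructor
        · nlinarith
        · nlinarith [mul_lt_mul_of_pos_left hm1 hφ0]
      have stepBQ : ∀ m, Odd m → ρ m ∈ Set.Ioo 0 (2-φ) → ρ (m+1) ∈ Set.Ioo (3-2*φ) 0 := by
        intro m hm hmm
        obtain ⟨hm1, hm2⟩ := hmm
        have e := step0 m (by linarith)
        have hlt0 : ρ (m+1) < 0 := by rw [e]; nlinarith
        have hgt1 : 1-φ < ρ (m+1) := by
          rw [e]; nlinarith [mul_lt_mul_of_pos_left hm2 hφ0]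
        have heven : Even (m+1) := hm.add_one
        have hnA := hA (m+1) heven
        have hnP := HP (m+1) heven
        refine ⟨?_, hlt0⟩
        by_contra hle
        push_neg at hle
        rcases lt_or_ge (ρ (m+1)) (φ-2) with hc | hc
        · exact hnA ⟨le_of_lt hgt1, hc⟩
        · exact hnP ⟨hc, hle⟩
      have claim : ∀ n, ρ (j+2*n) ∈ Set.Ioo (3-2*φ) 0 := by
        intro n
        induction n with
        | zero => simpa using ⟨hmem.1, hlt⟩
        | succ n ih =>
          have hodd : Odd (j+2*n+1) := (hj.add (even_two_mul n)).add_one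
          have e1 := stepQB (j+2*n) ih
          have e2 := stepBQ (j+2*n+1) hodd e1
          have hswap : j + 2*(n+1) = j+2*n+1+1 := by omega
          rw [hswap]; exact e2
      have hall : ∀ n, 3-2*φ < ρ (j+n) := by
        intro n
        rcases Nat.even_or_odd n with he | ho
        · obtain ⟨m, rfl⟩ := he
          have hswap : j + (m+m) = j + 2*m := by omega
          rw [hswap]
          exact (claim m).1
        · obtain ⟨m, rfl⟩ := ho
          have := stepQB (j+2*m) (claim m)
          have hswap : j + (2*m+1) = j+2*m+1 := by omega
          rw [hswap]
          linarith [this.1]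
      have := hzeros j hall
      linarith
  -- finale at indices 0,1,2
  have h00 : ρ 0 ∈ Set.Ioo 0 (2-φ) := by
    obtain ⟨hi1, hi2⟩ := hI 0
    refine ⟨?_, hi2⟩
    by_contra hle
    push_neg at hle
    rcases lt_or_ge (ρ 0) (φ-2) with hc | hc
    · exact hA 0 Even.zero ⟨hi1, hc⟩
    · rcases le_or_gt (ρ 0) (3-2*φ) with hd | hd
      · exact HP 0 Even.zero ⟨hc, hd⟩
      · exact hF0 0 Even.zero ⟨hd, hle⟩
  have e1 : ρ 1 = -φ * ρ 0 := step0 0 (by linarith [h00.1])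
  have h1a : 1-φ < ρ 1 := by
    rw [e1]; nlinarith [mul_lt_mul_of_pos_left h00.2 hφ0]
  have h1b : ρ 1 < 0 := by rw [e1]; nlinarith [h00.1]
  have hle1 : ρ 1 ≤ 3-2*φ := by
    by_contra hgt
    push_neg at hgt
    exact HQ 1 odd_one ⟨hgt, le_of_lt h1b⟩
  have e2 : ρ 2 = -φ * ρ 1 - 1 := step1 1 hle1
  have heven2 : Even 2 := even_two
  rcases lt_or_ge (ρ 1) (φ-2) with hc | hc
  · -- ρ 1 in A (odd): ρ 2 ∈ Ioc (φ-2) 0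
    have hm1 : φ-2 < ρ 2 := by
      rw [e2]; nlinarith [mul_lt_mul_of_pos_left hc hφ0]
    have hm2 : ρ 2 ≤ 0 := by
      rw [e2]; nlinarith [mul_lt_mul_of_pos_left h1a hφ0]
    rcases le_or_gt (ρ 2) (3-2*φ) with hd | hd
    · exact HP 2 heven2 ⟨le_of_lt hm1, hd⟩
    · exact hF0 2 heven2 ⟨hd, hm2⟩
  · -- ρ 1 in F1 (odd): ρ 2 ∈ Icc (1-φ) (φ-2)
    have hm1 : 1-φ ≤ ρ 2 := by
      rw [e2]; nlinarith [mul_le_mul_of_nonneg_left hle1 (le_of_lt hφ0)]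
    have hm2 : ρ 2 ≤ φ-2 := by
      rw [e2]; nlinarith [mul_le_mul_of_nonneg_left hc (le_of_lt hφ0)]
    rcases eq_or_lt_of_le hm2 with he | hl
    · exact HP 2 heven2 ⟨le_of_eq he.symm, by linarith⟩
    · exact hA 2 heven2 ⟨hm1, hl⟩

lemma construct {φ : ℝ} (h1 : 1 < φ) (h2 : φ*φ = φ+1) (r : ℕ → ℝ)
    (h0 : r 0 ∈ Set.Ico (1-φ) (2-φ))
    (hrec : ∀ n, r (n+1) = -φ * r n - dig φ (r n)) (k : ℕ)
    (hk : r k ∈ Set.Icc (φ-2) (3-2*φ) ∨ r k ∈ Set.Ioc (3-2*φ) 0) :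
    ∃ w : ℕ → ℝ, (∀ i, w i = 0 ∨ w i = 1) ∧ r 0 = ∑' i : ℕ, w i / (-φ)^(i+1) ∧
      (∀ i, i < k → w i = dig φ (r i)) ∧ w k = 1 - dig φ (r k) := by
  obtain ⟨hb1, hb2⟩ := phi_facts h1 h2
  have hφ0 : (0:ℝ) < φ := by linarith
  have hImem := orbit_invar h1 h2 r h0 hrec
  set a : ℝ := -φ * r k - (1 - dig φ (r k)) with ha
  have haI : a ∈ Set.Icc (-1:ℝ) (φ-1) := by
    rcases hk with hk | hk
    · have hd : dig φ (r k) = 1 := by unfold dig; rw [if_pos hk.2]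
      rw [ha, hd]
      constructor
      · nlinarith [mul_le_mul_of_nonneg_left hk.2 (le_of_lt hφ0)]
      · nlinarith [mul_le_mul_of_nonneg_left hk.1 (le_of_lt hφ0)]
    · have hd : dig φ (r k) = 0 := by unfold dig; rw [if_neg (not_le.mpr hk.1)]
      rw [ha, hd]
      constructor
      · nlinarith [mul_le_mul_of_nonneg_left hk.2 (le_of_lt hφ0)]
      · nlinarith [mul_lt_mul_of_pos_left hk.1 hφ0]
  set e : ℕ → ℝ := fun j => if tSeq φ a j ≤ 0 then 1 else 0 with he
  set w : ℕ → ℝ := fun n => if n < k then dig φ (r n) else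
    if n = k then 1 - dig φ (r k) else e (n-k-1) with hw
  set ρ : ℕ → ℝ := fun n => if n ≤ k then r n else tSeq φ a (n-k-1) with hρ
  have htmem := tSeq_mem h1 h2 haI
  have hρbound : ∀ n, |ρ n| ≤ 2 := by
    intro n
    simp only [hρ]
    split_ifs with h
    · obtain ⟨hl, hr⟩ := hImem n
      rw [abs_le]; constructor <;> nlinarith
    · obtain ⟨hl, hr⟩ := htmem (n-k-1)
      rw [abs_le]; constructor <;> nlinarith
  have hwbound : ∀ n, |w n| ≤ 1 := by
    intro n
    simp only [hw, he]
    split_ifs with hc1 hc2 hc3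
    · rcases dig01 φ (r n) with h | h <;> rw [h] <;> norm_num
    · rcases dig01 φ (r k) with h | h <;> rw [h] <;> norm_num
    · norm_num
    · norm_num
  have hrecw : ∀ n, ρ (n+1) = -φ * ρ n - w n := by
    intro n
    rcases lt_trichotomy n k with hlt | heq | hgt
    · have hn1 : n+1 ≤ k := hlt
      simp only [hρ, hw, if_pos hn1, if_pos (le_of_lt hlt), if_pos hlt]
      exact hrec n
    · subst heq
      have hn1 : ¬(n+1 ≤ n) := by omega
      have hi : n+1-n-1 = 0 := by omega
      simp only [hρ, hw, if_neg hn1, if_pos (le_refl n), if_neg (lt_irrefl n), if_pos rfl, hi]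
      exact ha
    · obtain ⟨m, rfl⟩ : ∃ m, n = k+1+m := ⟨n-k-1, by omega⟩
      have c1 : ¬(k+1+m ≤ k) := by omega
      have c2 : ¬(k+1+m+1 ≤ k) := by omega
      have c3 : ¬(k+1+m < k) := by omega
      have c4 : ¬(k+1+m = k) := by omega
      have i1 : k+1+m-k-1 = m := by omega
      have i2 : k+1+m+1-k-1 = m+1 := by omega
      simp only [hρ, hw, if_neg c1, if_neg c2, if_neg c3, if_neg c4, i1, i2, he]
      rfl
  have hsum := sum_repr h1 w ρ hρbound hwbound hrecw
  have hρ0 : ρ 0 = r 0 := by simp [hρ]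
  refine ⟨w, ?_, by rw [← hρ0]; exact hsum, ?_, ?_⟩
  · intro i
    simp only [hw, he]
    split_ifs with hc1 hc2 hc3
    · exact dig01 φ (r i)
    · rcases dig01 φ (r k) with h | h <;> rw [h] <;> norm_num
    · norm_num
    · norm_num
  · intro i hi
    simp only [hw]; rw [if_pos hi]
  · simp only [hw]; norm_num

theorem stmt17 (φ : ℝ) (hφ : φ = (1 + Real.sqrt 5) / 2)
    (TIS : ℝ → ℝ) (hTIS : ∀ x, TIS x = -φ * x - ((⌊-φ * x + 1 / φ⌋ : ℤ) : ℝ))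
    (x : ℝ) (hx : x ∈ Set.Ico (-(1 / φ)) (1 / φ ^ 2))
    (dIS : ℕ → ℝ) (hdIS : ∀ k, dIS k = ((⌊-φ * TIS^[k] x + 1 / φ⌋ : ℤ) : ℝ)) :
    -- d_IS(x) is not the greatest element of R_{−φ,{0,1}}(x) in the alternate order
    (¬ ∀ w : ℕ → ℝ,
        ((∀ i, w i = 0 ∨ w i = 1) ∧ x = ∑' i : ℕ, w i / (-φ) ^ (i + 1)) →
          w = dIS ∨ AltLt w dIS) ∧
    -- d_IS(x) is not the least element of R_{−φ,{0,1}}(x) in the alternate order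
    (¬ ∀ w : ℕ → ℝ,
        ((∀ i, w i = 0 ∨ w i = 1) ∧ x = ∑' i : ℕ, w i / (-φ) ^ (i + 1)) →
          w = dIS ∨ AltLt dIS w) := by
  have hs : Real.sqrt 5 * Real.sqrt 5 = 5 := Real.mul_self_sqrt (by norm_num)
  have hsnn := Real.sqrt_nonneg 5
  have h1 : 1 < φ := by rw [hφ]; nlinarith [hs, hsnn]
  have h2 : φ*φ = φ+1 := by rw [hφ]; linear_combination hs/4
  have hφ0 : (0:ℝ) < φ := by linarith
  have hφne : φ ≠ 0 := ne_of_gt hφ0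
  obtain ⟨hb1, hb2⟩ := phi_facts h1 h2
  have h1φ : 1/φ = φ-1 := by
    rw [div_eq_iff hφne]; linear_combination -h2
  have h2φ : 1/φ^2 = 2-φ := by
    have hp : φ^2 = φ+1 := by rw [pow_two]; exact h2
    rw [hp, div_eq_iff (by linarith : φ+1 ≠ 0)]; linear_combination h2
  have hxI : x ∈ Set.Ico (1-φ) (2-φ) := by
    obtain ⟨ha, hb⟩ := hx
    rw [h1φ] at ha
    rw [h2φ] at hb
    exact ⟨by linarith, hb⟩
  have hfloor : ∀ y ∈ Set.Ico (1-φ) (2-φ),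
      ((⌊-φ * y + 1 / φ⌋ : ℤ) : ℝ) = dig φ y := by
    intro y hy
    obtain ⟨hy1, hy2⟩ := hy
    rw [h1φ]
    unfold dig
    split_ifs with h
    · have : ⌊-φ * y + (φ-1)⌋ = 1 := by
        rw [Int.floor_eq_iff]
        constructor
        · push_cast
          nlinarith [mul_le_mul_of_nonneg_left h (le_of_lt hφ0)]
        · push_cast
          nlinarith [mul_le_mul_of_nonneg_left hy1 (le_of_lt hφ0)]
      rw [this]; norm_num
    · push_neg at h
      have : ⌊-φ * y + (φ-1)⌋ = 0 := by
        rw [Int.floor_eq_iff]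
        constructor
        · push_cast
          nlinarith [mul_lt_mul_of_pos_left hy2 hφ0]
        · push_cast
          nlinarith [mul_lt_mul_of_pos_left h hφ0]
      rw [this]; norm_num
  set r : ℕ → ℝ := fun n => TIS^[n] x with hr
  have hr0 : r 0 = x := rfl
  have hstep : ∀ y ∈ Set.Ico (1-φ) (2-φ), TIS y = -φ*y - dig φ y := by
    intro y hy
    rw [hTIS y, hfloor y hy]
  have hiter : ∀ n, r (n+1) = TIS (r n) := by
    intro n
    simp only [hr]
    exact Function.iterate_succ_apply' TIS n x
  have hrmem : ∀ n, r n ∈ Set.Ico (1-φ) (2-φ) := by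
    intro n
    induction n with
    | zero => rw [hr0]; exact hxI
    | succ n ih =>
      rw [hiter n, hstep _ ih]
      exact dig_invar h1 h2 ih
  have hrrec : ∀ n, r (n+1) = -φ * r n - dig φ (r n) := by
    intro n
    rw [hiter n, hstep _ (hrmem n)]
  have hdig : ∀ n, dIS n = dig φ (r n) := by
    intro n
    rw [hdIS n]
    exact hfloor _ (hrmem n)
  -- good indices
  obtain ⟨k₁, hk₁⟩ := exists_good h1 h2 r (hrmem 0) hrrec
  obtain ⟨k₂', hk₂'⟩ := exists_good h1 h2 (fun n => r (n+1)) (hrmem 1) (fun n => hrrec (n+1))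
  obtain ⟨w₁, hw₁01, hw₁sum, hw₁pre, hw₁k⟩ :=
    construct h1 h2 r (hrmem 0) hrrec k₁ (hk₁.elim (fun h => Or.inl h.2) (fun h => Or.inr h.2))
  obtain ⟨w₂, hw₂01, hw₂sum, hw₂pre, hw₂k⟩ :=
    construct h1 h2 r (hrmem 0) hrrec (k₂'+1)
      (hk₂'.elim (fun h => Or.inl h.2) (fun h => Or.inr h.2))
  constructor
  · intro Hall
    rcases Hall w₁ ⟨hw₁01, by rw [← hr0]; exact hw₁sum⟩ with heq | hlt
    · have := congrFun heq k₁
      rw [hw₁k, hdig k₁] at this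
      rcases dig01 φ (r k₁) with h | h <;> rw [h] at this <;> norm_num at this
    · obtain ⟨m, hag, hlt⟩ := hlt
      rcases lt_trichotomy m k₁ with hm | hm | hm
      · rw [hw₁pre m hm, hdig m] at hlt
        exact lt_irrefl _ hlt
      · subst hm
        rcases hk₁ with ⟨hev, hmem⟩ | ⟨hod, hmem⟩
        · have hd : dig φ (r m) = 1 := by unfold dig; rw [if_pos hmem.2]
          have hpow : (-1:ℝ)^(m+1) = -1 := Odd.neg_one_pow hev.add_one
          rw [hw₁k, hdig m, hd, hpow] at hlt
          norm_num at hlt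
        · have hd : dig φ (r m) = 0 := by unfold dig; rw [if_neg (not_le.mpr hmem.1)]
          have hpow : (-1:ℝ)^(m+1) = 1 := Even.neg_one_pow hod.add_one
          rw [hw₁k, hdig m, hd, hpow] at hlt
          norm_num at hlt
      · have := hag k₁ hm
        rw [hw₁k, hdig k₁] at this
        rcases dig01 φ (r k₁) with h | h <;> rw [h] at this <;> norm_num at this
  · intro Hall
    rcases Hall w₂ ⟨hw₂01, by rw [← hr0]; exact hw₂sum⟩ with heq | hlt
    · have := congrFun heq (k₂'+1)
      rw [hw₂k, hdig (k₂'+1)] at this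
      rcases dig01 φ (r (k₂'+1)) with h | h <;> rw [h] at this <;> norm_num at this
    · obtain ⟨m, hag, hlt⟩ := hlt
      rcases lt_trichotomy m (k₂'+1) with hm | hm | hm
      · rw [hw₂pre m hm, hdig m] at hlt
        exact lt_irrefl _ hlt
      · subst hm
        rcases hk₂' with ⟨hev, hmem⟩ | ⟨hod, hmem⟩
        · have hd : dig φ (r (k₂'+1)) = 1 := by unfold dig; rw [if_pos hmem.2]
          have hpow : (-1:ℝ)^(k₂'+1+1) = 1 := Even.neg_one_pow (hev.add_one.add_one)
          rw [hw₂k, hdig (k₂'+1), hd, hpow] at hlt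
          norm_num at hlt
        · have hd : dig φ (r (k₂'+1)) = 0 := by unfold dig; rw [if_neg (not_le.mpr hmem.1)]
          have hpow : (-1:ℝ)^(k₂'+1+1) = -1 := Odd.neg_one_pow (hod.add_one.add_one)
          rw [hw₂k, hdig (k₂'+1), hd, hpow] at hlt
          norm_num at hlt
      · have := hag (k₂'+1) hm
        rw [hw₂k, hdig (k₂'+1)] at this
        rcases dig01 φ (r (k₂'+1)) with h | h <;> rw [h] at this <;> norm_num at this
end
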